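/- arXiv:1407.5043 — 7 statements merged into one kernel-verified Lean document; each statement's English description precedes it below -/
import Mathlib

section
/- For α ∈ (0,1] and integer m ≥ 2, define c_{k,t} = ∏_{h=k}^{t} (1 - α/(m+h+1)) for 1 ≤ k ≤ t and c_{t+1,t} = 1. Then sup_{t ≥ k} | c_{k,t} / (k/t)^α − 1 | → 0 as k → ∞. -/
open Filter Finset Real

private lemma telescope (f : ℕ → ℝ) (k t : ℕ) (h : k ≤ t) :
    ∑ i ∈ Icc k t, (f (i+1) - f i) = f (t+1) - f k := by
  induction t, h using Nat.le_induction with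
  | base => simp
  | succ n hn ih =>
      rw [Finset.sum_Icc_succ_top (by omega), ih]; ring

private lemma log_sub_le {a : ℝ} (ha : 0 < a) :
    Real.log (a+1) - Real.log a ≤ 1/a := by
  have h := Real.log_le_sub_one_of_pos (show (0:ℝ) < (a+1)/a by positivity)
  rw [Real.log_div (by positivity) (ne_of_gt ha)] at h
  have h2 : (a+1)/a - 1 = 1/a := by field_simp; ring
  linarith

private lemma le_log_sub {a : ℝ} (ha : 0 < a) :
    1/(a+1) ≤ Real.log (a+1) - Real.log a := by
  have h := Real.log_le_sub_one_of_pos (show (0:ℝ) < a/(a+1) by positivity)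
  rw [Real.log_div (ne_of_gt ha) (by positivity)] at h
  have h2 : a/(a+1) - 1 = -(1/(a+1)) := by field_simp; ring
  linarith

private lemma sum_upper (m k t : ℕ) (hm : 2 ≤ m) (hkt : k ≤ t) :
    ∑ h ∈ Icc k t, (1:ℝ)/((m:ℝ)+h+1) ≤ Real.log ((m:ℝ)+t+1) - Real.log ((m:ℝ)+k) := by
  have hm' : (2:ℝ) ≤ (m:ℝ) := by exact_mod_cast hm
  have ht := telescope (fun h => Real.log ((m:ℝ)+h)) k t hkt
  push_cast at ht
  simp only [← add_assoc] at ht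
  rw [← ht]
  apply Finset.sum_le_sum
  intro h hh
  have h0 : (0:ℝ) ≤ (h:ℝ) := Nat.cast_nonneg _
  exact le_log_sub (show (0:ℝ) < (m:ℝ)+h by linarith)

private lemma sum_lower (m k t : ℕ) (hm : 2 ≤ m) (hkt : k ≤ t) :
    Real.log ((m:ℝ)+t+1+1) - Real.log ((m:ℝ)+k+1) ≤ ∑ h ∈ Icc k t, (1:ℝ)/((m:ℝ)+h+1) := by
  have hm' : (2:ℝ) ≤ (m:ℝ) := by exact_mod_cast hm
  have ht := telescope (fun h => Real.log ((m:ℝ)+h+1)) k t hkt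
  push_cast at ht
  simp only [← add_assoc] at ht
  rw [← ht]
  apply Finset.sum_le_sum
  intro h hh
  have h0 : (0:ℝ) ≤ (h:ℝ) := Nat.cast_nonneg _
  exact log_sub_le (show (0:ℝ) < (m:ℝ)+h+1 by linarith)

private lemma sum_sq (m k t : ℕ) (hm : 2 ≤ m) (hkt : k ≤ t) :
    ∑ h ∈ Icc k t, (1:ℝ)/((m:ℝ)+h+1)^2 ≤ 1/((m:ℝ)+k) := by
  have hm' : (2:ℝ) ≤ (m:ℝ) := by exact_mod_cast hm
  have ht := telescope (fun h => -(1/((m:ℝ)+h))) k t hkt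
  push_cast at ht
  simp only [← add_assoc] at ht
  have step : ∑ h ∈ Icc k t, (1:ℝ)/((m:ℝ)+h+1)^2
      ≤ ∑ i ∈ Icc k t, (-(1/((m:ℝ)+i+1)) - -(1/((m:ℝ)+i))) := by
    apply Finset.sum_le_sum
    intro h hh
    have h0 : (0:ℝ) ≤ (h:ℝ) := Nat.cast_nonneg _
    have ha : (0:ℝ) < (m:ℝ)+h := by linarith
    have hb : (0:ℝ) < (m:ℝ)+h+1 := by linarith
    have key : (1:ℝ)/((m:ℝ)+h+1)^2 ≤ 1/(((m:ℝ)+h)*((m:ℝ)+h+1)) := by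
      apply div_le_div_of_nonneg_left (by norm_num) (by positivity)
      nlinarith
    have key2 : (1:ℝ)/(((m:ℝ)+h)*((m:ℝ)+h+1)) = -(1/((m:ℝ)+h+1)) - -(1/((m:ℝ)+h)) := by
      field_simp
      ring
    linarith
  rw [ht] at step
  have ht0 : (0:ℝ) ≤ (t:ℝ) := Nat.cast_nonneg _
  have h2 : (0:ℝ) < 1/((m:ℝ)+t+1) := by
    apply div_pos one_pos; linarith
  linarith

private lemma log_one_sub_bounds {x : ℝ} (h0 : 0 ≤ x) (h2 : x ≤ 1/2) :
    |Real.log (1 - x) + x| ≤ 2 * x^2 := by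
  have hx : (0:ℝ) < 1 - x := by linarith
  have hub : Real.log (1 - x) ≤ -x := by
    have := Real.log_le_sub_one_of_pos hx
    linarith
  have hinv : (1-x)⁻¹ * (1-x) = 1 := inv_mul_cancel₀ (ne_of_gt hx)
  have hinvpos : (0:ℝ) < (1-x)⁻¹ := inv_pos.2 hx
  have h3 : Real.log ((1-x)⁻¹) ≤ (1-x)⁻¹ - 1 := Real.log_le_sub_one_of_pos hinvpos
  rw [Real.log_inv] at h3
  have h4 : (1-x)⁻¹ ≤ 1 + x + 2*x^2 := by nlinarith
  have hlb : -x - 2*x^2 ≤ Real.log (1 - x) := by linarith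
  rw [abs_le]; constructor <;> linarith


private lemma key (α : ℝ) (hα0 : 0 < α) (hα1 : α ≤ 1) (m : ℕ) (hm : 2 ≤ m)
    (k t : ℕ) (hk : 1 ≤ k) (hkt : k ≤ t) :
    |(∏ h ∈ Icc k t, (1 - α / ((m:ℝ) + h + 1))) / ((k:ℝ)/(t:ℝ))^α - 1|
      ≤ Real.exp (((m:ℝ)+3)/k) - 1 := by
  have hm' : (2:ℝ) ≤ (m:ℝ) := by exact_mod_cast hm
  have hk' : (1:ℝ) ≤ (k:ℝ) := by exact_mod_cast hk
  have ht' : (k:ℝ) ≤ (t:ℝ) := by exact_mod_cast hkt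
  have hkpos : (0:ℝ) < k := by linarith
  have htpos : (0:ℝ) < t := by linarith
  -- factor positivity
  have hfac : ∀ h : ℕ, 0 < 1 - α / ((m:ℝ) + h + 1) := by
    intro h
    have h0 : (0:ℝ) ≤ (h:ℝ) := Nat.cast_nonneg _
    have hd : (3:ℝ) ≤ (m:ℝ)+h+1 := by linarith
    have : α / ((m:ℝ)+h+1) ≤ α/3 := by
      apply div_le_div_of_nonneg_left hα0.le (by norm_num) hd
    linarith
  set P := ∏ h ∈ Icc k t, (1 - α / ((m:ℝ) + h + 1)) with hPdef
  have hP : 0 < P := Finset.prod_pos (fun h _ => hfac h)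
  have hbase : (0:ℝ) < (k:ℝ)/(t:ℝ) := div_pos hkpos htpos
  -- express ratio as exp
  have hrpow : ((k:ℝ)/(t:ℝ))^α = Real.exp (α * Real.log ((k:ℝ)/(t:ℝ))) := by
    rw [Real.rpow_def_of_pos hbase, mul_comm]
  have hratio : P / ((k:ℝ)/(t:ℝ))^α
      = Real.exp (Real.log P - α * Real.log ((k:ℝ)/(t:ℝ))) := by
    rw [hrpow, Real.exp_sub, Real.exp_log hP]
  set u := Real.log P - α * Real.log ((k:ℝ)/(t:ℝ)) with hudef
  -- bound |u|
  have hlogP : Real.log P = ∑ h ∈ Icc k t, Real.log (1 - α / ((m:ℝ) + h + 1)) :=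
    Real.log_prod (fun h _ => (hfac h).ne')
  set S := ∑ h ∈ Icc k t, (1:ℝ)/((m:ℝ)+h+1) with hSdef
  have hsplit : Real.log P
      = (∑ h ∈ Icc k t, (Real.log (1 - α / ((m:ℝ) + h + 1)) + α / ((m:ℝ)+h+1))) - α * S := by
    rw [hlogP, hSdef, Finset.mul_sum, ← Finset.sum_sub_distrib]
    congr 1; ext h; rw [mul_one_div]; ring
  set E := ∑ h ∈ Icc k t, (Real.log (1 - α / ((m:ℝ) + h + 1)) + α / ((m:ℝ)+h+1)) with hEdef
  have hE : |E| ≤ 2 / ((m:ℝ)+k) := by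
    calc |E| ≤ ∑ h ∈ Icc k t, |Real.log (1 - α / ((m:ℝ) + h + 1)) + α / ((m:ℝ)+h+1)| :=
          Finset.abs_sum_le_sum_abs _ _
      _ ≤ ∑ h ∈ Icc k t, 2 * (1/((m:ℝ)+h+1)^2) := by
          apply Finset.sum_le_sum
          intro h hh
          have h0 : (0:ℝ) ≤ (h:ℝ) := Nat.cast_nonneg _
          have hd : (3:ℝ) ≤ (m:ℝ)+h+1 := by linarith
          have hx0 : 0 ≤ α / ((m:ℝ)+h+1) := by positivity
          have hx2 : α / ((m:ℝ)+h+1) ≤ 1/2 := by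
            rw [div_le_iff₀ (by linarith)]; linarith
          refine le_trans (log_one_sub_bounds hx0 hx2) ?_
          have : (α / ((m:ℝ)+h+1))^2 ≤ 1/((m:ℝ)+h+1)^2 := by
            have hα2 : α^2 ≤ 1 := by nlinarith
            rw [div_pow, div_le_div_iff₀ (by positivity) (by positivity)]
            nlinarith [sq_nonneg ((m:ℝ)+h+1)]
          linarith
      _ = 2 * ∑ h ∈ Icc k t, (1:ℝ)/((m:ℝ)+h+1)^2 := by rw [Finset.mul_sum]
      _ ≤ 2 * (1/((m:ℝ)+k)) := by
          have := sum_sq m k t hm hkt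
          linarith
      _ = 2 / ((m:ℝ)+k) := by ring
  -- bound |S - (log t - log k)|
  have hlogdiv : Real.log ((k:ℝ)/(t:ℝ)) = Real.log k - Real.log t :=
    Real.log_div hkpos.ne' htpos.ne'
  have hSbound : |S - (Real.log t - Real.log k)| ≤ ((m:ℝ)+1)/k := by
    have hup : S - (Real.log t - Real.log k) ≤ ((m:ℝ)+1)/k := by
      have h1 := sum_upper m k t hm hkt
      -- log(m+t+1) - log t ≤ (m+1)/t ≤ (m+1)/k
      have h2 : Real.log ((m:ℝ)+t+1) - Real.log t ≤ ((m:ℝ)+1)/t := by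
        have := Real.log_le_sub_one_of_pos (show (0:ℝ) < ((m:ℝ)+t+1)/t by positivity)
        rw [Real.log_div (by positivity) htpos.ne'] at this
        have heq : ((m:ℝ)+t+1)/t - 1 = ((m:ℝ)+1)/t := by field_simp; ring
        linarith
      have h3 : ((m:ℝ)+1)/t ≤ ((m:ℝ)+1)/k := by
        apply div_le_div_of_nonneg_left (by linarith) hkpos ht'
      have h4 : Real.log k ≤ Real.log ((m:ℝ)+k) := by
        apply Real.log_le_log hkpos; linarith
      linarith
    have hlo : -(((m:ℝ)+1)/k) ≤ S - (Real.log t - Real.log k) := by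
      have h1 := sum_lower m k t hm hkt
      have h2 : Real.log t ≤ Real.log ((m:ℝ)+t+1+1) := by
        apply Real.log_le_log htpos; linarith
      have h3 : Real.log ((m:ℝ)+k+1) - Real.log k ≤ ((m:ℝ)+1)/k := by
        have := Real.log_le_sub_one_of_pos (show (0:ℝ) < ((m:ℝ)+k+1)/k by positivity)
        rw [Real.log_div (by positivity) hkpos.ne'] at this
        have heq : ((m:ℝ)+k+1)/k - 1 = ((m:ℝ)+1)/k := by field_simp; ring
        linarith
      linarith
    rw [abs_le]; exact ⟨hlo, hup⟩
  have hu : |u| ≤ ((m:ℝ)+3)/k := by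
    have huexp : u = E - α * (S - (Real.log t - Real.log k)) := by
      rw [hudef, hsplit, hlogdiv]; ring
    have h5 : |α * (S - (Real.log t - Real.log k))| ≤ ((m:ℝ)+1)/k := by
      rw [abs_mul, abs_of_pos hα0]
      calc α * |S - (Real.log t - Real.log k)| ≤ 1 * (((m:ℝ)+1)/k) := by
            apply mul_le_mul hα1 hSbound (abs_nonneg _) (by norm_num)
        _ = ((m:ℝ)+1)/k := one_mul _
    have h6 : 2/((m:ℝ)+k) ≤ 2/k := by
      apply div_le_div_of_nonneg_left (by norm_num) hkpos (by linarith)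
    have h7 : |u| ≤ |E| + |α * (S - (Real.log t - Real.log k))| := by
      rw [huexp]; exact abs_sub _ _
    have heq : ((m:ℝ)+3)/k = 2/k + ((m:ℝ)+1)/k := by field_simp; ring
    linarith
  -- conclude
  rw [hratio]
  have hexp1 : |Real.exp u - 1| ≤ Real.exp |u| - 1 := by
    rcases le_or_gt 0 u with h | h
    · rw [abs_of_nonneg h, abs_of_nonneg (by linarith [Real.one_le_exp h] : (0:ℝ) ≤ Real.exp u - 1)]
    · have h1 : Real.exp u < 1 := Real.exp_lt_one_iff.2 h
      rw [abs_of_neg h, abs_of_nonpos (by linarith : Real.exp u - 1 ≤ 0)]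
      have h2 := Real.add_one_le_exp u
      have h3 := Real.add_one_le_exp (-u)
      linarith
  have hmono : Real.exp |u| ≤ Real.exp (((m:ℝ)+3)/k) := Real.exp_le_exp.2 hu
  linarith

/-- For `α ∈ (0,1]`, `m ≥ 2`, and `c_{k,t} = ∏_{h=k}^t (1 - α/(m+h+1))` for `k ≤ t`
(and `c_{t+1,t} = 1`), one has `sup_{t ≥ k} |c_{k,t}/(k/t)^α - 1| → 0` as `k → ∞`. -/
theorem stmt_2 (α : ℝ) (hα0 : 0 < α) (hα1 : α ≤ 1) (m : ℕ) (hm : 2 ≤ m) :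
    Tendsto (fun k : ℕ =>
        ⨆ t : {t : ℕ // k ≤ t},
          |(∏ h ∈ Finset.Icc k (t : ℕ), (1 - α / ((m : ℝ) + h + 1))) /
              ((k : ℝ) / ((t : ℕ) : ℝ)) ^ α - 1|)
      atTop (nhds 0) := by
  have hg : Tendsto (fun k : ℕ => Real.exp (((m:ℝ)+3)/k) - 1) atTop (nhds 0) := by
    have h1 : Tendsto (fun k : ℕ => ((m:ℝ)+3)/k) atTop (nhds 0) :=
      tendsto_const_div_atTop_nhds_zero_nat _
    have h2 := (Real.continuous_exp.tendsto 0).comp h1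
    have h3 := h2.sub (tendsto_const_nhds (x := (1:ℝ)))
    simpa using h3
  apply squeeze_zero' ?_ ?_ hg
  · filter_upwards [eventually_ge_atTop 1] with k hk
    haveI : Nonempty {t : ℕ // k ≤ t} := ⟨⟨k, le_rfl⟩⟩
    have hbdd : BddAbove (Set.range fun t : {t : ℕ // k ≤ t} =>
        |(∏ h ∈ Finset.Icc k (t : ℕ), (1 - α / ((m : ℝ) + h + 1))) /
            ((k : ℝ) / ((t : ℕ) : ℝ)) ^ α - 1|) := by
      refine ⟨Real.exp (((m:ℝ)+3)/k) - 1, ?_⟩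
      rintro x ⟨t, rfl⟩
      exact key α hα0 hα1 m hm k t hk t.2
    exact le_trans (abs_nonneg _) (le_ciSup hbdd ⟨k, le_rfl⟩)
  · filter_upwards [eventually_ge_atTop 1] with k hk
    haveI : Nonempty {t : ℕ // k ≤ t} := ⟨⟨k, le_rfl⟩⟩
    exact ciSup_le fun t => key α hα0 hα1 m hm k t hk t.2
end

section
/- Let (G_k) be an increasing filtration and (Y_k) a G-adapted sequence of square-integrable real random variables such that E[Y_k | G_{k-1}] → Y almost surely for some real random variable Y. Let (a_k), (b_k) be strictly positive reals with b_k ↑ ∞ and ∑_k E[Y_k²]/(a_k² b_k²) < ∞. If (1/b_t) ∑_{k=1}^{t} 1/a_k → γ for some constant γ, then (1/b_t) ∑_{k=1}^{t} Y_k/a_k → γ·Y almost surely. -/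
open Filter Finset MeasureTheory

private lemma toeplitz_aux {w B : ℕ → ℝ} (hw : ∀ k, 0 ≤ w k) (hB : Tendsto B atTop atTop)
    {γ : ℝ} (hwB : Tendsto (fun t => (∑ k ∈ Icc 1 t, w k) / B t) atTop (nhds γ))
    {x : ℕ → ℝ} {L : ℝ} (hx : Tendsto x atTop (nhds L)) :
    Tendsto (fun t => (∑ k ∈ Icc 1 t, w k * x k) / B t) atTop (nhds (γ * L)) := by
  have hγ : 0 ≤ γ := by
    refine ge_of_tendsto hwB ?_
    filter_upwards [hB.eventually_gt_atTop 0] with t ht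
    exact div_nonneg (Finset.sum_nonneg fun k _ => hw k) ht.le
  have key : Tendsto (fun t => (∑ k ∈ Icc 1 t, w k * (x k - L)) / B t) atTop (nhds 0) := by
    rw [NormedAddCommGroup.tendsto_nhds_zero]
    intro ε hε
    have hγ1 : (0:ℝ) < γ + 1 := by linarith
    set ε' : ℝ := ε / (2 * (γ + 1)) with hε'def
    have hε' : 0 < ε' := by positivity
    obtain ⟨N, hN⟩ := Metric.tendsto_atTop.mp hx ε' hε'
    set C : ℝ := |∑ k ∈ Icc 1 N, w k * (x k - L)| with hCdef
    have h2 : ∀ᶠ t in atTop, C / B t < ε / 2 := by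
      have : Tendsto (fun t => C / B t) atTop (nhds 0) := Tendsto.div_atTop tendsto_const_nhds hB
      exact this.eventually_lt_const (by positivity)
    have h3 : ∀ᶠ t in atTop, (∑ k ∈ Icc 1 t, w k) / B t < γ + 1 :=
      hwB.eventually_lt_const (by linarith)
    filter_upwards [hB.eventually_gt_atTop 0, h2, h3, eventually_ge_atTop N] with t hB0 hC hS hNt
    have hIcc : ∀ n : ℕ, Icc 1 n = Ioc 0 n := fun n => rfl
    have split : ∑ k ∈ Icc 1 t, w k * (x k - L)
        = (∑ k ∈ Icc 1 N, w k * (x k - L)) + ∑ k ∈ Ioc N t, w k * (x k - L) := by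
      rw [hIcc, hIcc, Finset.sum_Ioc_consecutive _ (Nat.zero_le N) hNt]
    have bnd : |∑ k ∈ Icc 1 t, w k * (x k - L)| ≤ C + ε' * ∑ k ∈ Icc 1 t, w k := by
      rw [split]
      refine (abs_add_le _ _).trans ?_
      gcongr
      refine (Finset.abs_sum_le_sum_abs _ _).trans ?_
      have step1 : ∑ k ∈ Ioc N t, |w k * (x k - L)| ≤ ∑ k ∈ Ioc N t, ε' * w k := by
        refine Finset.sum_le_sum fun k hk => ?_
        rw [abs_mul, abs_of_nonneg (hw k), mul_comm]
        have hkN : N ≤ k := (Finset.mem_Ioc.mp hk).1.le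
        have := hN k hkN
        rw [Real.dist_eq] at this
        exact mul_le_mul_of_nonneg_right this.le (hw k)
      refine step1.trans ?_
      rw [← Finset.mul_sum]
      refine mul_le_mul_of_nonneg_left ?_ hε'.le
      refine Finset.sum_le_sum_of_subset_of_nonneg ?_ fun k _ _ => hw k
      rw [hIcc]
      exact Finset.Ioc_subset_Ioc (Nat.zero_le N) le_rfl
    rw [Real.norm_eq_abs, abs_div, abs_of_pos hB0]
    calc |∑ k ∈ Icc 1 t, w k * (x k - L)| / B t
        ≤ (C + ε' * ∑ k ∈ Icc 1 t, w k) / B t := by gcongr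
      _ = C / B t + ε' * ((∑ k ∈ Icc 1 t, w k) / B t) := by ring
      _ < ε / 2 + ε' * (γ + 1) := by
          have : ε' * ((∑ k ∈ Icc 1 t, w k) / B t) ≤ ε' * (γ + 1) :=
            mul_le_mul_of_nonneg_left hS.le hε'.le
          linarith
      _ = ε / 2 + ε / 2 := by rw [hε'def]; field_simp
      _ = ε := by ring
  have heq : ∀ t, (∑ k ∈ Icc 1 t, w k * x k) / B t
      = (∑ k ∈ Icc 1 t, w k * (x k - L)) / B t + L * ((∑ k ∈ Icc 1 t, w k) / B t) := by
    intro t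
    have : ∑ k ∈ Icc 1 t, w k * x k
        = (∑ k ∈ Icc 1 t, w k * (x k - L)) + L * ∑ k ∈ Icc 1 t, w k := by
      rw [Finset.mul_sum, ← Finset.sum_add_distrib]
      exact Finset.sum_congr rfl fun k _ => by ring
    rw [this, add_div, mul_div_assoc]
  have := key.add (hwB.const_mul L)
  rw [zero_add] at this
  refine Tendsto.congr (fun t => (heq t).symm) ?_
  simpa [mul_comm] using this
open Filter Finset

private lemma abel_aux (b x : ℕ → ℝ) (hb0 : ∀ k, b k ≠ 0) (t : ℕ) :
    ∑ k ∈ Icc 1 t, x k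
      = b t * (∑ k ∈ Icc 1 t, x k / b k)
        - ∑ k ∈ Icc 1 t, (b k - b (k - 1)) * (∑ j ∈ Icc 1 (k - 1), x j / b j) := by
  induction t with
  | zero => simp
  | succ t ih =>
    rw [Finset.sum_Icc_succ_top (Nat.succ_le_succ (Nat.zero_le t)),
      Finset.sum_Icc_succ_top (Nat.succ_le_succ (Nat.zero_le t)),
      Finset.sum_Icc_succ_top (Nat.succ_le_succ (Nat.zero_le t)), ih]
    simp only [Nat.add_sub_cancel]
    have h := hb0 (t + 1)
    field_simp
    ring

private lemma telescope_aux (b : ℕ → ℝ) (t : ℕ) :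
    ∑ k ∈ Icc 1 t, (b k - b (k - 1)) = b t - b 0 := by
  induction t with
  | zero => simp
  | succ t ih =>
    rw [Finset.sum_Icc_succ_top (Nat.succ_le_succ (Nat.zero_le t)), ih]
    simp only [Nat.add_sub_cancel]
    ring

private lemma kronecker_aux {b : ℕ → ℝ} (hb : ∀ k, 0 < b k) (hbm : Monotone b)
    (hbt : Tendsto b atTop atTop) {x : ℕ → ℝ} {S : ℝ}
    (hS : Tendsto (fun t => ∑ k ∈ Icc 1 t, x k / b k) atTop (nhds S)) :
    Tendsto (fun t => (∑ k ∈ Icc 1 t, x k) / b t) atTop (nhds 0) := by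
  set Sf : ℕ → ℝ := fun t => ∑ k ∈ Icc 1 t, x k / b k with hSf
  set w : ℕ → ℝ := fun k => b k - b (k - 1) with hw
  have hwnn : ∀ k, 0 ≤ w k := fun k => sub_nonneg.mpr (hbm (Nat.sub_le k 1))
  have hwB : Tendsto (fun t => (∑ k ∈ Icc 1 t, w k) / b t) atTop (nhds 1) := by
    have heq : ∀ t, (∑ k ∈ Icc 1 t, w k) / b t = 1 - b 0 / b t := by
      intro t
      rw [hw, telescope_aux, sub_div, div_self (hb t).ne']
    have : Tendsto (fun t => 1 - b 0 / b t) atTop (nhds (1 - 0)) :=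
      tendsto_const_nhds.sub (Tendsto.div_atTop tendsto_const_nhds hbt)
    rw [sub_zero] at this
    exact Tendsto.congr (fun t => (heq t).symm) this
  have hx' : Tendsto (fun k => Sf (k - 1)) atTop (nhds S) :=
    hS.comp (tendsto_sub_atTop_nat 1)
  have h2 := toeplitz_aux hwnn hbt hwB hx'
  have heq : ∀ t, (∑ k ∈ Icc 1 t, x k) / b t
      = Sf t - (∑ k ∈ Icc 1 t, w k * Sf (k - 1)) / b t := by
    intro t
    rw [abel_aux b x (fun k => (hb k).ne') t, sub_div,
      mul_div_cancel_left₀ _ (hb t).ne']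
  have := hS.sub h2
  rw [one_mul, sub_self] at this
  exact Tendsto.congr (fun t => (heq t).symm) this
open Filter Finset MeasureTheory

private lemma memLp_two_condexp_aux {Ω : Type*} {m m0 : MeasurableSpace Ω} (P : Measure Ω)
    [IsProbabilityMeasure P] (hm : m ≤ m0) {f : Ω → ℝ} (hf : MemLp f 2 P) :
    MemLp (P[f|m]) 2 P := by
  haveI : SigmaFinite (P.trim hm) := by
    refine @IsFiniteMeasure.toSigmaFinite _ _ _ ?_
    exact isFiniteMeasure_trim hm
  set g := condExpL2 ℝ ℝ hm (hf.toLp f) with hg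
  have hae : (g : Ω → ℝ) =ᵐ[P] P[f|m] := by
    refine ae_eq_condExp_of_forall_setIntegral_eq hm (hf.integrable one_le_two)
      (fun s _ hμs => (integrableOn_Lp_of_measure_ne_top _ fact_one_le_two_ennreal.elim hμs.ne))
      (fun s hs hμs => ?_) (lpMeas.aestronglyMeasurable _)
    rw [integral_condExpL2_eq hm (hf.toLp f) hs hμs.ne]
    exact setIntegral_congr_ae (hm s hs) ((hf.coeFn_toLp).mono fun x hx _ => hx)
  exact (Lp.memLp (g : MeasureTheory.Lp ℝ 2 P)).ae_eq hae

/-- Kronecker-type lemma (part a): if `(Y_k)` is adapted to an increasing filtration `𝒢`,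
each `Y_k ∈ L²`, `E[Y_{k+1} | 𝒢_k] → Y` a.s., `(a_k), (b_k)` are strictly positive with
`b_k ↑ ∞` and `∑_k E[Y_k²]/(a_k² b_k²) < ∞`, and `(1/b_t) ∑_{k=1}^t 1/a_k → γ`, then
`(1/b_t) ∑_{k=1}^t Y_k/a_k → γ Y` almost surely. -/
theorem stmt_3 {Ω : Type*} [m0 : MeasurableSpace Ω] (P : Measure Ω) [IsProbabilityMeasure P]
    (𝒢 : ℕ → MeasurableSpace Ω) (h𝒢le : ∀ k, 𝒢 k ≤ m0) (h𝒢mono : Monotone 𝒢)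
    (Y : ℕ → Ω → ℝ) (hadp : ∀ k, StronglyMeasurable[𝒢 k] (Y k))
    (hL2 : ∀ k, MemLp (Y k) 2 P)
    (Ylim : Ω → ℝ)
    (hce : ∀ᵐ ω ∂P, Tendsto (fun k => (P[Y (k + 1)|𝒢 k]) ω) atTop (nhds (Ylim ω)))
    (a b : ℕ → ℝ) (ha : ∀ k, 0 < a k) (hb : ∀ k, 0 < b k)
    (hbmono : Monotone b) (hbtop : Tendsto b atTop atTop)
    (hsum : Summable fun k => (∫ ω, (Y k ω) ^ 2 ∂P) / (a k ^ 2 * b k ^ 2))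
    (γ : ℝ)
    (hnorm : Tendsto (fun t => (1 / b t) * ∑ k ∈ Finset.Icc 1 t, 1 / a k) atTop (nhds γ)) :
    ∀ᵐ ω ∂P, Tendsto (fun t => (1 / b t) * ∑ k ∈ Finset.Icc 1 t, Y k ω / a k)
      atTop (nhds (γ * Ylim ω)) := by
  classical
  set ℱ : Filtration ℕ m0 := ⟨𝒢, h𝒢mono, h𝒢le⟩ with hℱ
  have hY1 : ∀ k, Integrable (Y k) P := fun k => (hL2 k).integrable one_le_two
  set Z : ℕ → Ω → ℝ := fun k => P[Y (k + 1)|𝒢 k] with hZdef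
  have hZm : ∀ k, StronglyMeasurable[𝒢 k] (Z k) := fun k => stronglyMeasurable_condExp
  have hZint : ∀ k, Integrable (Z k) P := fun k => integrable_condExp
  have hZ2 : ∀ k, MemLp (Z k) 2 P := fun k => memLp_two_condexp_aux P (h𝒢le k) (hL2 (k + 1))
  set d : ℕ → Ω → ℝ := fun k => Y (k + 1) - Z k with hddef
  have hd2 : ∀ k, MemLp (d k) 2 P := fun k => (hL2 (k + 1)).sub (hZ2 k)
  have hdint : ∀ k, Integrable (d k) P := fun k => (hd2 k).integrable one_le_two
  have hdm : ∀ k, StronglyMeasurable[𝒢 (k + 1)] (d k) := fun k =>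
    (hadp (k + 1)).sub ((hZm k).mono (h𝒢mono (Nat.le_succ k)))
  have hcondd : ∀ k, P[d k|𝒢 k] =ᵐ[P] 0 := by
    intro k
    refine (condExp_sub (hY1 (k + 1)) (hZint k) _).trans ?_
    have h1 : P[Z k|𝒢 k] = Z k :=
      condExp_of_stronglyMeasurable (h𝒢le k) (hZm k) (hZint k)
    rw [h1]
    filter_upwards with ω
    simp [hZdef]
  set c : ℕ → ℝ := fun j => (a (j + 1) * b (j + 1))⁻¹ with hcdef
  set M : ℕ → Ω → ℝ := fun t => ∑ j ∈ Finset.range t, c j • d j with hMdef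
  have hMadp : StronglyAdapted ℱ M := by
    intro t
    refine Finset.stronglyMeasurable_sum _ fun j hj => ?_
    have hj' : j + 1 ≤ t := Finset.mem_range.mp hj
    exact ((hdm j).mono (h𝒢mono hj')).const_smul (c j)
  have hM2 : ∀ t, MemLp (M t) 2 P := fun t =>
    memLp_finsetSum' _ fun j _ => (hd2 j).const_smul (c j)
  have hMint : ∀ t, Integrable (M t) P := fun t => (hM2 t).integrable one_le_two
  have hMsucc : ∀ t, M (t + 1) = M t + c t • d t := fun t => Finset.sum_range_succ _ t
  have hmart : Martingale M ℱ P := by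
    refine martingale_nat hMadp hMint fun t => ?_
    rw [hMsucc t]
    have h1 : P[M t + c t • d t|𝒢 t] =ᵐ[P] P[M t|𝒢 t] + P[c t • d t|𝒢 t] :=
      condExp_add (hMint t) ((hdint t).smul (c t)) _
    have h2 : P[M t|𝒢 t] = M t :=
      condExp_of_stronglyMeasurable (h𝒢le t) (hMadp t) (hMint t)
    have h3 : P[c t • d t|𝒢 t] =ᵐ[P] c t • P[d t|𝒢 t] := condExp_smul (c t) (d t) _
    refine EventuallyEq.symm (h1.trans ?_)
    rw [h2]
    filter_upwards [h3, hcondd t] with ω h3ω hdω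
    simp only [Pi.add_apply, Pi.smul_apply, smul_eq_mul] at *
    rw [h3ω, hdω]
    simp
  have hMdprod : ∀ t, Integrable (M t * d t) P := by
    intro t
    have h : MemLp (M t * d t) 1 P := (hd2 t).smul (hM2 t)
    rw [← memLp_one_iff_integrable]
    exact h
  have hcross : ∀ t, ∫ ω, M t ω * d t ω ∂P = 0 := by
    intro t
    have h1 : P[M t * d t|𝒢 t] =ᵐ[P] M t * P[d t|𝒢 t] :=
      condExp_mul_of_stronglyMeasurable_left (hMadp t) (hMdprod t) (hdint t)
    have h2 : ∫ ω, (M t * d t) ω ∂P = ∫ ω, (P[M t * d t|𝒢 t]) ω ∂P :=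
      (integral_condExp (h𝒢le t)).symm
    calc ∫ ω, M t ω * d t ω ∂P = ∫ ω, (P[M t * d t|𝒢 t]) ω ∂P := h2
      _ = ∫ ω, (0 : ℝ) ∂P := by
          refine integral_congr_ae ?_
          filter_upwards [h1, hcondd t] with ω h1ω hdω
          rw [h1ω]
          simp only [Pi.mul_apply] at *
          rw [hdω]
          simp
      _ = 0 := integral_zero _ _
  have hZYprod : ∀ k, Integrable (Z k * Y (k + 1)) P := by
    intro k
    have h : MemLp (Z k * Y (k + 1)) 1 P := (hL2 (k + 1)).smul (hZ2 k)
    rw [← memLp_one_iff_integrable]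
    exact h
  have hd2le : ∀ k, ∫ ω, (d k ω) ^ 2 ∂P ≤ ∫ ω, (Y (k + 1) ω) ^ 2 ∂P := by
    intro k
    have hZY : ∫ ω, Z k ω * Y (k + 1) ω ∂P = ∫ ω, (Z k ω) ^ 2 ∂P := by
      have h1 : P[Z k * Y (k + 1)|𝒢 k] =ᵐ[P] Z k * P[Y (k + 1)|𝒢 k] :=
        condExp_mul_of_stronglyMeasurable_left (hZm k) (hZYprod k) (hY1 (k + 1))
      have h2 : ∫ ω, (Z k * Y (k + 1)) ω ∂P = ∫ ω, (P[Z k * Y (k + 1)|𝒢 k]) ω ∂P :=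
        (integral_condExp (h𝒢le k)).symm
      calc ∫ ω, Z k ω * Y (k + 1) ω ∂P = ∫ ω, (P[Z k * Y (k + 1)|𝒢 k]) ω ∂P := h2
        _ = ∫ ω, (Z k ω) ^ 2 ∂P := by
            refine integral_congr_ae ?_
            filter_upwards [h1] with ω h1ω
            rw [h1ω]
            simp only [Pi.mul_apply, hZdef]
            ring
    have hint1 : Integrable (fun ω => (Y (k + 1) ω) ^ 2) P := (hL2 (k + 1)).integrable_sq
    have hint2 : Integrable (fun ω => Z k ω * Y (k + 1) ω) P := hZYprod k
    have hint3 : Integrable (fun ω => (Z k ω) ^ 2) P := (hZ2 k).integrable_sq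
    have hexp : ∫ ω, (d k ω) ^ 2 ∂P
        = (∫ ω, (Y (k + 1) ω) ^ 2 ∂P) - 2 * (∫ ω, Z k ω * Y (k + 1) ω ∂P)
          + ∫ ω, (Z k ω) ^ 2 ∂P := by
      have hpt : ∀ ω, (d k ω) ^ 2
          = (Y (k + 1) ω) ^ 2 - 2 * (Z k ω * Y (k + 1) ω) + (Z k ω) ^ 2 := by
        intro ω
        simp only [hddef, Pi.sub_apply]
        ring
      rw [integral_congr_ae (Eventually.of_forall hpt)]
      have hA : Integrable (fun ω => (Y (k + 1) ω) ^ 2 - 2 * (Z k ω * Y (k + 1) ω)) P :=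
        hint1.sub (hint2.const_mul 2)
      rw [integral_add hA hint3, integral_sub hint1 (hint2.const_mul 2), integral_const_mul]
    rw [hexp, hZY]
    have hZ2nn : 0 ≤ ∫ ω, (Z k ω) ^ 2 ∂P := integral_nonneg fun ω => sq_nonneg _
    linarith
  have hvar : ∀ t, ∫ ω, (M t ω) ^ 2 ∂P ≤ ∑ j ∈ Finset.range t, (c j) ^ 2 * ∫ ω, (d j ω) ^ 2 ∂P := by
    intro t
    induction t with
    | zero => simp [hMdef]
    | succ t ih =>
      have hpt : ∀ ω, (M (t + 1) ω) ^ 2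
          = (M t ω) ^ 2 + (2 * c t) * (M t ω * d t ω) + (c t) ^ 2 * (d t ω) ^ 2 := by
        intro ω
        rw [hMsucc t]
        simp only [Pi.add_apply, Pi.smul_apply, smul_eq_mul]
        ring
      have hint1 : Integrable (fun ω => (M t ω) ^ 2) P := (hM2 t).integrable_sq
      have hint2 : Integrable (fun ω => (2 * c t) * (M t ω * d t ω)) P :=
        (hMdprod t).const_mul _
      have hint3 : Integrable (fun ω => (c t) ^ 2 * (d t ω) ^ 2) P :=
        ((hd2 t).integrable_sq).const_mul _
      calc ∫ ω, (M (t + 1) ω) ^ 2 ∂P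
          = ∫ ω, ((M t ω) ^ 2 + (2 * c t) * (M t ω * d t ω) + (c t) ^ 2 * (d t ω) ^ 2) ∂P :=
            integral_congr_ae (Eventually.of_forall hpt)
        _ = (∫ ω, (M t ω) ^ 2 ∂P) + (2 * c t) * (∫ ω, M t ω * d t ω ∂P)
            + (c t) ^ 2 * ∫ ω, (d t ω) ^ 2 ∂P := by
            have hint12 : Integrable
                (fun ω => (M t ω) ^ 2 + (2 * c t) * (M t ω * d t ω)) P := hint1.add hint2
            rw [integral_add hint12 hint3, integral_add hint1 hint2,
              integral_const_mul, integral_const_mul]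
        _ = (∫ ω, (M t ω) ^ 2 ∂P) + (c t) ^ 2 * ∫ ω, (d t ω) ^ 2 ∂P := by
            rw [hcross t]; ring
        _ ≤ (∑ j ∈ Finset.range t, (c j) ^ 2 * ∫ ω, (d j ω) ^ 2 ∂P)
            + (c t) ^ 2 * ∫ ω, (d t ω) ^ 2 ∂P := by
            have := ih
            gcongr
        _ = ∑ j ∈ Finset.range (t + 1), (c j) ^ 2 * ∫ ω, (d j ω) ^ 2 ∂P := by
            rw [Finset.sum_range_succ]
  set V : ℝ := ∑' k, (∫ ω, (Y k ω) ^ 2 ∂P) / (a k ^ 2 * b k ^ 2) with hVdef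
  have hfnn : ∀ k, 0 ≤ (∫ ω, (Y k ω) ^ 2 ∂P) / (a k ^ 2 * b k ^ 2) := fun k =>
    div_nonneg (integral_nonneg fun ω => sq_nonneg _) (by positivity)
  have hVnn : 0 ≤ V := tsum_nonneg hfnn
  have hvar2 : ∀ t, ∫ ω, (M t ω) ^ 2 ∂P ≤ V := by
    intro t
    refine (hvar t).trans ?_
    have step : ∑ j ∈ Finset.range t, (c j) ^ 2 * ∫ ω, (d j ω) ^ 2 ∂P
        ≤ ∑ j ∈ Finset.range t, (∫ ω, (Y (j + 1) ω) ^ 2 ∂P) / (a (j + 1) ^ 2 * b (j + 1) ^ 2) := by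
      refine Finset.sum_le_sum fun j _ => ?_
      have h1 : (c j) ^ 2 * ∫ ω, (d j ω) ^ 2 ∂P
          ≤ (c j) ^ 2 * ∫ ω, (Y (j + 1) ω) ^ 2 ∂P :=
        mul_le_mul_of_nonneg_left (hd2le j) (sq_nonneg _)
      refine h1.trans_eq ?_
      rw [hcdef]
      rw [inv_pow, mul_pow]
      rw [inv_mul_eq_div]
    refine step.trans ?_
    have heq : ∑ j ∈ Finset.range t, (∫ ω, (Y (j + 1) ω) ^ 2 ∂P) / (a (j + 1) ^ 2 * b (j + 1) ^ 2)
        = ∑ k ∈ Finset.Icc 1 t, (∫ ω, (Y k ω) ^ 2 ∂P) / (a k ^ 2 * b k ^ 2) := by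
      rw [← Finset.Ico_add_one_right_eq_Icc, Finset.sum_Ico_eq_sum_range]
      simp [add_comm]
    rw [heq, hVdef]
    exact Summable.sum_le_tsum _ (fun k _ => hfnn k) hsum
  set R : NNReal := Real.toNNReal (V ^ (2 : ℝ)⁻¹) with hRdef
  have hbdd : ∀ t, eLpNorm (M t) 1 P ≤ (R : ENNReal) := by
    intro t
    have h1 : eLpNorm (M t) 1 P ≤ eLpNorm (M t) 2 P :=
      eLpNorm_le_eLpNorm_of_exponent_le (by norm_num) (hM2 t).aestronglyMeasurable
    have h2 : eLpNorm (M t) 2 P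
        = ENNReal.ofReal ((∫ ω, (M t ω) ^ 2 ∂P) ^ (2 : ℝ)⁻¹) := by
      rw [(hM2 t).eLpNorm_eq_integral_rpow_norm two_ne_zero ENNReal.ofNat_ne_top]
      have h4 : ∫ ω, ‖M t ω‖ ^ (2 : ENNReal).toReal ∂P = ∫ ω, (M t ω) ^ 2 ∂P := by
        refine integral_congr_ae (Eventually.of_forall fun ω => ?_)
        simp [ENNReal.toReal_ofNat, Real.rpow_two, Real.norm_eq_abs, sq_abs]
      rw [h4]
      norm_num
    refine h1.trans ?_
    rw [h2, hRdef]
    have h3 : (∫ ω, (M t ω) ^ 2 ∂P) ^ (2 : ℝ)⁻¹ ≤ V ^ (2 : ℝ)⁻¹ :=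
      Real.rpow_le_rpow (integral_nonneg fun ω => sq_nonneg _) (hvar2 t) (by norm_num)
    calc ENNReal.ofReal ((∫ ω, (M t ω) ^ 2 ∂P) ^ (2 : ℝ)⁻¹)
        ≤ ENNReal.ofReal (V ^ (2 : ℝ)⁻¹) := ENNReal.ofReal_le_ofReal h3
      _ = ((Real.toNNReal (V ^ (2 : ℝ)⁻¹) : NNReal) : ENNReal) := rfl
  have hconv := hmart.submartingale.ae_tendsto_limitProcess hbdd
  filter_upwards [hce, hconv] with ω hceω hconvω
  have hceω' : Tendsto (fun k => Z k ω) atTop (nhds (Ylim ω)) := hceω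
  have h2 : Tendsto (fun t => (∑ k ∈ Finset.Icc 1 t, (1 / a k) * Z (k - 1) ω) / b t)
      atTop (nhds (γ * Ylim ω)) := by
    have hwa : ∀ k, 0 ≤ 1 / a k := fun k => (one_div_pos.mpr (ha k)).le
    have hwB : Tendsto (fun t => (∑ k ∈ Finset.Icc 1 t, 1 / a k) / b t) atTop (nhds γ) := by
      refine Tendsto.congr (fun t => ?_) hnorm
      rw [one_div, inv_mul_eq_div]
    have hxz : Tendsto (fun k => Z (k - 1) ω) atTop (nhds (Ylim ω)) :=
      hceω'.comp (tendsto_sub_atTop_nat 1)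
    exact toeplitz_aux hwa hbtop hwB hxz
  have h1 : Tendsto (fun t => (∑ k ∈ Finset.Icc 1 t, d (k - 1) ω / a k) / b t)
      atTop (nhds 0) := by
    have hMeq : ∀ t, ∑ k ∈ Finset.Icc 1 t, (d (k - 1) ω / a k) / b k = M t ω := by
      intro t
      rw [hMdef]
      simp only [Finset.sum_apply, Pi.smul_apply, smul_eq_mul]
      rw [← Finset.Ico_add_one_right_eq_Icc, Finset.sum_Ico_eq_sum_range]
      simp only [Nat.add_sub_cancel, Nat.add_sub_cancel_left]
      refine Finset.sum_congr rfl fun i _ => ?_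
      rw [add_comm 1 i]
      simp only [Nat.add_sub_cancel, hcdef]
      rw [div_div, div_eq_mul_inv, mul_comm]
    have hS' : Tendsto (fun t => ∑ k ∈ Finset.Icc 1 t, (d (k - 1) ω / a k) / b k)
        atTop (nhds (ℱ.limitProcess M P ω)) :=
      Tendsto.congr (fun t => (hMeq t).symm) hconvω
    exact kronecker_aux hb hbmono hbtop hS'
  have heq : ∀ t, (1 / b t) * ∑ k ∈ Finset.Icc 1 t, Y k ω / a k
      = (∑ k ∈ Finset.Icc 1 t, d (k - 1) ω / a k) / b t
        + (∑ k ∈ Finset.Icc 1 t, (1 / a k) * Z (k - 1) ω) / b t := by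
    intro t
    rw [one_div, inv_mul_eq_div, ← add_div]
    congr 1
    rw [← Finset.sum_add_distrib]
    refine Finset.sum_congr rfl fun k hk => ?_
    have hk1 : 1 ≤ k := (Finset.mem_Icc.mp hk).1
    have hky : Y k ω = d (k - 1) ω + Z (k - 1) ω := by
      have hkk : k - 1 + 1 = k := Nat.sub_add_cancel hk1
      simp only [hddef, Pi.sub_apply, hkk]
      ring
    rw [hky]
    ring
  have hfinal := h1.add h2
  rw [zero_add] at hfinal
  exact Tendsto.congr (fun t => (heq t).symm) hfinal
end

section
/- In the system of N interacting Pólya urns with α ∈ (0,1], the rescaled discrepancy sequence D̃_t = t^α (Z_t(j) − Z_t) is a quasi-martingale with respect to the filtration F; more precisely, E[D̃_{t+1} | F_t] − D̃_t = O(1/t²) · α D̃_t, and ∑_t E|E[D̃_{t+1} | F_t] − D̃_t| < ∞. -/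
open Filter Finset MeasureTheory

lemma stmt9_aux_f_bounds {α mm u : ℝ} (hα0 : 0 < α) (hα1 : α ≤ 1) (hmm : 2 ≤ mm) (hu : 1 ≤ u) :
    0 ≤ (u + 1) ^ α * ((mm + u) + (1 - α)) / (mm + u + 1) - u ^ α ∧
      (u + 1) ^ α * ((mm + u) + (1 - α)) / (mm + u + 1) - u ^ α
        ≤ α * ((mm + 1) * (u ^ α / u ^ 2)) := by
  have hu0 : (0:ℝ) < u := by linarith
  have hu1 : (0:ℝ) < u + 1 := by linarith
  have hd : (0:ℝ) < mm + u + 1 := by linarith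
  have hA : (0:ℝ) < u ^ α := Real.rpow_pos_of_pos hu0 _
  have hB : (0:ℝ) < (u + 1) ^ α := Real.rpow_pos_of_pos hu1 _
  -- Bernoulli upper bound: (u+1)^α ≤ u^α * (1 + α/u)
  have hB1 : (u + 1) ^ α ≤ u ^ α * (1 + α / u) := by
    have h1 : u + 1 = u * (1 + 1 / u) := by field_simp
    have h2 : (1 + 1 / u) ^ α ≤ 1 + α * (1 / u) :=
      rpow_one_add_le_one_add_mul_self
        (le_trans (by norm_num : (-1:ℝ) ≤ 0) (by positivity)) hα0.le hα1
    calc (u + 1) ^ α = u ^ α * (1 + 1 / u) ^ α := by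
          rw [h1, Real.mul_rpow hu0.le (by positivity)]
      _ ≤ u ^ α * (1 + α * (1 / u)) := mul_le_mul_of_nonneg_left h2 hA.le
      _ = u ^ α * (1 + α / u) := by ring
  -- Bernoulli lower bound: u^α ≤ (u+1)^α * (1 - α/(u+1))
  have hB2 : u ^ α ≤ (u + 1) ^ α * (1 - α / (u + 1)) := by
    have h1 : u = (u + 1) * (1 + (-1 / (u + 1))) := by field_simp; ring
    have hs : (-1:ℝ) ≤ -1 / (u + 1) := by
      rw [neg_div]
      have : 1 / (u + 1) ≤ 1 := by
        rw [div_le_one hu1]; linarith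
      linarith
    have h2 : (1 + (-1 / (u + 1))) ^ α ≤ 1 + α * (-1 / (u + 1)) :=
      rpow_one_add_le_one_add_mul_self hs hα0.le hα1
    have h3 : (0:ℝ) ≤ 1 + (-1 / (u + 1)) := by
      have : 1 / (u + 1) ≤ 1 := by rw [div_le_one hu1]; linarith
      rw [neg_div]; linarith
    calc u ^ α = (u + 1) ^ α * (1 + (-1 / (u + 1))) ^ α := by
          rw [← Real.mul_rpow hu1.le h3, ← h1]
      _ ≤ (u + 1) ^ α * (1 + α * (-1 / (u + 1))) := mul_le_mul_of_nonneg_left h2 hB.le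
      _ = (u + 1) ^ α * (1 - α / (u + 1)) := by ring
  constructor
  · have h2 : (u + 1) ^ α * (1 - α / (u + 1)) ≤ (u + 1) ^ α * (1 - α / (mm + u + 1)) := by
      have : α / (mm + u + 1) ≤ α / (u + 1) := by
        apply div_le_div_of_nonneg_left hα0.le hu1; linarith
      nlinarith
    have h3 : ((mm + u) + (1 - α)) / (mm + u + 1)
        = 1 - α / (mm + u + 1) := by
      field_simp
      ring
    rw [mul_div_assoc, h3]
    linarith
  · have hfrac : (0:ℝ) ≤ ((mm + u) + (1 - α)) / (mm + u + 1) := by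
      apply div_nonneg _ hd.le; linarith
    have stepi : (u + 1) ^ α * ((mm + u) + (1 - α)) / (mm + u + 1)
        ≤ u ^ α * (1 + α / u) * (((mm + u) + (1 - α)) / (mm + u + 1)) := by
      rw [mul_div_assoc]
      exact mul_le_mul_of_nonneg_right hB1 hfrac
    have heq : u ^ α * (1 + α / u) * (((mm + u) + (1 - α)) / (mm + u + 1)) - u ^ α
        = u ^ α * (α * (mm + 1 - α)) / (u * (mm + u + 1)) := by
      field_simp; ring
    have hlast : u ^ α * (α * (mm + 1 - α)) / (u * (mm + u + 1))
        ≤ u ^ α * (α * (mm + 1)) / u ^ 2 := by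
      apply div_le_div₀ (by positivity) _ (by positivity) _
      · nlinarith [mul_nonneg (mul_nonneg hA.le hα0.le) hα0.le]
      · nlinarith [mul_nonneg hu0.le (show (0:ℝ) ≤ mm + 1 by linarith)]
    calc (u + 1) ^ α * ((mm + u) + (1 - α)) / (mm + u + 1) - u ^ α
        ≤ u ^ α * (1 + α / u) * (((mm + u) + (1 - α)) / (mm + u + 1)) - u ^ α := by linarith
      _ = u ^ α * (α * (mm + 1 - α)) / (u * (mm + u + 1)) := heq
      _ ≤ u ^ α * (α * (mm + 1)) / u ^ 2 := hlast
      _ = α * ((mm + 1) * (u ^ α / u ^ 2)) := by ring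

set_option maxHeartbeats 2000000 in
/-- For α ∈ (0,1], the rescaled discrepancy `D̃_t = t^α (Z_t(j) - Z̄_t)` is an
ℱ-quasi-martingale: `E[D̃_{t+1}|ℱ_t] - D̃_t = O(1/t²) α D̃_t` and
`∑_t E|E[D̃_{t+1}|ℱ_t] - D̃_t| < ∞`. (For α = 1 one uses the known fact
`E|D_t| = O(t^{-1/2})`, stated here as a hypothesis.) -/
theorem stmt_9 {Ω : Type*} [m0 : MeasurableSpace Ω] (P : Measure Ω) [IsProbabilityMeasure P]
    (α : ℝ) (hα0 : 0 < α) (hα1 : α ≤ 1)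
    (N : ℕ) (hN : 1 < N) (a b : ℕ) (ha : 1 ≤ a) (hb : 1 ≤ b)
    (ℱ : ℕ → MeasurableSpace Ω) (hℱle : ∀ t, ℱ t ≤ m0) (hℱmono : Monotone ℱ)
    (I Z : ℕ → Fin N → Ω → ℝ)
    -- each I_{t+1}(i) is an indicator, ℱ_{t+1}-measurable
    (hI01 : ∀ t i ω, I (t + 1) i ω = 0 ∨ I (t + 1) i ω = 1)
    (hImeas : ∀ t i, StronglyMeasurable[ℱ (t + 1)] (I (t + 1) i))
    -- initial composition: a red and b black balls in each urn
    (hZ0 : ∀ i ω, Z 0 i ω = (a : ℝ) / ((a : ℝ) + b))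
    -- proportion dynamics
    (hZrec : ∀ t i ω, Z (t + 1) i ω =
      (((a : ℝ) + b + t) * Z t i ω + I (t + 1) i ω) / ((a : ℝ) + b + t + 1))
    -- conditional probability of adding a red ball in urn i
    (hcond : ∀ t i, P[I (t + 1) i|ℱ t] =ᵐ[P]
      fun ω => α * ((∑ k, Z t k ω) / N) + (1 - α) * Z t i ω)
    -- conditional independence of the urns
    (hcondindep : ∀ t, ∀ i j, i ≠ j →
      P[fun ω => I (t + 1) i ω * I (t + 1) j ω|ℱ t] =ᵐ[P]
        fun ω => (α * ((∑ k, Z t k ω) / N) + (1 - α) * Z t i ω) *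
          (α * ((∑ k, Z t k ω) / N) + (1 - α) * Z t j ω))
    (j : Fin N)
    (D : ℕ → Ω → ℝ) (hD : ∀ t ω, D t ω = (t : ℝ) ^ α * (Z t j ω - (∑ i, Z t i ω) / N))
    -- known fact, needed only for α = 1: E|D_t| = O(t^{-1/2})
    (hknown : α = 1 → ∃ C : ℝ, ∀ t : ℕ, 1 ≤ t →
      ∫ ω, |Z t j ω - (∑ i, Z t i ω) / N| ∂P ≤ C * ((t : ℝ) ^ (-(1 / 2 : ℝ)))) :
    (∃ C : ℝ, 0 < C ∧ ∀ t : ℕ, 1 ≤ t → ∀ᵐ ω ∂P,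
        |(P[D (t + 1)|ℱ t]) ω - D t ω| ≤ (C / (t : ℝ) ^ 2) * (α * |D t ω|)) ∧
      Summable (fun t : ℕ => ∫ ω, |(P[D (t + 1)|ℱ t]) ω - D t ω| ∂P) := by
  classical
  have hm2 : (2:ℝ) ≤ (a:ℝ) + b := by
    have h1 : (1:ℝ) ≤ (a:ℝ) := by exact_mod_cast ha
    have h2 : (1:ℝ) ≤ (b:ℝ) := by exact_mod_cast hb
    linarith
  have hN0 : (0:ℝ) < N := by exact_mod_cast Nat.zero_lt_of_lt hN
  have hNne : (N:ℝ) ≠ 0 := ne_of_gt hN0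
  -- bounds on Z
  have hZmem : ∀ t i ω, 0 ≤ Z t i ω ∧ Z t i ω ≤ 1 := by
    intro t
    induction t with
    | zero =>
      intro i ω
      rw [hZ0]
      constructor
      · positivity
      · rw [div_le_one (by linarith)]
        have : (0:ℝ) ≤ (b:ℝ) := by positivity
        linarith
    | succ t ih =>
      intro i ω
      rw [hZrec]
      obtain ⟨h0, h1⟩ := ih i ω
      have hmt : (0:ℝ) ≤ (a:ℝ) + b + t := by
        have : (0:ℝ) ≤ (t:ℝ) := Nat.cast_nonneg t
        linarith
      have hden : (0:ℝ) < (a:ℝ) + b + t + 1 := by linarith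
      have hI0 : 0 ≤ I (t+1) i ω ∧ I (t+1) i ω ≤ 1 := by
        rcases hI01 t i ω with h | h <;> rw [h] <;> norm_num
      constructor
      · apply div_nonneg _ hden.le
        have := mul_nonneg hmt h0
        linarith [hI0.1]
      · rw [div_le_one hden]
        nlinarith [hI0.2]
  -- strong measurability of Z
  have hZsm : ∀ t i, StronglyMeasurable[ℱ t] (Z t i) := by
    intro t
    induction t with
    | zero =>
      intro i
      have : Z 0 i = fun _ => (a:ℝ) / ((a:ℝ) + b) := funext (hZ0 i)
      rw [this]; exact stronglyMeasurable_const
    | succ t ih =>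
      intro i
      have : Z (t+1) i = fun ω =>
          (((a:ℝ) + b + t) * Z t i ω + I (t+1) i ω) / ((a:ℝ) + b + t + 1) :=
        funext (hZrec t i)
      rw [this]
      simp only [div_eq_mul_inv]
      exact ((((ih i).mono (hℱmono (Nat.le_succ t))).const_mul _).add (hImeas t i)).mul_const _
  -- integrability helper
  have hint : ∀ f : Ω → ℝ, AEStronglyMeasurable f P → (∀ ω, |f ω| ≤ 1) → Integrable f P := by
    intro f hf hb
    exact ⟨hf, HasFiniteIntegral.of_bounded (C := 1) (ae_of_all _ fun ω => by
      simpa [Real.norm_eq_abs] using hb ω)⟩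
  have hZint : ∀ t i, Integrable (Z t i) P := fun t i =>
    hint _ (((hZsm t i).mono (hℱle t)).aestronglyMeasurable)
      (fun ω => abs_le.mpr ⟨by linarith [(hZmem t i ω).1], (hZmem t i ω).2⟩)
  have hIint : ∀ t i, Integrable (I (t+1) i) P := fun t i =>
    hint _ (((hImeas t i).mono (hℱle (t+1))).aestronglyMeasurable)
      (fun ω => by rcases hI01 t i ω with h | h <;> rw [h] <;> norm_num)
  -- discrepancy X
  set X : ℕ → Ω → ℝ := fun t ω => Z t j ω - (∑ i, Z t i ω) / N with hXdef
  have hXsm : ∀ t, StronglyMeasurable[ℱ t] (X t) := by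
    intro t
    rw [hXdef]
    simp only [div_eq_mul_inv]
    exact (hZsm t j).sub ((Finset.stronglyMeasurable_fun_sum _ fun i _ => hZsm t i).mul_const _)
  have hXabs : ∀ t ω, |X t ω| ≤ 1 := by
    intro t ω
    have hS0 : (0:ℝ) ≤ ∑ i, Z t i ω := Finset.sum_nonneg fun i _ => (hZmem t i ω).1
    have hS1 : (∑ i, Z t i ω) ≤ N := by
      calc (∑ i, Z t i ω) ≤ ∑ _i : Fin N, (1:ℝ) :=
            Finset.sum_le_sum fun i _ => (hZmem t i ω).2
        _ = N := by simp
    have h1 : (∑ i, Z t i ω) / N ≤ 1 := by rw [div_le_one hN0]; exact hS1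
    have h2 : 0 ≤ (∑ i, Z t i ω) / N := div_nonneg hS0 hN0.le
    simp only [hXdef]
    exact abs_le.mpr ⟨by linarith [(hZmem t j ω).1], by linarith [(hZmem t j ω).2]⟩
  have hXint : ∀ t, Integrable (X t) P := fun t =>
    hint _ (((hXsm t).mono (hℱle t)).aestronglyMeasurable) (hXabs t)
  -- D in terms of X
  have hDX : ∀ t ω, D t ω = (t:ℝ) ^ α * X t ω := fun t ω => by
    rw [hD]
    try simp only [hXdef]
  -- key conditional expectation computation
  have hkey : ∀ t : ℕ, (P[D (t+1)|ℱ t]) =ᵐ[P]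
      fun ω => (((t:ℝ) + 1) ^ α * (((a:ℝ) + b + t) + (1 - α)) / ((a:ℝ) + b + t + 1))
        * X t ω := by
    intro t
    have hmt : (0:ℝ) ≤ (a:ℝ) + b + t := by
      have : (0:ℝ) ≤ (t:ℝ) := Nat.cast_nonneg t
      linarith
    have hden : ((a:ℝ) + b + t + 1) ≠ 0 := by positivity
    set c : ℝ := ((t:ℝ) + 1) ^ α / ((a:ℝ) + b + t + 1) with hc
    set G1 : Ω → ℝ := fun ω => ((a:ℝ) + b + t) * X t ω with hG1
    set SI : Ω → ℝ := fun ω => ∑ i, I (t+1) i ω with hSI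
    set Y : Ω → ℝ := fun ω => I (t+1) j ω - SI ω / N with hY
    have hDeq : D (t+1) = c • (G1 + Y) := by
      funext ω
      have hsum : (∑ i, Z (t+1) i ω)
          = ∑ i, ((((a:ℝ) + b + t) * Z t i ω + I (t+1) i ω) / ((a:ℝ) + b + t + 1)) :=
        Finset.sum_congr rfl fun i _ => hZrec t i ω
      simp only [Pi.smul_apply, Pi.add_apply, smul_eq_mul, hG1, hY, hSI, hc, hXdef]
      rw [hD, hZrec, hsum, ← Finset.sum_div, Finset.sum_add_distrib, ← Finset.mul_sum]
      push_cast
      field_simp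
      ring
    have hintG1 : Integrable G1 P := by
      simp only [hG1]; exact (hXint t).const_mul _
    have hintSI : Integrable SI P := by
      simp only [hSI]; exact integrable_finset_sum _ fun i _ => hIint t i
    have hintY : Integrable Y P := by
      simp only [hY]; exact (hIint t j).sub (hintSI.div_const _)
    have e1 : P[D (t+1)|ℱ t] =ᵐ[P] c • P[G1 + Y|ℱ t] := by
      rw [hDeq]; exact condExp_smul c (G1 + Y) (ℱ t)
    have e2 : P[G1 + Y|ℱ t] =ᵐ[P] P[G1|ℱ t] + P[Y|ℱ t] := condExp_add hintG1 hintY (ℱ t)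
    have e3 : P[G1|ℱ t] = G1 :=
      condExp_of_stronglyMeasurable (hℱle t)
        (by simp only [hG1]; exact (hXsm t).const_mul _) hintG1
    have e4 : P[Y|ℱ t] =ᵐ[P] P[I (t+1) j|ℱ t] - P[fun ω => SI ω / N|ℱ t] := by
      have hYe : Y = I (t+1) j - fun ω => SI ω / N := by
        funext ω; simp only [hY, Pi.sub_apply]
      rw [hYe]
      exact condExp_sub (hIint t j) (hintSI.div_const _) (ℱ t)
    have e5 : P[fun ω => SI ω / N|ℱ t] =ᵐ[P] ((N:ℝ)⁻¹) • P[SI|ℱ t] := by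
      have hSIe : (fun ω => SI ω / N) = ((N:ℝ)⁻¹) • SI := by
        funext ω; simp only [Pi.smul_apply, smul_eq_mul]; rw [div_eq_inv_mul]
      rw [hSIe]
      exact condExp_smul _ _ (ℱ t)
    have e6 : P[SI|ℱ t] =ᵐ[P] ∑ i, P[I (t+1) i|ℱ t] := by
      have hSIe : SI = ∑ i, I (t+1) i := by
        funext ω; simp only [hSI, Finset.sum_apply]
      rw [hSIe]
      exact condExp_finsetSum (fun i _ => hIint t i) (ℱ t)
    have e7 : ∀ᵐ ω ∂P, ∀ i, (P[I (t+1) i|ℱ t]) ω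
        = α * ((∑ k, Z t k ω) / N) + (1 - α) * Z t i ω :=
      ae_all_iff.mpr fun i => hcond t i
    filter_upwards [e1, e2, e4, e5, e6, e7] with ω h1 h2 h4 h5 h6 h7
    rw [h1]
    simp only [Pi.smul_apply, smul_eq_mul]
    rw [h2]
    simp only [Pi.add_apply, e3]
    rw [h4]
    simp only [Pi.sub_apply]
    rw [h5]
    simp only [Pi.smul_apply, smul_eq_mul]
    rw [h6]
    simp only [Finset.sum_apply]
    have hsum2 : (∑ i, (P[I (t+1) i|ℱ t]) ω)
        = ∑ i : Fin N, (α * ((∑ k, Z t k ω) / N) + (1 - α) * Z t i ω) :=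
      Finset.sum_congr rfl fun i _ => h7 i
    rw [hsum2, h7 j, Finset.sum_add_distrib, Finset.sum_const, Finset.card_univ,
      Fintype.card_fin, ← Finset.mul_sum]
    simp only [hG1, hXdef, hc, nsmul_eq_mul]
    field_simp
    ring
  -- the drift coefficient
  set F : ℕ → ℝ := fun t =>
    (((t:ℝ) + 1) ^ α * (((a:ℝ) + b + t) + (1 - α)) / ((a:ℝ) + b + t + 1)) - (t:ℝ) ^ α
    with hFdef
  have hdiff : ∀ t : ℕ, ∀ᵐ ω ∂P, (P[D (t+1)|ℱ t]) ω - D t ω = F t * X t ω := by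
    intro t
    filter_upwards [hkey t] with ω h
    rw [h, hDX]
    simp only [hFdef]
    ring
  have hF : ∀ t : ℕ, 1 ≤ t →
      0 ≤ F t ∧ F t ≤ α * ((((a:ℝ) + b) + 1) * ((t:ℝ) ^ α / (t:ℝ) ^ 2)) := by
    intro t ht
    have hu : (1:ℝ) ≤ (t:ℝ) := by exact_mod_cast ht
    simpa only [hFdef] using stmt9_aux_f_bounds hα0 hα1 hm2 hu
  constructor
  · refine ⟨(a:ℝ) + b + 1, by linarith, ?_⟩
    intro t ht
    obtain ⟨hf0, hf1⟩ := hF t ht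
    filter_upwards [hdiff t] with ω h
    rw [h]
    have hDabs : |D t ω| = (t:ℝ) ^ α * |X t ω| := by
      rw [hDX, abs_mul, abs_of_nonneg (Real.rpow_nonneg (Nat.cast_nonneg t) α)]
    rw [abs_mul, abs_of_nonneg hf0, hDabs]
    calc F t * |X t ω|
        ≤ (α * ((((a:ℝ) + b) + 1) * ((t:ℝ) ^ α / (t:ℝ) ^ 2))) * |X t ω| :=
          mul_le_mul_of_nonneg_right hf1 (abs_nonneg _)
      _ = ((a:ℝ) + b + 1) / (t:ℝ) ^ 2 * (α * ((t:ℝ) ^ α * |X t ω|)) := by ring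
  · have hterm_nonneg : ∀ t : ℕ, 0 ≤ ∫ ω, |(P[D (t+1)|ℱ t]) ω - D t ω| ∂P :=
      fun t => integral_nonneg fun ω => abs_nonneg _
    have habsX : ∀ t, ∫ ω, |X t ω| ∂P ≤ 1 := by
      intro t
      calc ∫ ω, |X t ω| ∂P ≤ ∫ _ω, (1:ℝ) ∂P :=
            integral_mono (hXint t).abs (integrable_const 1) (hXabs t)
        _ = 1 := by simp
    have hXnn : ∀ t, (0:ℝ) ≤ ∫ ω, |X t ω| ∂P :=
      fun t => integral_nonneg fun ω => abs_nonneg _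
    have hterm : ∀ t : ℕ, 1 ≤ t → ∫ ω, |(P[D (t+1)|ℱ t]) ω - D t ω| ∂P
        = F t * ∫ ω, |X t ω| ∂P := by
      intro t ht
      rw [← integral_const_mul]
      apply integral_congr_ae
      filter_upwards [hdiff t] with ω h
      rw [h, abs_mul, abs_of_nonneg (hF t ht).1]
    apply (summable_nat_add_iff 1).mp
    by_cases hc1 : α = 1
    · obtain ⟨C₀, hC₀⟩ := hknown hc1
      have hbound : ∀ t : ℕ, 1 ≤ t → ∫ ω, |(P[D (t+1)|ℱ t]) ω - D t ω| ∂P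
          ≤ (((a:ℝ) + b + 1) * C₀) * ((t:ℝ) ^ (-(3/2 : ℝ))) := by
        intro t ht
        have hu1 : (1:ℝ) ≤ (t:ℝ) := by exact_mod_cast ht
        have hu0 : (0:ℝ) < (t:ℝ) := by linarith
        obtain ⟨hf0, hf1⟩ := hF t ht
        have hXb : ∫ ω, |X t ω| ∂P ≤ C₀ * (t:ℝ) ^ (-(1/2 : ℝ)) := by
          have := hC₀ t ht
          try simp only [hXdef] at this ⊢
          exact this
        rw [hterm t ht]
        have h1 : F t * ∫ ω, |X t ω| ∂P
            ≤ (α * ((((a:ℝ) + b) + 1) * ((t:ℝ) ^ α / (t:ℝ) ^ 2)))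
              * (C₀ * (t:ℝ) ^ (-(1/2 : ℝ))) :=
          mul_le_mul hf1 hXb (hXnn t) (by positivity)
        refine h1.trans (le_of_eq ?_)
        rw [hc1, Real.rpow_one]
        have h2 : (t:ℝ) ^ (-(3/2 : ℝ)) = (t:ℝ) ^ (-(1/2 : ℝ)) * ((t:ℝ))⁻¹ := by
          rw [← Real.rpow_neg_one (t:ℝ), ← Real.rpow_add hu0]
          norm_num
        rw [h2]
        field_simp
      refine Summable.of_nonneg_of_le (fun n => hterm_nonneg (n+1))
        (fun n => hbound (n+1) (Nat.le_add_left 1 n)) ?_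
      have hs : Summable (fun n : ℕ => (((a:ℝ) + b + 1) * C₀) * ((n:ℝ) ^ (-(3/2 : ℝ)))) :=
        (Real.summable_nat_rpow.mpr (by norm_num)).mul_left _
      exact (summable_nat_add_iff 1).mpr hs
    · have hα1' : α < 1 := lt_of_le_of_ne hα1 hc1
      have hbound : ∀ t : ℕ, 1 ≤ t → ∫ ω, |(P[D (t+1)|ℱ t]) ω - D t ω| ∂P
          ≤ ((a:ℝ) + b + 1) * ((t:ℝ) ^ (α - 2)) := by
        intro t ht
        have hu1 : (1:ℝ) ≤ (t:ℝ) := by exact_mod_cast ht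
        have hu0 : (0:ℝ) < (t:ℝ) := by linarith
        obtain ⟨hf0, hf1⟩ := hF t ht
        rw [hterm t ht]
        have h1 : F t * ∫ ω, |X t ω| ∂P
            ≤ (α * ((((a:ℝ) + b) + 1) * ((t:ℝ) ^ α / (t:ℝ) ^ 2))) * 1 :=
          mul_le_mul hf1 (habsX t) (hXnn t) (by positivity)
        refine h1.trans ?_
        have h2 : (t:ℝ) ^ α / (t:ℝ) ^ 2 = (t:ℝ) ^ (α - 2) := by
          rw [← Real.rpow_natCast (t:ℝ) 2, ← Real.rpow_sub hu0]
          norm_num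
        rw [mul_one, h2]
        have h3 : (0:ℝ) ≤ (t:ℝ) ^ (α - 2) := Real.rpow_nonneg hu0.le _
        nlinarith [mul_nonneg (show (0:ℝ) ≤ (a:ℝ) + b + 1 by linarith) h3]
      refine Summable.of_nonneg_of_le (fun n => hterm_nonneg (n+1))
        (fun n => hbound (n+1) (Nat.le_add_left 1 n)) ?_
      have hs : Summable (fun n : ℕ => ((a:ℝ) + b + 1) * ((n:ℝ) ^ (α - 2))) :=
        (Real.summable_nat_rpow.mpr (by linarith)).mul_left _
      exact (summable_nat_add_iff 1).mpr hs
end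

section
/- For 0 < α < 1/2, in the system of N interacting Pólya urns, the moments x_t = E[|D_t|^{2+ε}] satisfy the recursion x_{t+1} = (1 − α(2+ε)/(m+t+1)) x_t + g(t) with g(t) = O(t^{-2}); consequently, for ε > 0 small enough that α(2+ε) < 1, one has E[|D_t|^{2+ε}] = O(t^{-α(2+ε)}), i.e., sup_t t^{α(2+ε)} E[|D_t|^{2+ε}] < ∞. -/
open Filter Finset MeasureTheory

section auxlemmas
open Real

lemma aux_sq_deriv (x : ℝ) : HasDerivAt (fun y : ℝ => y ^ 2) (2 * x) x := by
  simpa using hasDerivAt_pow 2 x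

-- G x = (x^2)^q, q ≥ 1
lemma aux_hasDerivAt_G {q : ℝ} (hq : 1 ≤ q) (x : ℝ) :
    HasDerivAt (fun y : ℝ => ((y ^ 2 : ℝ)) ^ q) ((2 * q * x) * (x ^ 2) ^ (q - 1)) x := by
  have := (aux_sq_deriv x).rpow_const (p := q) (Or.inr hq)
  convert this using 1; ring

lemma aux_abs_rpow (x p : ℝ) (hp : 0 ≤ p) : |x| ^ p = ((x ^ 2 : ℝ)) ^ (p / 2) := by
  rw [← sq_abs, ← Real.rpow_natCast |x| 2, ← Real.rpow_mul (abs_nonneg x)]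
  norm_num
  rw [mul_div_cancel₀]; norm_num

lemma aux_rpow_cancel {x : ℝ} (hx : x ≠ 0) (e : ℝ) :
    (x ^ 2 : ℝ) ^ (e / 2 - 1) * x ^ 2 = (x ^ 2) ^ (e / 2) := by
  have hx2 : (0:ℝ) < x ^ 2 := by positivity
  calc (x ^ 2 : ℝ) ^ (e / 2 - 1) * x ^ 2
      = (x ^ 2 : ℝ) ^ (e / 2 - 1) * (x ^ 2 : ℝ) ^ (1:ℝ) := by rw [Real.rpow_one]
    _ = (x ^ 2 : ℝ) ^ (e / 2 - 1 + 1) := (Real.rpow_add hx2 _ _).symm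
    _ = (x ^ 2 : ℝ) ^ (e / 2) := by ring_nf

-- H x = x * (x^2)^(e/2) has derivative (1+e)*(x^2)^(e/2)
lemma aux_hasDerivAt_H {e : ℝ} (he : 0 < e) (x : ℝ) :
    HasDerivAt (fun y : ℝ => y * ((y ^ 2 : ℝ)) ^ (e / 2)) ((1 + e) * (x ^ 2) ^ (e / 2)) x := by
  rcases eq_or_ne x 0 with rfl | hx
  · have h0 : ((0:ℝ) ^ 2 : ℝ) ^ (e / 2) = 0 := by
      rw [show ((0:ℝ)^2) = (0:ℝ) by ring, Real.zero_rpow (by positivity)]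
    rw [h0, mul_zero]
    rw [hasDerivAt_iff_tendsto_slope]
    have hcont : Tendsto (fun y : ℝ => ((y ^ 2 : ℝ)) ^ (e / 2)) (nhds 0) (nhds 0) := by
      have h1 : Tendsto (fun z : ℝ => z ^ (e / 2)) (nhds 0) (nhds 0) := by
        have := (Real.continuousAt_rpow_const 0 (e/2) (Or.inr (by positivity))).tendsto
        simpa [Real.zero_rpow (show e/2 ≠ 0 by positivity)] using this
      have h2 : Tendsto (fun y : ℝ => (y ^ 2 : ℝ)) (nhds 0) (nhds (0:ℝ)) := by
        have : Continuous (fun y : ℝ => (y ^ 2 : ℝ)) := by fun_prop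
        simpa using this.tendsto 0
      exact h1.comp h2
    refine (hcont.mono_left nhdsWithin_le_nhds).congr' ?_
    filter_upwards [self_mem_nhdsWithin] with y hy
    simp only [Set.mem_compl_iff, Set.mem_singleton_iff] at hy
    rw [slope_def_field]
    field_simp
    ring
  · have h1 : HasDerivAt (fun y : ℝ => ((y ^ 2 : ℝ)) ^ (e / 2))
        ((2 * x) * (e / 2) * (x ^ 2) ^ (e / 2 - 1)) x :=
      (aux_sq_deriv x).rpow_const (Or.inl (pow_ne_zero 2 hx))
    have h2 := (hasDerivAt_id x).mul h1
    convert h2 using 1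
    show _ = 1 * _ + x * _
    have h3 := aux_rpow_cancel hx e
    nlinarith [h3]
    all_goals rfl

lemma aux_H_lip {e : ℝ} (he : 0 < e) {u v : ℝ} (hu : |u| ≤ 2) (hv : |v| ≤ 2) :
    |v * ((v ^ 2 : ℝ)) ^ (e / 2) - u * ((u ^ 2 : ℝ)) ^ (e / 2)| ≤ ((1 + e) * 2 ^ e) * |v - u| := by
  have key := Convex.norm_image_sub_le_of_norm_hasDerivWithin_le
    (f := fun y : ℝ => y * ((y ^ 2 : ℝ)) ^ (e / 2))
    (f' := fun y : ℝ => (1 + e) * (y ^ 2) ^ (e / 2))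
    (s := Set.Icc (-2 : ℝ) 2) (C := (1 + e) * 2 ^ e)
    (fun x _ => (aux_hasDerivAt_H he x).hasDerivWithinAt)
    (fun x hx => by
      have hx2 : |x| ≤ 2 := abs_le.2 ⟨hx.1, hx.2⟩
      have h1 : ((x ^ 2 : ℝ)) ^ (e / 2) = |x| ^ e := (aux_abs_rpow x e he.le).symm
      have h2 : |x| ^ e ≤ (2:ℝ) ^ e := Real.rpow_le_rpow (abs_nonneg x) hx2 he.le
      have h3 : (0:ℝ) ≤ ((x ^ 2 : ℝ)) ^ (e / 2) := by positivity
      rw [Real.norm_eq_abs, abs_mul, abs_of_nonneg h3, abs_of_pos (by linarith : (0:ℝ) < 1 + e), h1]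
      exact mul_le_mul_of_nonneg_left h2 (by linarith))
    (convex_Icc _ _) (abs_le.1 hu) (abs_le.1 hv)
  simpa [Real.norm_eq_abs] using key

lemma aux_taylor {e : ℝ} (he : 0 < e) {a h : ℝ} (ha : |a| ≤ 1) (hh : |h| ≤ 1) :
    |(((a + h) ^ 2 : ℝ)) ^ ((2 + e) / 2) - ((a ^ 2 : ℝ)) ^ ((2 + e) / 2)
      - (2 + e) * (a * ((a ^ 2 : ℝ)) ^ (e / 2)) * h|
      ≤ ((2 + e) * ((1 + e) * 2 ^ e)) * h ^ 2 := by
  set K : ℝ := (1 + e) * 2 ^ e with hK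
  have hKpos : 0 < K := by positivity
  set φ : ℝ → ℝ := fun u => (((a + u * h) ^ 2 : ℝ)) ^ ((2 + e) / 2)
      - u * ((2 + e) * (a * ((a ^ 2 : ℝ)) ^ (e / 2)) * h) with hφ
  have hq : (1:ℝ) ≤ (2 + e) / 2 := by linarith
  have hGderiv : ∀ x : ℝ, HasDerivAt (fun y : ℝ => ((y ^ 2 : ℝ)) ^ ((2 + e) / 2))
      ((2 + e) * (x * ((x ^ 2 : ℝ)) ^ (e / 2))) x := by
    intro x
    have := aux_hasDerivAt_G hq x
    convert this using 1
    have : (2 + e) / 2 - 1 = e / 2 := by ring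
    rw [this]; ring
  have hφderiv : ∀ u : ℝ, HasDerivAt φ
      ((2 + e) * ((a + u * h) * (((a + u * h) ^ 2 : ℝ)) ^ (e / 2)) * h
        - (2 + e) * (a * ((a ^ 2 : ℝ)) ^ (e / 2)) * h) u := by
    intro u
    have hin : HasDerivAt (fun u : ℝ => a + u * h) h u := by
      have := ((hasDerivAt_id u).const_mul h).const_add a
      have h2 : HasDerivAt (fun u : ℝ => a + h * u) h u := by simpa using this
      have h3 : (fun u : ℝ => a + h * u) = (fun u : ℝ => a + u * h) := by funext u; ring
      rwa [h3] at h2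
    have hcomp := (hGderiv (a + u * h)).comp u hin
    have hlin : HasDerivAt (fun u : ℝ => u * ((2 + e) * (a * ((a ^ 2 : ℝ)) ^ (e / 2)) * h))
        ((2 + e) * (a * ((a ^ 2 : ℝ)) ^ (e / 2)) * h) u := by
      simpa using (hasDerivAt_id u).mul_const ((2 + e) * (a * ((a ^ 2 : ℝ)) ^ (e / 2)) * h)
    have := hcomp.sub hlin
    convert this using 1
    all_goals rfl
  have hbound : ∀ u ∈ Set.Icc (0:ℝ) 1,
      ‖(2 + e) * ((a + u * h) * (((a + u * h) ^ 2 : ℝ)) ^ (e / 2)) * h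
        - (2 + e) * (a * ((a ^ 2 : ℝ)) ^ (e / 2)) * h‖ ≤ ((2 + e) * K) * h ^ 2 := by
    intro u hu
    have hau : |a + u * h| ≤ 2 := by
      have : |u * h| ≤ 1 := by
        rw [abs_mul]
        calc |u| * |h| ≤ 1 * 1 := by
              apply mul_le_mul _ hh (abs_nonneg h) zero_le_one
              rw [abs_of_nonneg hu.1]; exact hu.2
          _ = 1 := by ring
      calc |a + u * h| ≤ |a| + |u * h| := abs_add_le _ _
        _ ≤ 2 := by linarith
    have hlip := aux_H_lip he (u := a) (v := a + u * h) (by linarith [ha]) hau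
    have hul : |u * h| ≤ |h| := by
      rw [abs_mul]
      calc |u| * |h| ≤ 1 * |h| := by
            apply mul_le_mul_of_nonneg_right _ (abs_nonneg h)
            rw [abs_of_nonneg hu.1]; exact hu.2
        _ = |h| := one_mul _
    have hsimp : a + u * h - a = u * h := by ring
    rw [hsimp] at hlip
    rw [Real.norm_eq_abs]
    have step : |(2 + e) * ((a + u * h) * (((a + u * h) ^ 2 : ℝ)) ^ (e / 2)) * h
        - (2 + e) * (a * ((a ^ 2 : ℝ)) ^ (e / 2)) * h|
        = (2 + e) * |((a + u * h) * (((a + u * h) ^ 2 : ℝ)) ^ (e / 2))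
          - (a * ((a ^ 2 : ℝ)) ^ (e / 2))| * |h| := by
      rw [show (2 + e) * ((a + u * h) * (((a + u * h) ^ 2 : ℝ)) ^ (e / 2)) * h
        - (2 + e) * (a * ((a ^ 2 : ℝ)) ^ (e / 2)) * h
        = ((2 + e) * (((a + u * h) * (((a + u * h) ^ 2 : ℝ)) ^ (e / 2))
          - (a * ((a ^ 2 : ℝ)) ^ (e / 2)))) * h from by ring]
      rw [abs_mul, abs_mul, abs_of_pos (by linarith : (0:ℝ) < 2 + e)]
    rw [step]
    have habs2 : |h| * |h| = h ^ 2 := by rw [← abs_mul, abs_mul_self]; ring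
    calc (2 + e) * |((a + u * h) * (((a + u * h) ^ 2 : ℝ)) ^ (e / 2))
          - (a * ((a ^ 2 : ℝ)) ^ (e / 2))| * |h|
        ≤ (2 + e) * (K * |u * h|) * |h| := by
          apply mul_le_mul_of_nonneg_right _ (abs_nonneg h)
          exact mul_le_mul_of_nonneg_left hlip (by linarith)
      _ ≤ (2 + e) * (K * |h|) * |h| := by
          apply mul_le_mul_of_nonneg_right _ (abs_nonneg h)
          apply mul_le_mul_of_nonneg_left _ (by linarith)
          exact mul_le_mul_of_nonneg_left hul hKpos.le
      _ = ((2 + e) * K) * (|h| * |h|) := by ring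
      _ = ((2 + e) * K) * h ^ 2 := by rw [habs2]
  have key := Convex.norm_image_sub_le_of_norm_hasDerivWithin_le
    (f := φ) (s := Set.Icc (0:ℝ) 1) (C := ((2 + e) * K) * h ^ 2)
    (fun u _ => (hφderiv u).hasDerivWithinAt) hbound (convex_Icc _ _)
    (Set.mem_Icc.2 ⟨le_refl 0, zero_le_one⟩) (Set.mem_Icc.2 ⟨zero_le_one, le_refl 1⟩)
  have hφ1 : φ 1 = (((a + h) ^ 2 : ℝ)) ^ ((2 + e) / 2)
      - (2 + e) * (a * ((a ^ 2 : ℝ)) ^ (e / 2)) * h := by simp [hφ]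
  have hφ0 : φ 0 = ((a ^ 2 : ℝ)) ^ ((2 + e) / 2) := by simp [hφ]
  rw [hφ1, hφ0, Real.norm_eq_abs] at key
  calc |(((a + h) ^ 2 : ℝ)) ^ ((2 + e) / 2) - ((a ^ 2 : ℝ)) ^ ((2 + e) / 2)
      - (2 + e) * (a * ((a ^ 2 : ℝ)) ^ (e / 2)) * h|
      = |(((a + h) ^ 2 : ℝ)) ^ ((2 + e) / 2)
        - (2 + e) * (a * ((a ^ 2 : ℝ)) ^ (e / 2)) * h - ((a ^ 2 : ℝ)) ^ ((2 + e) / 2)| := by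
        ring_nf
    _ ≤ ((2 + e) * K) * h ^ 2 * ‖(1:ℝ) - 0‖ := key
    _ = ((2 + e) * ((1 + e) * 2 ^ e)) * h ^ 2 := by simp [hK]

lemma aux_decay (m : ℕ) (hm : 2 ≤ m) (c : ℝ) (hc0 : 0 < c) (hc1 : c < 1)
    (x g : ℕ → ℝ) (hx0 : ∀ t, 0 ≤ x t) (hx1 : ∀ t, x t ≤ 1)
    (Cg : ℝ) (hCg : 0 ≤ Cg) (hg : ∀ t, 1 ≤ t → |g t| ≤ Cg / (t : ℝ) ^ 2)
    (hrec : ∀ t, x (t + 1) = (1 - c / ((m : ℝ) + t + 1)) * x t + g t) :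
    ∃ C : ℝ, ∀ t, 1 ≤ t → x t ≤ C * (t : ℝ) ^ (-c) := by
  set A : ℝ := 2 * Cg with hA
  have hA0 : 0 ≤ A := by positivity
  -- summability facts
  have hsum2 : Summable (fun n : ℕ => 1 / (n : ℝ) ^ 2) := by
    simpa using Real.summable_one_div_nat_pow.mpr one_lt_two
  have hsumc : Summable (fun n : ℕ => (n : ℝ) ^ (c - 2)) :=
    Real.summable_nat_rpow.mpr (by linarith)
  set S2 : ℝ := ∑' n : ℕ, 1 / (n : ℝ) ^ 2 with hS2
  set Sc : ℝ := ∑' n : ℕ, (n : ℝ) ^ (c - 2) with hSc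
  have hSc0 : 0 ≤ Sc := tsum_nonneg fun n => Real.rpow_nonneg (Nat.cast_nonneg n) _
  -- the key one-step inequality for y t := t^c * x t
  set y : ℕ → ℝ := fun t => (t : ℝ) ^ c * x t with hy
  have key : ∀ t : ℕ, 1 ≤ t →
      y (t + 1) ≤ (1 + ((m : ℝ) + 1) / (t : ℝ) ^ 2) * y t + A * (t : ℝ) ^ (c - 2) := by
    intro t ht
    have ht1 : (1 : ℝ) ≤ (t : ℝ) := by exact_mod_cast ht
    have ht0 : (0 : ℝ) < (t : ℝ) := by linarith
    have hm2 : (2 : ℝ) ≤ (m : ℝ) := by exact_mod_cast hm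
    have hs0 : (0 : ℝ) < (m : ℝ) + t + 1 := by linarith
    -- Bernoulli
    have hbern : ((t : ℝ) + 1) ^ c ≤ (t : ℝ) ^ c * (1 + c / t) := by
      have h1 : ((t : ℝ) + 1) = (t : ℝ) * (1 + 1 / t) := by field_simp
      have h2 : ((t : ℝ) * (1 + 1 / t)) ^ c = (t : ℝ) ^ c * (1 + 1 / t) ^ c :=
        Real.mul_rpow ht0.le (by positivity)
      have h3 : (1 + 1 / (t : ℝ)) ^ c ≤ 1 + c * (1 / t) := by
        apply rpow_one_add_le_one_add_mul_self _ hc0.le hc1.le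
        have : (0:ℝ) ≤ 1 / (t:ℝ) := by positivity
        linarith
      rw [h1, h2]
      have h4 : (0:ℝ) ≤ (t : ℝ) ^ c := Real.rpow_nonneg ht0.le _
      calc (t : ℝ) ^ c * (1 + 1 / t) ^ c ≤ (t : ℝ) ^ c * (1 + c * (1 / t)) :=
            mul_le_mul_of_nonneg_left h3 h4
        _ = (t : ℝ) ^ c * (1 + c / t) := by ring
    have htc0 : (0:ℝ) ≤ (t : ℝ) ^ c := Real.rpow_nonneg ht0.le _
    have hfac : (0:ℝ) ≤ 1 - c / ((m : ℝ) + t + 1) := by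
      have h1 : c / ((m : ℝ) + t + 1) ≤ c := by
        rw [div_le_iff₀ hs0]; nlinarith
      linarith
    -- multiplicative factor bound
    have hfac2 : (1 + c / (t:ℝ)) * (1 - c / ((m : ℝ) + t + 1)) ≤ 1 + ((m : ℝ) + 1) / (t : ℝ) ^ 2 := by
      have ht2 : (0:ℝ) < (t:ℝ) ^ 2 := by positivity
      have e1 : (1 + c / (t:ℝ)) * (1 - c / ((m : ℝ) + t + 1))
          = 1 + (c * ((m:ℝ) + 1) - c ^ 2) / ((t:ℝ) * ((m : ℝ) + t + 1)) := by
        field_simp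
        ring
      rw [e1]
      have e2 : (c * ((m:ℝ) + 1) - c ^ 2) / ((t:ℝ) * ((m : ℝ) + t + 1))
          ≤ ((m : ℝ) + 1) / (t : ℝ) ^ 2 := by
        apply div_le_div₀ (by linarith) (by nlinarith) ht2 (by nlinarith)
      linarith
    -- g term bound
    have hgterm : ((t:ℝ) + 1) ^ c * g t ≤ A * (t : ℝ) ^ (c - 2) := by
      have h5 : ((t:ℝ) + 1) ^ c ≤ 2 * (t:ℝ) ^ c := by
        have : c / (t:ℝ) ≤ 1 := by rw [div_le_one ht0]; linarith
        calc ((t:ℝ) + 1) ^ c ≤ (t : ℝ) ^ c * (1 + c / t) := hbern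
          _ ≤ (t : ℝ) ^ c * 2 := mul_le_mul_of_nonneg_left (by linarith) htc0
          _ = 2 * (t:ℝ) ^ c := by ring
      have h6 : g t ≤ Cg / (t : ℝ) ^ 2 := (abs_le.1 (hg t ht)).2
      have h7 : (t : ℝ) ^ c * ((t:ℝ) ^ 2)⁻¹ = (t : ℝ) ^ (c - 2) := by
        rw [← Real.rpow_natCast (t:ℝ) 2, ← Real.rpow_neg ht0.le, ← Real.rpow_add ht0]
        norm_num
        ring_nf
      have h8 : (0:ℝ) ≤ ((t:ℝ) + 1) ^ c := Real.rpow_nonneg (by linarith) _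
      calc ((t:ℝ) + 1) ^ c * g t ≤ ((t:ℝ) + 1) ^ c * (Cg / (t : ℝ) ^ 2) := by
            rcases le_or_gt (g t) (Cg / (t : ℝ) ^ 2) with h | h
            · exact mul_le_mul_of_nonneg_left h6 h8
            · linarith [mul_le_mul_of_nonneg_left h6 h8]
        _ ≤ 2 * (t:ℝ) ^ c * (Cg / (t : ℝ) ^ 2) := by
            apply mul_le_mul_of_nonneg_right h5 (by positivity)
        _ = A * ((t : ℝ) ^ c * ((t:ℝ) ^ 2)⁻¹) := by rw [hA]; ring
        _ = A * (t : ℝ) ^ (c - 2) := by rw [h7]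
    -- assemble
    have hxrec := hrec t
    have hstep : y (t + 1) = ((t:ℝ) + 1) ^ c * ((1 - c / ((m : ℝ) + t + 1)) * x t)
        + ((t:ℝ) + 1) ^ c * g t := by
      simp only [hy, hxrec]
      push_cast
      ring
    rw [hstep]
    have hmain : ((t:ℝ) + 1) ^ c * ((1 - c / ((m : ℝ) + t + 1)) * x t)
        ≤ (1 + ((m : ℝ) + 1) / (t : ℝ) ^ 2) * y t := by
      have hx0t := hx0 t
      calc ((t:ℝ) + 1) ^ c * ((1 - c / ((m : ℝ) + t + 1)) * x t)
          ≤ ((t : ℝ) ^ c * (1 + c / t)) * ((1 - c / ((m : ℝ) + t + 1)) * x t) := by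
            apply mul_le_mul_of_nonneg_right hbern (by positivity)
        _ = ((1 + c / (t:ℝ)) * (1 - c / ((m : ℝ) + t + 1))) * ((t : ℝ) ^ c * x t) := by ring
        _ ≤ (1 + ((m : ℝ) + 1) / (t : ℝ) ^ 2) * ((t : ℝ) ^ c * x t) := by
            apply mul_le_mul_of_nonneg_right hfac2 (by positivity)
        _ = (1 + ((m : ℝ) + 1) / (t : ℝ) ^ 2) * y t := rfl
    linarith
  have hm2' : (2:ℝ) ≤ (m:ℝ) := by exact_mod_cast hm
  -- induction: y t ≤ Π * (y 1 + A * Σ)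
  have hind : ∀ t : ℕ, 1 ≤ t → y t ≤
      (∏ n ∈ Finset.Ico 1 t, (1 + ((m : ℝ) + 1) / (n : ℝ) ^ 2)) *
        (y 1 + A * ∑ n ∈ Finset.Ico 1 t, (n : ℝ) ^ (c - 2)) := by
    intro t ht
    induction t, ht using Nat.le_induction with
    | base => simp [hy, hx0 1, Real.rpow_nonneg]
    | succ t ht ih =>
      have hP1 : (1:ℝ) ≤ ∏ n ∈ Finset.Ico 1 t, (1 + ((m : ℝ) + 1) / (n : ℝ) ^ 2) := by
        have := Finset.prod_le_prod (s := Finset.Ico 1 t)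
          (f := fun _ => (1:ℝ)) (g := fun n : ℕ => 1 + ((m : ℝ) + 1) / (n : ℝ) ^ 2)
          (fun n _ => zero_le_one)
          (fun n _ => by
            have hd : (0:ℝ) ≤ ((m : ℝ) + 1) / (n : ℝ) ^ 2 := by positivity
            linarith)
        simpa using this
      have hr1 : (1:ℝ) ≤ 1 + ((m : ℝ) + 1) / (t : ℝ) ^ 2 := by
        have : (0:ℝ) ≤ ((m : ℝ) + 1) / (t : ℝ) ^ 2 := by positivity
        linarith
      have hy1 : (0:ℝ) ≤ y 1 := mul_nonneg (Real.rpow_nonneg (by norm_num) _) (hx0 1)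
      have hSzero : (0:ℝ) ≤ ∑ n ∈ Finset.Ico 1 t, (n : ℝ) ^ (c - 2) :=
        Finset.sum_nonneg fun n _ => Real.rpow_nonneg (Nat.cast_nonneg n) _
      have hPs : (∏ n ∈ Finset.Ico 1 (t+1), (1 + ((m : ℝ) + 1) / (n : ℝ) ^ 2))
          = (∏ n ∈ Finset.Ico 1 t, (1 + ((m : ℝ) + 1) / (n : ℝ) ^ 2))
            * (1 + ((m : ℝ) + 1) / (t : ℝ) ^ 2) :=
        Finset.prod_Ico_succ_top ht _
      have hSs : (∑ n ∈ Finset.Ico 1 (t+1), (n : ℝ) ^ (c - 2))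
          = (∑ n ∈ Finset.Ico 1 t, (n : ℝ) ^ (c - 2)) + (t : ℝ) ^ (c - 2) :=
        Finset.sum_Ico_succ_top ht _
      have htc2 : (0:ℝ) ≤ (t : ℝ) ^ (c - 2) := Real.rpow_nonneg (Nat.cast_nonneg t) _
      calc y (t + 1) ≤ (1 + ((m : ℝ) + 1) / (t : ℝ) ^ 2) * y t + A * (t : ℝ) ^ (c - 2) :=
            key t ht
        _ ≤ (1 + ((m : ℝ) + 1) / (t : ℝ) ^ 2) *
              ((∏ n ∈ Finset.Ico 1 t, (1 + ((m : ℝ) + 1) / (n : ℝ) ^ 2)) *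
                (y 1 + A * ∑ n ∈ Finset.Ico 1 t, (n : ℝ) ^ (c - 2)))
              + A * (t : ℝ) ^ (c - 2) := by
            have := mul_le_mul_of_nonneg_left ih (le_trans zero_le_one hr1)
            linarith
        _ ≤ (∏ n ∈ Finset.Ico 1 (t+1), (1 + ((m : ℝ) + 1) / (n : ℝ) ^ 2)) *
              (y 1 + A * ∑ n ∈ Finset.Ico 1 (t+1), (n : ℝ) ^ (c - 2)) := by
            rw [hPs, hSs]
            have hPr : (1:ℝ) ≤ (∏ n ∈ Finset.Ico 1 t, (1 + ((m : ℝ) + 1) / (n : ℝ) ^ 2))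
                * (1 + ((m : ℝ) + 1) / (t : ℝ) ^ 2) := le_trans hP1
                (le_mul_of_one_le_right (by linarith) hr1)
            have h9 : A * (t : ℝ) ^ (c - 2)
                ≤ ((∏ n ∈ Finset.Ico 1 t, (1 + ((m : ℝ) + 1) / (n : ℝ) ^ 2))
                  * (1 + ((m : ℝ) + 1) / (t : ℝ) ^ 2)) * (A * (t : ℝ) ^ (c - 2)) :=
              le_mul_of_one_le_left (by positivity) hPr
            nlinarith [mul_nonneg hA0 htc2, mul_nonneg hy1 hSzero]
        
  -- uniform bounds on the product and sum
  have hPbd : ∀ t : ℕ, (∏ n ∈ Finset.Ico 1 t, (1 + ((m : ℝ) + 1) / (n : ℝ) ^ 2))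
      ≤ Real.exp (((m:ℝ) + 1) * S2) := by
    intro t
    calc (∏ n ∈ Finset.Ico 1 t, (1 + ((m : ℝ) + 1) / (n : ℝ) ^ 2))
        ≤ ∏ n ∈ Finset.Ico 1 t, Real.exp (((m : ℝ) + 1) / (n : ℝ) ^ 2) := by
          apply Finset.prod_le_prod
          · intro n _; positivity
          · intro n _
            have := Real.add_one_le_exp (((m : ℝ) + 1) / (n : ℝ) ^ 2)
            linarith
      _ = Real.exp (∑ n ∈ Finset.Ico 1 t, ((m : ℝ) + 1) / (n : ℝ) ^ 2) := (Real.exp_sum _ _).symm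
      _ ≤ Real.exp (((m:ℝ) + 1) * S2) := by
          apply Real.exp_le_exp.2
          have : (∑ n ∈ Finset.Ico 1 t, ((m : ℝ) + 1) / (n : ℝ) ^ 2)
              = ((m:ℝ) + 1) * ∑ n ∈ Finset.Ico 1 t, 1 / (n : ℝ) ^ 2 := by
            rw [Finset.mul_sum]; congr 1; funext n; ring
          rw [this]
          apply mul_le_mul_of_nonneg_left _ (by positivity)
          exact Summable.sum_le_tsum _ (fun n _ => by positivity) hsum2
  have hSbd : ∀ t : ℕ, (∑ n ∈ Finset.Ico 1 t, (n : ℝ) ^ (c - 2)) ≤ Sc := by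
    intro t
    exact Summable.sum_le_tsum _ (fun n _ => Real.rpow_nonneg (Nat.cast_nonneg n) _) hsumc
  -- conclude
  refine ⟨Real.exp (((m:ℝ) + 1) * S2) * (1 + A * Sc), ?_⟩
  intro t ht
  have ht0 : (0:ℝ) < (t:ℝ) := by exact_mod_cast Nat.lt_of_lt_of_le Nat.zero_lt_one ht
  have hy1le : y 1 ≤ 1 := by
    simp only [hy]
    simpa using hx1 1
  have hybd : y t ≤ Real.exp (((m:ℝ) + 1) * S2) * (1 + A * Sc) := by
    calc y t ≤ (∏ n ∈ Finset.Ico 1 t, (1 + ((m : ℝ) + 1) / (n : ℝ) ^ 2)) *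
          (y 1 + A * ∑ n ∈ Finset.Ico 1 t, (n : ℝ) ^ (c - 2)) := hind t ht
      _ ≤ Real.exp (((m:ℝ) + 1) * S2) * (1 + A * Sc) := by
          apply mul_le_mul (hPbd t) _ _ (Real.exp_nonneg _)
          · have h1 := hSbd t
            have := mul_le_mul_of_nonneg_left h1 hA0
            linarith
          · have hy1 : (0:ℝ) ≤ y 1 := mul_nonneg (Real.rpow_nonneg (by norm_num) _) (hx0 1)
            have : (0:ℝ) ≤ A * ∑ n ∈ Finset.Ico 1 t, (n : ℝ) ^ (c - 2) :=
              mul_nonneg hA0 (Finset.sum_nonneg fun n _ => Real.rpow_nonneg (Nat.cast_nonneg n) _)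
            linarith
  -- from y t ≤ B deduce x t ≤ B * t^(-c)
  have hxt : x t = y t * (t:ℝ) ^ (-c) := by
    simp only [hy]
    rw [mul_comm ((t:ℝ) ^ c) (x t), mul_assoc, ← Real.rpow_add ht0]
    simp
  rw [hxt]
  apply mul_le_mul_of_nonneg_right hybd (Real.rpow_nonneg ht0.le _)


lemma aux_int {Ω : Type*} {m0 : MeasurableSpace Ω} {P : Measure Ω} [IsProbabilityMeasure P]
    {f : Ω → ℝ} (hf : AEStronglyMeasurable f P) (C : ℝ) (h : ∀ ω, |f ω| ≤ C) :
    Integrable f P :=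
  Integrable.mono' (integrable_const C) hf
    (Filter.Eventually.of_forall (by simpa [Real.norm_eq_abs] using h))

lemma aux_Hx_mul (e : ℝ) (he : 0 < e) (x : ℝ) :
    (x * ((x ^ 2 : ℝ)) ^ (e / 2)) * x = ((x ^ 2 : ℝ)) ^ ((2 + e) / 2) := by
  have h1 : ((x ^ 2 : ℝ)) ^ ((2 + e) / 2) = (x ^ 2 : ℝ) ^ ((1:ℝ) + e / 2) := by ring_nf
  rw [h1, Real.rpow_add' (sq_nonneg x) (by positivity), Real.rpow_one]
  ring

lemma aux_step {Ω : Type*} {m0 : MeasurableSpace Ω} (P : Measure Ω) [IsProbabilityMeasure P]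
    {F : MeasurableSpace Ω} (hF : F ≤ m0)
    (e α b : ℝ) (he : 0 < e) (hb : 0 < b) (hb3 : b ≤ 1 / 3) (hα : 0 < α) (hα1 : α < 1)
    (Dt Dt1 ξ : Ω → ℝ)
    (hDtm : StronglyMeasurable[F] Dt)
    (hDt1m : AEStronglyMeasurable[m0] Dt1 P)
    (hξm : AEStronglyMeasurable[m0] ξ P)
    (hDbd : ∀ ω, |Dt ω| ≤ 1) (hξbd : ∀ ω, |ξ ω| ≤ 1)
    (hrec : ∀ ω, Dt1 ω = Dt ω + b * (ξ ω - Dt ω))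
    (hcond : P[ξ|F] =ᵐ[P] fun ω => (1 - α) * Dt ω) :
    |(∫ ω, ((Dt1 ω ^ 2 : ℝ)) ^ ((2 + e) / 2) ∂P)
      - (1 - α * (2 + e) * b) * ∫ ω, ((Dt ω ^ 2 : ℝ)) ^ ((2 + e) / 2) ∂P|
      ≤ (4 * ((2 + e) * ((1 + e) * 2 ^ e))) * b ^ 2 := by
  set L : ℝ := (2 + e) * ((1 + e) * 2 ^ e) with hL
  have hLpos : 0 < L := by positivity
  set G : ℝ → ℝ := fun x => ((x ^ 2 : ℝ)) ^ ((2 + e) / 2) with hG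
  set Hf : ℝ → ℝ := fun x => x * ((x ^ 2 : ℝ)) ^ (e / 2) with hHf
  have hGcont : Continuous G := by
    rw [continuous_iff_continuousAt]
    exact fun x => (aux_hasDerivAt_G (by linarith : (1:ℝ) ≤ (2 + e)/2) x).continuousAt
  have hHcont : Continuous Hf := by
    rw [continuous_iff_continuousAt]
    exact fun x => (aux_hasDerivAt_H he x).continuousAt
  -- bounds
  have hG1 : ∀ x : ℝ, |x| ≤ 1 → |G x| ≤ 1 := by
    intro x hx
    have h0 : (0:ℝ) ≤ G x := Real.rpow_nonneg (sq_nonneg x) _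
    rw [abs_of_nonneg h0, hG]
    apply Real.rpow_le_one (sq_nonneg x) _ (by positivity)
    nlinarith [abs_nonneg x, sq_abs x]
  have hH1 : ∀ x : ℝ, |x| ≤ 1 → |Hf x| ≤ 1 := by
    intro x hx
    have h2 : ((x ^ 2 : ℝ)) ^ (e / 2) = |x| ^ e := (aux_abs_rpow x e he.le).symm
    rw [hHf]
    simp only []
    rw [abs_mul, h2, abs_of_nonneg (Real.rpow_nonneg (abs_nonneg x) e)]
    have h3 : |x| ^ e ≤ 1 := Real.rpow_le_one (abs_nonneg x) hx he.le
    nlinarith [abs_nonneg x, Real.rpow_nonneg (abs_nonneg x) e]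
  have hDt1bd : ∀ ω, |Dt1 ω| ≤ 2 := by
    intro ω
    rw [hrec ω]
    have h1 : |b * (ξ ω - Dt ω)| ≤ 1 := by
      rw [abs_mul, abs_of_pos hb]
      have h1 := abs_le.1 (hξbd ω); have h2 := abs_le.1 (hDbd ω)
      have : |ξ ω - Dt ω| ≤ 2 := abs_le.2 ⟨by linarith [h1.1, h2.2], by linarith [h1.2, h2.1]⟩
      nlinarith
    calc |Dt ω + b * (ξ ω - Dt ω)| ≤ |Dt ω| + |b * (ξ ω - Dt ω)| := abs_add_le _ _
      _ ≤ 2 := by linarith [hDbd ω]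
  -- remainder
  set R : Ω → ℝ := fun ω => G (Dt1 ω) - G (Dt ω)
      - (2 + e) * Hf (Dt ω) * (b * (ξ ω - Dt ω)) with hR
  have hRbd : ∀ ω, |R ω| ≤ 4 * L * b ^ 2 := by
    intro ω
    have h1 := abs_le.1 (hξbd ω); have h2' := abs_le.1 (hDbd ω)
    have hd2 : |ξ ω - Dt ω| ≤ 2 :=
      abs_le.2 ⟨by linarith [h1.1, h2'.2], by linarith [h1.2, h2'.1]⟩
    have hh : |b * (ξ ω - Dt ω)| ≤ 1 := by
      rw [abs_mul, abs_of_pos hb]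
      nlinarith
    have htay := aux_taylor he (hDbd ω) hh
    rw [← hrec ω] at htay
    have h2 : (b * (ξ ω - Dt ω)) ^ 2 ≤ 4 * b ^ 2 := by
      have := mul_self_le_mul_self (abs_nonneg (ξ ω - Dt ω)) hd2
      nlinarith [sq_abs (ξ ω - Dt ω), sq_nonneg b]
    have e1 : R ω = ((Dt1 ω ^ 2 : ℝ)) ^ ((2 + e) / 2) - ((Dt ω ^ 2 : ℝ)) ^ ((2 + e) / 2)
        - (2 + e) * (Dt ω * ((Dt ω ^ 2 : ℝ)) ^ (e / 2)) * (b * (ξ ω - Dt ω)) := by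
      simp only [hR, hG, hHf]
    have h4 : |R ω| ≤ L * (b * (ξ ω - Dt ω)) ^ 2 := by
      rw [e1, hL]
      exact htay
    have h3 : L * (b * (ξ ω - Dt ω)) ^ 2 ≤ L * (4 * b ^ 2) :=
      mul_le_mul_of_nonneg_left h2 hLpos.le
    calc |R ω| ≤ L * (b * (ξ ω - Dt ω)) ^ 2 := h4
      _ ≤ 4 * L * b ^ 2 := by linarith
  -- measurability and integrability
  have hDtm0 : AEStronglyMeasurable[m0] Dt P := (hDtm.mono hF).aestronglyMeasurable
  have hGDt1m : AEStronglyMeasurable[m0] (fun ω => G (Dt1 ω)) P :=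
    hGcont.comp_aestronglyMeasurable hDt1m
  have hGDtm : AEStronglyMeasurable[m0] (fun ω => G (Dt ω)) P :=
    hGcont.comp_aestronglyMeasurable hDtm0
  have hGbd2 : ∀ x : ℝ, |x| ≤ 2 → |G x| ≤ (4:ℝ) ^ ((2 + e)/2) := by
    intro x hx
    have h0 : (0:ℝ) ≤ G x := Real.rpow_nonneg (sq_nonneg x) _
    rw [abs_of_nonneg h0, hG]
    apply Real.rpow_le_rpow (sq_nonneg x) _ (by positivity)
    nlinarith [abs_nonneg x, sq_abs x]
  have hGDt1int : Integrable (fun ω => G (Dt1 ω)) P :=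
    aux_int hGDt1m _ (fun ω => hGbd2 _ (hDt1bd ω))
  have hGDtint : Integrable (fun ω => G (Dt ω)) P :=
    aux_int hGDtm 1 (fun ω => hG1 _ (hDbd ω))
  have hφm : StronglyMeasurable[F] (fun ω => Hf (Dt ω)) := hHcont.comp_stronglyMeasurable hDtm
  have hφm0 : AEStronglyMeasurable[m0] (fun ω => Hf (Dt ω)) P := (hφm.mono hF).aestronglyMeasurable
  have hφbd : ∀ ω, |Hf (Dt ω)| ≤ 1 := fun ω => hH1 _ (hDbd ω)
  have hξint : Integrable ξ P := aux_int hξm 1 hξbd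
  have habsmul : ∀ (u v : ℝ), |u| ≤ 1 → |v| ≤ 1 → |u * v| ≤ 1 := by
    intro u v hu hv
    rw [abs_mul]
    nlinarith [abs_nonneg u, abs_nonneg v]
  have hφξint : Integrable (fun ω => Hf (Dt ω) * ξ ω) P :=
    aux_int (hφm0.mul hξm) 1 (fun ω => habsmul _ _ (hφbd ω) (hξbd ω))
  have hφDint : Integrable (fun ω => Hf (Dt ω) * Dt ω) P :=
    aux_int (hφm0.mul hDtm0) 1 (fun ω => habsmul _ _ (hφbd ω) (hDbd ω))
  have hRm : AEStronglyMeasurable[m0] R P := by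
    rw [hR]
    exact (hGDt1m.sub hGDtm).sub
      (((hφm0.const_mul (2 + e)).mul ((hξm.sub hDtm0).const_mul b)))
  have hRint : Integrable R P := aux_int hRm _ hRbd
  -- pointwise decomposition
  have hdecomp : (fun ω => G (Dt1 ω)) = fun ω => (G (Dt ω)
      + (((2 + e) * b) * (Hf (Dt ω) * ξ ω) - ((2 + e) * b) * (Hf (Dt ω) * Dt ω))) + R ω := by
    funext ω
    simp only [hR]
    ring
  -- conditional expectation step
  have hmul : P[fun ω => Hf (Dt ω) * ξ ω|F] =ᵐ[P] (fun ω => Hf (Dt ω)) * P[ξ|F] :=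
    condExp_stronglyMeasurable_mul_of_bound hF hφm hξint 1
      (Filter.Eventually.of_forall (fun ω => by
        simpa [Real.norm_eq_abs] using hφbd ω))
  have hint1 : ∫ ω, Hf (Dt ω) * ξ ω ∂P = (1 - α) * ∫ ω, Hf (Dt ω) * Dt ω ∂P := by
    have e2 : ∫ ω, Hf (Dt ω) * ξ ω ∂P = ∫ ω, (P[fun ω => Hf (Dt ω) * ξ ω|F]) ω ∂P :=
      (integral_condExp hF).symm
    have e3 : ∫ ω, (P[fun ω => Hf (Dt ω) * ξ ω|F]) ω ∂P
        = ∫ ω, Hf (Dt ω) * (P[ξ|F]) ω ∂P := integral_congr_ae hmul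
    have e4 : ∫ ω, Hf (Dt ω) * (P[ξ|F]) ω ∂P
        = ∫ ω, Hf (Dt ω) * ((1 - α) * Dt ω) ∂P := by
      apply integral_congr_ae
      filter_upwards [hcond] with ω hω
      rw [hω]
    rw [e2, e3, e4]
    rw [← integral_const_mul]
    congr 1
    funext ω
    ring
  -- Hf x * x = G x
  have hHxG : ∀ ω, Hf (Dt ω) * Dt ω = G (Dt ω) := fun ω => aux_Hx_mul e he (Dt ω)
  have hint2 : ∫ ω, Hf (Dt ω) * Dt ω ∂P = ∫ ω, G (Dt ω) ∂P := by
    apply integral_congr_ae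
    exact Filter.Eventually.of_forall (fun ω => hHxG ω)
  -- main identity
  have i1 : Integrable (fun ω => ((2 + e) * b) * (Hf (Dt ω) * ξ ω)) P := hφξint.const_mul _
  have i2 : Integrable (fun ω => ((2 + e) * b) * (Hf (Dt ω) * Dt ω)) P := hφDint.const_mul _
  have i3 : Integrable (fun ω => ((2 + e) * b) * (Hf (Dt ω) * ξ ω)
      - ((2 + e) * b) * (Hf (Dt ω) * Dt ω)) P := i1.sub i2
  have i4 : Integrable (fun ω => G (Dt ω) + (((2 + e) * b) * (Hf (Dt ω) * ξ ω)
      - ((2 + e) * b) * (Hf (Dt ω) * Dt ω))) P := hGDtint.add i3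
  have hmain : ∫ ω, G (Dt1 ω) ∂P
      = (1 - α * (2 + e) * b) * (∫ ω, G (Dt ω) ∂P) + ∫ ω, R ω ∂P := by
    have e5 : ∫ ω, G (Dt1 ω) ∂P
        = ∫ ω, ((G (Dt ω) + (((2 + e) * b) * (Hf (Dt ω) * ξ ω)
          - ((2 + e) * b) * (Hf (Dt ω) * Dt ω))) + R ω) ∂P := by
      apply integral_congr_ae
      apply Filter.Eventually.of_forall
      intro ω
      simp only [hR]
      ring
    rw [e5, integral_add i4 hRint, integral_add hGDtint i3, integral_sub i1 i2,
      integral_const_mul, integral_const_mul, hint1, hint2]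
    ring
  rw [hmain]
  have hfin : |(1 - α * (2 + e) * b) * (∫ ω, G (Dt ω) ∂P) + (∫ ω, R ω ∂P)
      - (1 - α * (2 + e) * b) * ∫ ω, G (Dt ω) ∂P| = |∫ ω, R ω ∂P| := by
    congr 1
    ring
  rw [hfin]
  have := norm_integral_le_of_norm_le_const (μ := P) (f := R) (C := 4 * L * b ^ 2)
    (Filter.Eventually.of_forall (fun ω => by simpa [Real.norm_eq_abs] using hRbd ω))
  simpa [Real.norm_eq_abs, hL] using this
end auxlemmas

/-- For `0 < α < 1/2`, the moments `x_t = E[|D_t|^{2+ε}]` satisfy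
`x_{t+1} = (1 - α(2+ε)/(m+t+1)) x_t + g(t)` with `g(t) = O(t^{-2})`; consequently, for
`ε > 0` with `α(2+ε) < 1`, `E[|D_t|^{2+ε}] = O(t^{-α(2+ε)})`. -/
theorem stmt_10 {Ω : Type*} [m0 : MeasurableSpace Ω] (P : Measure Ω) [IsProbabilityMeasure P]
    (N : ℕ) (hN : 1 < N) (m : ℕ) (hm : 2 ≤ m)
    (α : ℝ) (hα0 : 0 < α) (hα12 : α < 1 / 2)
    (ℱ : ℕ → MeasurableSpace Ω) (hℱle : ∀ t, ℱ t ≤ m0) (hℱmono : Monotone ℱ)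
    (I : ℕ → Fin N → Ω → ℝ) (D : ℕ → Ω → ℝ) (j : Fin N)
    (hI01 : ∀ t i ω, I (t + 1) i ω = 0 ∨ I (t + 1) i ω = 1)
    (hImeas : ∀ t i, StronglyMeasurable[ℱ (t + 1)] (I (t + 1) i))
    (hDmeas : ∀ t, StronglyMeasurable[ℱ t] (D t))
    (hDbd : ∀ t ω, |D t ω| ≤ 1)
    -- recursion for the discrepancy D_t = Z_t(j) - Z̄_t
    (hDrec : ∀ t ω, D (t + 1) ω = (((m : ℝ) + t) / ((m : ℝ) + t + 1)) * D t ω +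
      (1 / ((m : ℝ) + t + 1)) * (I (t + 1) j ω - (∑ i, I (t + 1) i ω) / N))
    -- conditional mean of the innovation
    (hcond : ∀ t, P[fun ω => I (t + 1) j ω - (∑ i, I (t + 1) i ω) / N|ℱ t] =ᵐ[P]
      fun ω => (1 - α) * D t ω)
    (ε : ℝ) (hε : 0 < ε) (hαε : α * (2 + ε) < 1) :
    (∃ g : ℕ → ℝ,
        (∃ C : ℝ, ∀ t : ℕ, 1 ≤ t → |g t| ≤ C / (t : ℝ) ^ 2) ∧
          ∀ t : ℕ, ∫ ω, |D (t + 1) ω| ^ (2 + ε) ∂P =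
            (1 - α * (2 + ε) / ((m : ℝ) + t + 1)) * ∫ ω, |D t ω| ^ (2 + ε) ∂P + g t) ∧
      ∃ C : ℝ, ∀ t : ℕ, 1 ≤ t →
        ∫ ω, |D t ω| ^ (2 + ε) ∂P ≤ C * (t : ℝ) ^ (-(α * (2 + ε))) := by
  classical
  have hα1 : α < 1 := by linarith
  set c : ℝ := α * (2 + ε) with hc
  have hc0 : 0 < c := by positivity
  have hc1 : c < 1 := hαε
  set q : ℝ := (2 + ε) / 2 with hq
  set CL : ℝ := 4 * ((2 + ε) * ((1 + ε) * 2 ^ ε)) with hCL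
  have hCL0 : 0 < CL := by positivity
  -- the moments expressed through squares
  set x : ℕ → ℝ := fun t => ∫ ω, ((D t ω ^ 2 : ℝ)) ^ ((2 + ε) / 2) ∂P with hx
  have hxeq : ∀ t, (∫ ω, |D t ω| ^ (2 + ε) ∂P) = x t := by
    intro t
    apply integral_congr_ae
    exact Filter.Eventually.of_forall fun ω => aux_abs_rpow _ _ (by positivity)
  have hGcont : Continuous (fun y : ℝ => ((y ^ 2 : ℝ)) ^ ((2 + ε) / 2)) := by
    rw [continuous_iff_continuousAt]
    exact fun z => (aux_hasDerivAt_G (by linarith : (1:ℝ) ≤ (2 + ε) / 2) z).continuousAt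
  have hDm0 : ∀ t, AEStronglyMeasurable (D t) P :=
    fun t => ((hDmeas t).mono (hℱle t)).aestronglyMeasurable
  have hint : ∀ t, Integrable (fun ω => ((D t ω ^ 2 : ℝ)) ^ ((2 + ε) / 2)) P := by
    intro t
    apply aux_int (hGcont.comp_aestronglyMeasurable (hDm0 t)) 1
    intro ω
    have h0 : (0:ℝ) ≤ ((D t ω ^ 2 : ℝ)) ^ ((2 + ε) / 2) := Real.rpow_nonneg (sq_nonneg _) _
    rw [abs_of_nonneg h0]
    apply Real.rpow_le_one (sq_nonneg _) _ (by positivity)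
    nlinarith [hDbd t ω, abs_nonneg (D t ω), sq_abs (D t ω)]
  have hx0 : ∀ t, 0 ≤ x t :=
    fun t => integral_nonneg fun ω => Real.rpow_nonneg (sq_nonneg _) _
  have hx1 : ∀ t, x t ≤ 1 := by
    intro t
    have h1 : ∀ ω, ((D t ω ^ 2 : ℝ)) ^ ((2 + ε) / 2) ≤ 1 := by
      intro ω
      apply Real.rpow_le_one (sq_nonneg _) _ (by positivity)
      nlinarith [hDbd t ω, abs_nonneg (D t ω), sq_abs (D t ω)]
    calc x t ≤ ∫ _ω, (1:ℝ) ∂P := integral_mono (hint t) (integrable_const 1) h1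
      _ = 1 := by simp
  -- one-step estimate
  have hstep : ∀ t : ℕ,
      |x (t + 1) - (1 - α * (2 + ε) * (1 / ((m : ℝ) + t + 1))) * x t|
        ≤ CL * (1 / ((m : ℝ) + t + 1)) ^ 2 := by
    intro t
    have hmt : (0:ℝ) < (m : ℝ) + t + 1 := by positivity
    have hm3 : (3:ℝ) ≤ (m : ℝ) + t + 1 := by
      have : (2:ℝ) ≤ (m : ℝ) := by exact_mod_cast hm
      have : (0:ℝ) ≤ (t : ℝ) := Nat.cast_nonneg t
      linarith
    have hb : (0:ℝ) < 1 / ((m : ℝ) + t + 1) := by positivity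
    have hb3 : 1 / ((m : ℝ) + t + 1) ≤ 1 / 3 := by
      apply one_div_le_one_div_of_le (by norm_num) hm3
    -- the innovation
    set ξ : Ω → ℝ := fun ω => I (t + 1) j ω - (∑ i, I (t + 1) i ω) / N with hξ
    have hξm : AEStronglyMeasurable ξ P := by
      have hsm : StronglyMeasurable[ℱ (t + 1)] (fun ω => ∑ i, I (t + 1) i ω) :=
        Finset.stronglyMeasurable_fun_sum Finset.univ (fun i _ => hImeas t i)
      have : StronglyMeasurable[ℱ (t + 1)] ξ := by
        rw [hξ]
        have e0 : (fun ω => I (t + 1) j ω - (∑ i, I (t + 1) i ω) / N)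
            = fun ω => I (t + 1) j ω - (∑ i, I (t + 1) i ω) * ((N:ℝ))⁻¹ := by
          funext ω; rw [div_eq_mul_inv]
        rw [e0]
        exact (hImeas t j).sub (hsm.mul_const _)
      exact (this.mono (hℱle (t + 1))).aestronglyMeasurable
    have hξbd : ∀ ω, |ξ ω| ≤ 1 := by
      intro ω
      have hNpos : 0 < N := by omega
      have hN0 : (0:ℝ) < (N : ℝ) := by exact_mod_cast hNpos
      have hj : 0 ≤ I (t + 1) j ω ∧ I (t + 1) j ω ≤ 1 := by
        rcases hI01 t j ω with h | h <;> rw [h] <;> norm_num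
      have hsumlb : (0:ℝ) ≤ ∑ i, I (t + 1) i ω :=
        Finset.sum_nonneg fun i _ => by rcases hI01 t i ω with h | h <;> rw [h] <;> norm_num
      have hsumub : (∑ i, I (t + 1) i ω) ≤ (N : ℝ) := by
        calc (∑ i, I (t + 1) i ω) ≤ ∑ _i : Fin N, (1:ℝ) := by
              apply Finset.sum_le_sum
              intro i _
              rcases hI01 t i ω with h | h <;> rw [h] <;> norm_num
          _ = (N : ℝ) := by simp
      have havg : 0 ≤ (∑ i, I (t + 1) i ω) / N ∧ (∑ i, I (t + 1) i ω) / N ≤ 1 := by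
        constructor
        · positivity
        · rw [div_le_one hN0]; exact hsumub
      rw [hξ]
      rw [abs_le]
      constructor
      · simp only []
        linarith [hj.1, havg.2]
      · simp only []
        linarith [hj.2, havg.1]
    have hrec' : ∀ ω, D (t + 1) ω = D t ω + (1 / ((m : ℝ) + t + 1)) * (ξ ω - D t ω) := by
      intro ω
      rw [hDrec t ω, hξ]
      field_simp
      ring
    have := aux_step P (hℱle t) ε α (1 / ((m : ℝ) + t + 1)) hε hb hb3 hα0 hα1
      (D t) (D (t + 1)) ξ (hDmeas t) (hDm0 (t + 1)) hξm (hDbd t) hξbd hrec' (hcond t)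
    simpa [hx, hCL] using this
  -- define g
  set g : ℕ → ℝ := fun t => x (t + 1) - (1 - α * (2 + ε) / ((m : ℝ) + t + 1)) * x t with hg
  have hgbd : ∀ t : ℕ, 1 ≤ t → |g t| ≤ CL / (t : ℝ) ^ 2 := by
    intro t ht
    have ht0 : (0:ℝ) < (t : ℝ) := by exact_mod_cast ht
    have hmt : (0:ℝ) < (m : ℝ) + t + 1 := by positivity
    have h1 : α * (2 + ε) * (1 / ((m : ℝ) + t + 1)) = α * (2 + ε) / ((m : ℝ) + t + 1) := by
      ring
    have h2 := hstep t
    rw [h1] at h2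
    have h3 : |g t| ≤ CL * (1 / ((m : ℝ) + t + 1)) ^ 2 := by
      rw [hg]; exact h2
    have h4 : (1 / ((m : ℝ) + t + 1)) ^ 2 ≤ 1 / (t : ℝ) ^ 2 := by
      have h5 : (t : ℝ) ≤ (m : ℝ) + t + 1 := by
        have : (0:ℝ) ≤ (m : ℝ) := Nat.cast_nonneg m
        linarith
      have h6 : 1 / ((m : ℝ) + t + 1) ≤ 1 / (t : ℝ) := one_div_le_one_div_of_le ht0 h5
      have h7 : (0:ℝ) ≤ 1 / ((m : ℝ) + t + 1) := by positivity
      calc (1 / ((m : ℝ) + t + 1)) ^ 2 ≤ (1 / (t : ℝ)) ^ 2 := by nlinarith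
        _ = 1 / (t : ℝ) ^ 2 := by rw [div_pow, one_pow]
    calc |g t| ≤ CL * (1 / ((m : ℝ) + t + 1)) ^ 2 := h3
      _ ≤ CL * (1 / (t : ℝ) ^ 2) := mul_le_mul_of_nonneg_left h4 hCL0.le
      _ = CL / (t : ℝ) ^ 2 := by ring
  have hxrec : ∀ t : ℕ, x (t + 1) = (1 - α * (2 + ε) / ((m : ℝ) + t + 1)) * x t + g t := by
    intro t
    rw [hg]
    ring
  constructor
  · refine ⟨g, ⟨CL, hgbd⟩, ?_⟩
    intro t
    rw [hxeq (t + 1), hxeq t]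
    exact hxrec t
  · obtain ⟨C, hC⟩ := aux_decay m hm c hc0 hc1 x g hx0 hx1 CL hCL0.le hgbd
      (by intro t; rw [hxrec t, hc])
    refine ⟨C, ?_⟩
    intro t ht
    rw [hxeq t]
    exact hC t ht
end

section
/- For 0 < α < 1/2, the sequence t^α (Z_t(j) − Z_t) converges almost surely and in L¹ to a real random variable D̃ with P(D̃ ≠ 0) > 0. -/
open Filter Finset MeasureTheory Topology
open scoped ENNReal NNReal

set_option maxHeartbeats 1600000


noncomputable def urnC (β α : ℝ) : ℕ → ℝ
  | 0 => 1
  | t + 1 => urnC β α t * ((β + t + 1) / (β + t + 1 - α))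

lemma urnC_pos {β α : ℝ} (hα0 : 0 < α) (hα1 : α < 1) (hβ : 2 ≤ β) (t : ℕ) :
    0 < urnC β α t := by
  induction t with
  | zero => norm_num [urnC]
  | succ t ih =>
    have h1 : (0:ℝ) < β + t + 1 := by positivity
    have h2 : (0:ℝ) < β + t + 1 - α := by nlinarith [Nat.cast_nonneg (α := ℝ) t]
    exact mul_pos ih (div_pos h1 h2)

lemma urnC_log {β α : ℝ} (hα0 : 0 < α) (hα1 : α < 1) (hβ : 2 ≤ β) (t : ℕ) :
    Real.log (urnC β α t)
      = ∑ s ∈ range t, (Real.log (β + s + 1) - Real.log (β + s + 1 - α)) := by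
  induction t with
  | zero => simp [urnC]
  | succ t ih =>
    have h1 : (0:ℝ) < β + t + 1 := by positivity
    have h2 : (0:ℝ) < β + t + 1 - α := by nlinarith [Nat.cast_nonneg (α := ℝ) t]
    rw [Finset.sum_range_succ, ← ih, urnC,
      Real.log_mul (urnC_pos hα0 hα1 hβ t).ne' (by positivity),
      Real.log_div h1.ne' h2.ne']

lemma urnC_term_bound {β α : ℝ} (hα0 : 0 < α) (hα1 : α < 1) (hβ : 2 ≤ β) (s : ℕ) :
    |(Real.log (β + s + 1) - Real.log (β + s + 1 - α)) - α * ((s:ℝ) + 1)⁻¹|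
      ≤ α * β * (((s:ℝ) + 1) ^ 2)⁻¹ := by
  have hs : (0:ℝ) ≤ s := Nat.cast_nonneg s
  set x : ℝ := β + s + 1 with hx
  have hx1 : (s:ℝ) + 1 ≤ x - α := by simp only [hx]; nlinarith
  have hxpos : (0:ℝ) < x := by simp only [hx]; nlinarith
  have hxa : (0:ℝ) < x - α := by nlinarith
  have hs1 : (0:ℝ) < (s:ℝ) + 1 := by nlinarith
  -- log bounds
  have hup : Real.log x - Real.log (x - α) ≤ α / (x - α) := by
    have := Real.log_le_sub_one_of_pos (x := x / (x - α)) (by positivity)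
    rw [Real.log_div hxpos.ne' hxa.ne'] at this
    have : Real.log x - Real.log (x - α) ≤ x / (x - α) - 1 := this
    have heq : x / (x - α) - 1 = α / (x - α) := by field_simp; ring
    linarith [heq ▸ this]
  have hlow : α / x ≤ Real.log x - Real.log (x - α) := by
    have := Real.log_le_sub_one_of_pos (x := (x - α) / x) (by positivity)
    rw [Real.log_div hxa.ne' hxpos.ne'] at this
    have heq : (x - α) / x - 1 = -(α / x) := by field_simp; ring
    linarith [heq ▸ this]
  rw [abs_le]
  constructor
  · have h1 : α / x - α * ((s:ℝ)+1)⁻¹ ≥ -(α * β * (((s:ℝ)+1)^2)⁻¹) := by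
      rw [ge_iff_le, neg_le, div_eq_mul_inv]
      have e : α * ((s:ℝ)+1)⁻¹ - α * x⁻¹ = α * (x - ((s:ℝ)+1)) / (x * ((s:ℝ)+1)) := by
        field_simp
      have hxs : x - ((s:ℝ)+1) = β := by simp only [hx]; ring
      rw [show -(α * x⁻¹ - α * ((s:ℝ)+1)⁻¹) = α * ((s:ℝ)+1)⁻¹ - α * x⁻¹ by ring, e, hxs]
      rw [div_le_iff₀ (by positivity)]
      have : ((s:ℝ)+1)^2 ≤ x * ((s:ℝ)+1) := by nlinarith
      rw [mul_comm (α * β) ((((s:ℝ)+1)^2)⁻¹)]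
      calc α * β = (((s:ℝ)+1)^2)⁻¹ * (α * β) * ((s:ℝ)+1)^2 := by field_simp
        _ ≤ (((s:ℝ)+1)^2)⁻¹ * (α * β) * (x * ((s:ℝ)+1)) := by
            apply mul_le_mul_of_nonneg_left this (by positivity)
    linarith
  · have h2 : α / (x - α) ≤ α * ((s:ℝ)+1)⁻¹ := by
      rw [← div_eq_mul_inv]
      exact div_le_div_of_nonneg_left hα0.le hs1 hx1
    have : Real.log x - Real.log (x - α) - α * ((s:ℝ)+1)⁻¹ ≤ 0 := by linarith
    have hnn : (0:ℝ) ≤ α * β * (((s:ℝ)+1)^2)⁻¹ := by positivity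
    linarith

lemma urnC_tendsto {β α : ℝ} (hα0 : 0 < α) (hα1 : α < 1) (hβ : 2 ≤ β) :
    ∃ κ : ℝ, 0 < κ ∧
      Tendsto (fun t : ℕ => ((t:ℝ) ^ α) / urnC β α t) atTop (𝓝 κ) := by
  set g : ℕ → ℝ := fun s => Real.log (β + s + 1) - Real.log (β + s + 1 - α) with hg
  set h : ℕ → ℝ := fun s => g s - α * ((s:ℝ) + 1)⁻¹ with hh
  have hsum : Summable h := by
    apply Summable.of_norm_bounded (g := fun s : ℕ => α * β * (((s:ℝ)+1)^2)⁻¹)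
    · have : Summable (fun s : ℕ => (((s:ℝ)+1)^2)⁻¹) := by
        have := (Real.summable_nat_pow_inv (p := 2)).2 one_lt_two
        rw [← summable_nat_add_iff 1] at this
        exact this.congr (by intro n; push_cast; norm_num)
      exact this.mul_left _
    · intro s
      exact urnC_term_bound hα0 hα1 hβ s
  set S := ∑' s, h s with hS
  have hpart : Tendsto (fun t : ℕ => ∑ s ∈ range t, h s) atTop (𝓝 S) :=
    hsum.hasSum.tendsto_sum_nat
  have hharm : Tendsto (fun n : ℕ => (harmonic n : ℝ) - Real.log n) atTop
      (𝓝 Real.eulerMascheroniConstant) := Real.tendsto_harmonic_sub_log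
  have hharm_eq : ∀ n : ℕ, ((harmonic n : ℚ) : ℝ) = ∑ s ∈ range n, ((s:ℝ) + 1)⁻¹ := by
    intro n
    rw [harmonic]
    push_cast
    rfl
  have hlog : Tendsto (fun t : ℕ => Real.log (urnC β α t) - α * Real.log t) atTop
      (𝓝 (S + α * Real.eulerMascheroniConstant)) := by
    have := hpart.add (hharm.const_mul α)
    refine this.congr (fun t => ?_)
    rw [urnC_log hα0 hα1 hβ t, hharm_eq t]
    simp only [hh]
    rw [Finset.sum_sub_distrib, ← Finset.mul_sum]
    ring
  refine ⟨Real.exp (-(S + α * Real.eulerMascheroniConstant)), Real.exp_pos _, ?_⟩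
  have hexp : Tendsto (fun t : ℕ =>
      Real.exp (-(Real.log (urnC β α t) - α * Real.log t))) atTop
      (𝓝 (Real.exp (-(S + α * Real.eulerMascheroniConstant)))) := (Real.continuous_exp.tendsto _).comp hlog.neg
  refine hexp.congr' ?_
  filter_upwards [eventually_ge_atTop 1] with t ht
  have htpos : (0:ℝ) < t := by exact_mod_cast ht
  rw [neg_sub, Real.exp_sub, Real.exp_log (urnC_pos hα0 hα1 hβ t),
    Real.rpow_def_of_pos htpos, mul_comm]


lemma uniformIntegrable_of_sq_bound {Ω : Type*} [MeasurableSpace Ω] (μ : Measure Ω)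
    [IsFiniteMeasure μ] (f : ℕ → Ω → ℝ) (hmeas : ∀ n, AEStronglyMeasurable (f n) μ) (B : ℝ)
    (hB : ∀ n, ∫⁻ ω, (‖f n ω‖₊ : ℝ≥0∞) ^ 2 ∂μ ≤ ENNReal.ofReal B) :
    UniformIntegrable f 1 μ := by
  refine uniformIntegrable_of le_rfl ENNReal.one_ne_top hmeas ?_
  intro ε hε
  set B' : ℝ := max B 0 with hB'
  set Cr : ℝ := B' / ε + 1 with hCr
  have hCrpos : 0 < Cr := by
    have h1 : 0 ≤ B' / ε := div_nonneg (le_max_right B 0) hε.le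
    simp only [hCr]
    linarith
  refine ⟨Real.toNNReal Cr, fun i => ?_⟩
  have hC0 : ((Real.toNNReal Cr : ℝ≥0) : ℝ≥0∞) ≠ 0 := by
    simp [Real.toNNReal_eq_zero, not_le, hCrpos]
  have hCtop : ((Real.toNNReal Cr : ℝ≥0) : ℝ≥0∞) ≠ ⊤ := ENNReal.coe_ne_top
  set C : ℝ≥0∞ := ((Real.toNNReal Cr : ℝ≥0) : ℝ≥0∞) with hCdef
  have hpoint : ∀ ω, (‖Set.indicator {x | (Real.toNNReal Cr : ℝ≥0) ≤ ‖f i x‖₊} (f i) ω‖₊ : ℝ≥0∞)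
      ≤ C⁻¹ * (‖f i ω‖₊ : ℝ≥0∞) ^ 2 := by
    intro ω
    by_cases hω : ω ∈ {x | (Real.toNNReal Cr : ℝ≥0) ≤ ‖f i x‖₊}
    · rw [Set.indicator_of_mem hω]
      have hCle : C ≤ (‖f i ω‖₊ : ℝ≥0∞) := by
        rw [hCdef]; exact_mod_cast hω
      calc (‖f i ω‖₊ : ℝ≥0∞) = C⁻¹ * C * (‖f i ω‖₊ : ℝ≥0∞) := by
            rw [ENNReal.inv_mul_cancel hC0 hCtop, one_mul]
        _ ≤ C⁻¹ * (‖f i ω‖₊ : ℝ≥0∞) * (‖f i ω‖₊ : ℝ≥0∞) := by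
            exact mul_le_mul_left (mul_le_mul_right hCle _) _
        _ = C⁻¹ * (‖f i ω‖₊ : ℝ≥0∞) ^ 2 := by rw [pow_two, mul_assoc]
    · rw [Set.indicator_of_notMem hω]
      simp
  calc eLpNorm (Set.indicator {x | (Real.toNNReal Cr : ℝ≥0) ≤ ‖f i x‖₊} (f i)) 1 μ
      = ∫⁻ ω, (‖Set.indicator {x | (Real.toNNReal Cr : ℝ≥0) ≤ ‖f i x‖₊} (f i) ω‖₊ : ℝ≥0∞) ∂μ :=
        eLpNorm_one_eq_lintegral_enorm
    _ ≤ ∫⁻ ω, C⁻¹ * (‖f i ω‖₊ : ℝ≥0∞) ^ 2 ∂μ := lintegral_mono hpoint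
    _ = C⁻¹ * ∫⁻ ω, (‖f i ω‖₊ : ℝ≥0∞) ^ 2 ∂μ :=
        lintegral_const_mul' _ _ (ENNReal.inv_ne_top.2 hC0)
    _ ≤ C⁻¹ * ENNReal.ofReal B' := by
        refine mul_le_mul_right ((hB i).trans (ENNReal.ofReal_le_ofReal (le_max_left B 0))) _
    _ ≤ ENNReal.ofReal ε := by
        have hCofReal : C = ENNReal.ofReal Cr := by
          rw [hCdef, ENNReal.ofReal]
        have key : ENNReal.ofReal B' ≤ C * ENNReal.ofReal ε := by
          rw [hCofReal, ← ENNReal.ofReal_mul hCrpos.le]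
          apply ENNReal.ofReal_le_ofReal
          rw [hCr]
          have : (B' / ε + 1) * ε = B' + ε := by field_simp
          rw [this]
          linarith
        calc C⁻¹ * ENNReal.ofReal B' ≤ C⁻¹ * (C * ENNReal.ofReal ε) := mul_le_mul_right key _
          _ = (C⁻¹ * C) * ENNReal.ofReal ε := by rw [mul_assoc]
          _ = ENNReal.ofReal ε := by rw [ENNReal.inv_mul_cancel hC0 hCtop, one_mul]


/-- For `0 < α < 1/2`, `t^α (Z_t(j) - Z̄_t)` converges a.s. and in L¹ to a real random
variable `D̃` with `P(D̃ ≠ 0) > 0`. -/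
theorem stmt_11 {Ω : Type*} [m0 : MeasurableSpace Ω] (P : Measure Ω) [IsProbabilityMeasure P]
    (α : ℝ) (hα0 : 0 < α) (hα12 : α < 1 / 2)
    (N : ℕ) (hN : 1 < N) (a b : ℕ) (ha : 1 ≤ a) (hb : 1 ≤ b)
    (ℱ : ℕ → MeasurableSpace Ω) (hℱle : ∀ t, ℱ t ≤ m0) (hℱmono : Monotone ℱ)
    (I Z : ℕ → Fin N → Ω → ℝ)
    -- each I_{t+1}(i) is an indicator, ℱ_{t+1}-measurable
    (hI01 : ∀ t i ω, I (t + 1) i ω = 0 ∨ I (t + 1) i ω = 1)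
    (hImeas : ∀ t i, StronglyMeasurable[ℱ (t + 1)] (I (t + 1) i))
    -- initial composition: a red and b black balls in each urn
    (hZ0 : ∀ i ω, Z 0 i ω = (a : ℝ) / ((a : ℝ) + b))
    -- proportion dynamics
    (hZrec : ∀ t i ω, Z (t + 1) i ω =
      (((a : ℝ) + b + t) * Z t i ω + I (t + 1) i ω) / ((a : ℝ) + b + t + 1))
    -- conditional probability of adding a red ball in urn i
    (hcond : ∀ t i, P[I (t + 1) i|ℱ t] =ᵐ[P]
      fun ω => α * ((∑ k, Z t k ω) / N) + (1 - α) * Z t i ω)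
    -- conditional independence of the urns
    (hcondindep : ∀ t, ∀ i j, i ≠ j →
      P[fun ω => I (t + 1) i ω * I (t + 1) j ω|ℱ t] =ᵐ[P]
        fun ω => (α * ((∑ k, Z t k ω) / N) + (1 - α) * Z t i ω) *
          (α * ((∑ k, Z t k ω) / N) + (1 - α) * Z t j ω))
    (j : Fin N)
    -- known fact: E[(Z_t(j) - Z̄_t)²] ~ d(α) t^{-2α} with d(α) > 0
    (hvar : ∃ d : ℝ, 0 < d ∧ Tendsto (fun t : ℕ =>
        (t : ℝ) ^ (2 * α) * ∫ ω, (Z t j ω - (∑ i, Z t i ω) / N) ^ 2 ∂P)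
      atTop (nhds d)) :
    ∃ Dlim : Ω → ℝ,
      (∀ᵐ ω ∂P, Tendsto (fun t : ℕ => (t : ℝ) ^ α * (Z t j ω - (∑ i, Z t i ω) / N))
          atTop (nhds (Dlim ω))) ∧
        Tendsto (fun t : ℕ =>
            ∫ ω, |(t : ℝ) ^ α * (Z t j ω - (∑ i, Z t i ω) / N) - Dlim ω| ∂P)
          atTop (nhds 0) ∧
        0 < P {ω | Dlim ω ≠ 0} := by
  classical
  obtain ⟨d, hd, hvtend⟩ := hvar
  have hα1 : α < 1 := by linarith
  have hNR : (0:ℝ) < N := by exact_mod_cast Nat.pos_of_ne_zero (by omega)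
  have hN0 : (N:ℝ) ≠ 0 := hNR.ne'
  have ha' : (1:ℝ) ≤ a := by exact_mod_cast ha
  have hb' : (1:ℝ) ≤ b := by exact_mod_cast hb
  set β : ℝ := (a:ℝ) + b with hβdef
  have hβ2 : 2 ≤ β := by rw [hβdef]; linarith
  have hβt : ∀ t : ℕ, (0:ℝ) < β + t + 1 := by
    intro t; have := Nat.cast_nonneg (α := ℝ) t; linarith
  have hβta : ∀ t : ℕ, (0:ℝ) < β + t + 1 - α := by
    intro t; have := Nat.cast_nonneg (α := ℝ) t; linarith
  clear_value β
  obtain ⟨κ, hκpos, hκt⟩ := urnC_tendsto (β := β) hα0 hα1 hβ2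
  set Y : ℕ → Ω → ℝ := fun t ω => Z t j ω - (∑ i, Z t i ω) / N with hYdef
  set c : ℕ → ℝ := urnC β α with hcdef
  have hcpos : ∀ t, 0 < c t := urnC_pos hα0 hα1 hβ2
  have hcrec : ∀ t : ℕ, c (t + 1) = c t * ((β + t + 1) / (β + t + 1 - α)) := by
    intro t; simp [hcdef, urnC]
  set M : ℕ → Ω → ℝ := fun t ω => c t * Y t ω with hMdef
  set F : Filtration ℕ m0 := ⟨ℱ, hℱmono, hℱle⟩ with hFdef
  have hFapp : ∀ t, (F t : MeasurableSpace Ω) = ℱ t := fun t => rfl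
  -- Z stays in [0, 1]
  have hZmem : ∀ t i ω, 0 ≤ Z t i ω ∧ Z t i ω ≤ 1 := by
    intro t
    induction t with
    | zero =>
      intro i ω
      rw [hZ0]
      constructor
      · exact div_nonneg (by positivity) (by linarith)
      · rw [div_le_one (by linarith)]
        linarith
    | succ t ih =>
      intro i ω
      rw [hZrec]
      obtain ⟨h1, h2⟩ := ih i ω
      have hβt' := hβt t
      rcases hI01 t i ω with h3 | h3 <;> rw [h3] <;> constructor
      · exact div_nonneg (by nlinarith) hβt'.le
      · rw [div_le_one hβt']; nlinarith
      · exact div_nonneg (by nlinarith) hβt'.le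
      · rw [div_le_one hβt']; nlinarith
  -- measurability
  have hZsm : ∀ t i, StronglyMeasurable[ℱ t] (Z t i) := by
    intro t
    induction t with
    | zero =>
      intro i
      have : Z 0 i = fun _ => (a:ℝ)/β := funext fun ω => hZ0 i ω
      rw [this]; exact stronglyMeasurable_const
    | succ t ih =>
      intro i
      have : Z (t+1) i = fun ω => ((β + t) * Z t i ω + I (t+1) i ω) * (β + t + 1)⁻¹ := by
        funext ω; rw [hZrec]; ring
      rw [this]
      exact ((((ih i).mono (hℱmono (Nat.le_succ t))).const_mul _).add (hImeas t i)).mul_const _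
  have hsum_sm : ∀ t, StronglyMeasurable[ℱ t] (fun ω => ∑ i, Z t i ω) := by
    intro t
    have : (fun ω => ∑ i, Z t i ω) = ∑ i : Fin N, Z t i := by
      funext ω; rw [Finset.sum_apply]
    rw [this]
    exact Finset.stronglyMeasurable_sum _ fun i _ => hZsm t i
  have hYsm : ∀ t, StronglyMeasurable[ℱ t] (Y t) := by
    intro t
    have hrw : Y t = fun ω => Z t j ω - (∑ i, Z t i ω) * (N:ℝ)⁻¹ := by
      funext ω; simp only [hYdef]; ring
    rw [hrw]
    exact (hZsm t j).sub ((hsum_sm t).mul_const _)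
  have hMsmF : ∀ t, StronglyMeasurable[ℱ t] (M t) := fun t => (hYsm t).const_mul _
  have hMsm : ∀ t, StronglyMeasurable (M t) := fun t => (hMsmF t).mono (hℱle t)
  -- integrability
  have hIint : ∀ t i, Integrable (I (t+1) i) P := by
    intro t i
    refine Integrable.mono' (integrable_const 1)
      ((hImeas t i).mono (hℱle (t+1))).aestronglyMeasurable (ae_of_all _ fun ω => ?_)
    rcases hI01 t i ω with h | h <;> rw [h] <;> norm_num
  have hYbd : ∀ t ω, |Y t ω| ≤ 1 := by
    intro t ω
    have h1 : (0:ℝ) ≤ ∑ i, Z t i ω := Finset.sum_nonneg fun i _ => (hZmem t i ω).1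
    have h2 : (∑ i, Z t i ω) ≤ N := by
      calc (∑ i, Z t i ω) ≤ ∑ _i : Fin N, (1:ℝ) :=
            Finset.sum_le_sum fun i _ => (hZmem t i ω).2
        _ = N := by simp
    have h3 : (0:ℝ) ≤ (∑ i, Z t i ω) / N := div_nonneg h1 hNR.le
    have h4 : (∑ i, Z t i ω) / N ≤ 1 := by rw [div_le_one hNR]; exact h2
    have h5 := (hZmem t j ω).1
    have h6 := (hZmem t j ω).2
    rw [abs_le]
    constructor <;> simp only [hYdef] <;> linarith
  have hYint : ∀ t, Integrable (Y t) P := by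
    intro t
    refine Integrable.mono' (integrable_const 1)
      ((hYsm t).mono (hℱle t)).aestronglyMeasurable (ae_of_all _ fun ω => ?_)
    rw [Real.norm_eq_abs]; exact hYbd t ω
  have hMint : ∀ t, Integrable (M t) P := fun t => (hYint t).const_mul _
  have hY0 : ∀ ω, Y 0 ω = 0 := by
    intro ω
    simp only [hYdef]
    have : ∀ i : Fin N, Z 0 i ω = (a:ℝ)/β := fun i => hZ0 i ω
    rw [Finset.sum_congr rfl fun i _ => this i, Finset.sum_const, Finset.card_univ,
      Fintype.card_fin, nsmul_eq_mul, hZ0]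
    have hx : (N:ℝ) * ((a:ℝ)/β) / N = (a:ℝ)/β := by
      rw [mul_comm, mul_div_assoc, div_self hN0, mul_one]
    rw [hx, sub_self]
  -- conditional expectation computation
  have hIsum_int : ∀ t, Integrable (fun ω => ∑ i, I (t+1) i ω) P := by
    intro t
    exact integrable_finset_sum _ fun i _ => hIint t i
  have hYcond : ∀ t, P[Y (t+1)|ℱ t] =ᵐ[P]
      fun ω => ((β + t + 1 - α) / (β + t + 1)) * Y t ω := by
    intro t
    set f1 : Ω → ℝ := fun ω => ((β + t)/(β + t + 1)) * Y t ω with hf1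
    set f2 : Ω → ℝ := (1/(β + t + 1)) • I (t+1) j with hf2
    set f3 : Ω → ℝ := (-(1/((β + t + 1) * N))) • (fun ω => ∑ i, I (t+1) i ω) with hf3
    have hf1int : Integrable f1 P := (hYint t).const_mul _
    have hf2int : Integrable f2 P := (hIint t j).smul _
    have hf3int : Integrable f3 P := (hIsum_int t).smul _
    have hsplit : Y (t+1) = f1 + f2 + f3 := by
      funext ω
      simp only [hYdef, hf1, hf2, hf3, Pi.add_apply, Pi.smul_apply, smul_eq_mul, hZrec]
      rw [← Finset.sum_div, Finset.sum_add_distrib, ← Finset.mul_sum]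
      field_simp [(hβt t).ne']
      ring
    rw [hsplit]
    have e1 : P[f1 + f2 + f3|ℱ t] =ᵐ[P] P[f1 + f2|ℱ t] + P[f3|ℱ t] :=
      condExp_add (hf1int.add hf2int) hf3int _
    have e2 : P[f1 + f2|ℱ t] =ᵐ[P] P[f1|ℱ t] + P[f2|ℱ t] := condExp_add hf1int hf2int _
    have e3 : P[f1|ℱ t] = f1 :=
      condExp_of_stronglyMeasurable (hℱle t) ((hYsm t).const_mul _) hf1int
    have e4 : P[f2|ℱ t] =ᵐ[P] (1/(β + t + 1)) • P[I (t+1) j|ℱ t] := condExp_smul _ _ _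
    have e5 : P[f3|ℱ t] =ᵐ[P]
        (-(1/((β + t + 1) * N))) • P[fun ω => ∑ i, I (t+1) i ω|ℱ t] := condExp_smul _ _ _
    have hsum_eq : (fun ω => ∑ i, I (t+1) i ω) = ∑ i : Fin N, I (t+1) i := by
      funext ω; rw [Finset.sum_apply]
    have e6 : P[fun ω => ∑ i, I (t+1) i ω|ℱ t] =ᵐ[P] ∑ i : Fin N, P[I (t+1) i|ℱ t] := by
      rw [hsum_eq]; exact condExp_finsetSum (fun i _ => hIint t i) _
    have hcondall : ∀ᵐ ω ∂P, ∀ i, (P[I (t+1) i|ℱ t]) ω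
        = α * ((∑ k, Z t k ω) / N) + (1 - α) * Z t i ω := ae_all_iff.2 fun i => hcond t i
    filter_upwards [e1, e2, e4, e5, e6, hcondall] with ω h1 h2 h4 h5 h6 hall
    rw [h1, Pi.add_apply, h2, Pi.add_apply, e3, h4, h5, Pi.smul_apply, Pi.smul_apply,
      smul_eq_mul, smul_eq_mul, h6, Finset.sum_apply, hall j]
    have hsum2 : ∑ i : Fin N, (P[I (t+1) i|ℱ t]) ω
        = N * (α * ((∑ k, Z t k ω) / N)) + (1 - α) * ∑ k, Z t k ω := by
      rw [Finset.sum_congr rfl fun i _ => hall i, Finset.sum_add_distrib, Finset.sum_const,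
        Finset.card_univ, Fintype.card_fin, ← Finset.mul_sum, nsmul_eq_mul]
    rw [hsum2]
    simp only [hf1, hYdef]
    field_simp [(hβt t).ne']
    ring
  -- martingale
  have hMadp : StronglyAdapted F M := fun t => hMsmF t
  have hMcond : ∀ t, M t =ᵐ[P] P[M (t+1)|ℱ t] := by
    intro t
    have hsmul : M (t+1) = c (t+1) • Y (t+1) := by
      funext ω; simp [hMdef, smul_eq_mul]
    have e1 : P[M (t+1)|ℱ t] =ᵐ[P] c (t+1) • P[Y (t+1)|ℱ t] := by
      rw [hsmul]; exact condExp_smul _ _ _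
    filter_upwards [e1, hYcond t] with ω h1 h2
    rw [h1, Pi.smul_apply, h2, smul_eq_mul]
    simp only [hMdef]
    rw [hcrec t]
    field_simp [(hβt t).ne', (hβta t).ne']
  have hMmart : Martingale M F P :=
    martingale_nat hMadp hMint fun t => hMcond t
  -- L² bound
  have hvtend' : Tendsto (fun t : ℕ => (t:ℝ)^(2*α) * ∫ ω, (Y t ω)^2 ∂P) atTop (𝓝 d) := by
    simpa only [hYdef] using hvtend
  obtain ⟨B1, hB1mem⟩ := hvtend'.bddAbove_range
  have hB1 : ∀ t : ℕ, (t:ℝ)^(2*α) * ∫ ω, (Y t ω)^2 ∂P ≤ B1 :=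
    fun t => hB1mem (Set.mem_range_self t)
  have hqt : Tendsto (fun t : ℕ => c t / (t:ℝ)^α) atTop (𝓝 κ⁻¹) := by
    have h := (hκt.inv₀ hκpos.ne')
    refine h.congr' ?_
    filter_upwards [eventually_ge_atTop 1] with t ht
    rw [inv_div]
  obtain ⟨B2, hB2mem⟩ := hqt.bddAbove_range
  have hB2 : ∀ t : ℕ, c t / (t:ℝ)^α ≤ B2 := fun t => hB2mem (Set.mem_range_self t)
  have hq0 : ∀ t : ℕ, 0 ≤ c t / (t:ℝ)^α :=
    fun t => div_nonneg (hcpos t).le (Real.rpow_nonneg (Nat.cast_nonneg t) _)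
  set B1' : ℝ := max B1 0 with hB1'def
  set B2' : ℝ := max B2 0 with hB2'def
  set Breal : ℝ := B2'^2 * B1' with hBrealdef
  have hBrealnn : 0 ≤ Breal := mul_nonneg (sq_nonneg _) (le_max_right _ _)
  have hYsqint : ∀ t, Integrable (fun ω => (Y t ω)^2) P := by
    intro t
    have hsm2 : StronglyMeasurable (fun ω => (Y t ω)^2) := by
      have hrw : (fun ω => (Y t ω)^2) = fun ω => Y t ω * Y t ω := by
        funext ω; ring
      rw [hrw]
      exact ((hYsm t).mono (hℱle t)).mul ((hYsm t).mono (hℱle t))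
    refine Integrable.mono' (integrable_const 1) hsm2.aestronglyMeasurable
      (ae_of_all _ fun ω => ?_)
    have h1 := hYbd t ω
    have h0 := abs_nonneg (Y t ω)
    rw [Real.norm_eq_abs, abs_pow]
    nlinarith
  have hMsqint : ∀ t, Integrable (fun ω => (M t ω)^2) P := by
    intro t
    have : (fun ω => (M t ω)^2) = fun ω => (c t)^2 * (Y t ω)^2 := by
      funext ω; simp only [hMdef]; ring
    rw [this]
    exact (hYsqint t).const_mul _
  have hMsqeq : ∀ t, ∫ ω, (M t ω)^2 ∂P = (c t)^2 * ∫ ω, (Y t ω)^2 ∂P := by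
    intro t
    rw [← integral_const_mul]
    congr 1; funext ω; simp only [hMdef]; ring
  have hsqR : ∀ t, ∫ ω, (M t ω)^2 ∂P ≤ Breal := by
    intro t
    rcases Nat.eq_zero_or_pos t with rfl | ht
    · have : ∫ ω, (M 0 ω)^2 ∂P = 0 := by
        have : (fun ω => (M 0 ω)^2) = fun _ => (0:ℝ) := by
          funext ω; simp [hMdef, hY0 ω]
        rw [this, integral_const]; simp
      rw [this]; exact hBrealnn
    · have htpos : (0:ℝ) < t := by exact_mod_cast ht
      have htα : (0:ℝ) < (t:ℝ)^α := Real.rpow_pos_of_pos htpos _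
      have h2α : (t:ℝ)^(2*α) = ((t:ℝ)^α)^2 := by
        rw [two_mul, Real.rpow_add htpos, sq]
      have key : (c t)^2 * ∫ ω, (Y t ω)^2 ∂P
          = (c t / (t:ℝ)^α)^2 * ((t:ℝ)^(2*α) * ∫ ω, (Y t ω)^2 ∂P) := by
        rw [h2α, div_pow]
        field_simp
      rw [hMsqeq t, key]
      have hv0 : 0 ≤ (t:ℝ)^(2*α) * ∫ ω, (Y t ω)^2 ∂P :=
        mul_nonneg (Real.rpow_nonneg (Nat.cast_nonneg t) _)
          (integral_nonneg fun ω => sq_nonneg _)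
      have hq2 : (c t / (t:ℝ)^α)^2 ≤ B2'^2 := by
        apply pow_le_pow_left₀ (hq0 t)
        exact (hB2 t).trans (le_max_left _ _)
      have hvB : (t:ℝ)^(2*α) * ∫ ω, (Y t ω)^2 ∂P ≤ B1' := (hB1 t).trans (le_max_left _ _)
      calc (c t / (t:ℝ)^α)^2 * ((t:ℝ)^(2*α) * ∫ ω, (Y t ω)^2 ∂P)
          ≤ B2'^2 * ((t:ℝ)^(2*α) * ∫ ω, (Y t ω)^2 ∂P) :=
            mul_le_mul_of_nonneg_right hq2 hv0
        _ ≤ B2'^2 * B1' := mul_le_mul_of_nonneg_left hvB (sq_nonneg _)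
  have hsq : ∀ t, ∫⁻ ω, (‖M t ω‖₊ : ℝ≥0∞)^2 ∂P ≤ ENNReal.ofReal Breal := by
    intro t
    have h1 := ofReal_integral_eq_lintegral_ofReal (hMsqint t)
      (ae_of_all _ fun ω => sq_nonneg (M t ω))
    have hpt : ∀ ω, ENNReal.ofReal ((M t ω)^2) = (‖M t ω‖₊ : ℝ≥0∞)^2 := by
      intro ω
      rw [← enorm_eq_nnnorm, Real.enorm_eq_ofReal_abs, ← ENNReal.ofReal_pow (abs_nonneg _), sq_abs]
    calc ∫⁻ ω, (‖M t ω‖₊ : ℝ≥0∞)^2 ∂P = ∫⁻ ω, ENNReal.ofReal ((M t ω)^2) ∂P := by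
          refine lintegral_congr fun ω => (hpt ω).symm
      _ = ENNReal.ofReal (∫ ω, (M t ω)^2 ∂P) := h1.symm
      _ ≤ ENNReal.ofReal Breal := ENNReal.ofReal_le_ofReal (hsqR t)
  have hUI : UniformIntegrable M 1 P :=
    uniformIntegrable_of_sq_bound P M (fun n => (hMsm n).aestronglyMeasurable) Breal hsq
  obtain ⟨R, hR⟩ := hUI.2.2
  set G : Ω → ℝ := F.limitProcess M P with hGdef
  have haeG : ∀ᵐ ω ∂P, Tendsto (fun t => M t ω) atTop (𝓝 (G ω)) :=
    hMmart.submartingale.ae_tendsto_limitProcess hR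
  have hGint : Integrable G P :=
    (hMmart.submartingale.memLp_limitProcess hR).integrable le_rfl
  have hL1 : Tendsto (fun n => eLpNorm (M n - G) 1 P) atTop (𝓝 0) :=
    hMmart.submartingale.tendsto_eLpNorm_one_limitProcess hUI
  have hcondexpG : ∀ n, M n =ᵐ[P] P[G|ℱ n] := fun n =>
    hMmart.ae_eq_condExp_limitProcess hUI n
  set r : ℕ → ℝ := fun t => (t:ℝ)^α / c t with hrdef
  have hrt : Tendsto r atTop (𝓝 κ) := hκt
  have hrep : ∀ (t : ℕ) (ω : Ω), (t:ℝ)^α * Y t ω = r t * M t ω := by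
    intro t ω
    simp only [hrdef, hMdef]
    field_simp [(hcpos t).ne']
  refine ⟨fun ω => κ * G ω, ?_, ?_, ?_⟩
  · filter_upwards [haeG] with ω hω
    have h2 : Tendsto (fun t : ℕ => (t:ℝ)^α * Y t ω) atTop (𝓝 (κ * G ω)) :=
      (hrt.mul hω).congr fun t => (hrep t ω).symm
    simpa only [hYdef] using h2
  · have hw : Tendsto (fun t => ∫ ω, |M t ω - G ω| ∂P) atTop (𝓝 0) := by
      have heq : ∀ t, ∫ ω, |M t ω - G ω| ∂P = (eLpNorm (M t - G) 1 P).toReal := by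
        intro t
        have hint : Integrable (M t - G) P := (hMint t).sub hGint
        rw [eLpNorm_one_eq_lintegral_enorm, ← ofReal_integral_norm_eq_lintegral_enorm hint,
          ENNReal.toReal_ofReal (integral_nonneg fun ω => norm_nonneg _)]
        simp_rw [Real.norm_eq_abs, Pi.sub_apply]
      have h0 : Tendsto (fun t => (eLpNorm (M t - G) 1 P).toReal) atTop (𝓝 0) := by
        have := (ENNReal.tendsto_toReal (a := 0) (by simp)).comp hL1
        exact this
      exact h0.congr fun t => (heq t).symm
    have habsint : ∀ t, Integrable (fun ω => |M t ω - G ω|) P := by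
      intro t
      have := ((hMint t).sub hGint).abs
      refine this.congr (ae_of_all _ fun ω => ?_)
      simp [Pi.sub_apply]
    have hGai : Integrable (fun ω => |G ω|) P := by
      have := hGint.abs
      exact this
    have hub : ∀ t : ℕ, ∫ ω, |(t:ℝ)^α * (Z t j ω - (∑ i, Z t i ω)/N) - κ * G ω| ∂P
        ≤ |r t| * (∫ ω, |M t ω - G ω| ∂P) + |r t - κ| * ∫ ω, |G ω| ∂P := by
      intro t
      have hptw : ∀ ω, |(t:ℝ)^α * (Z t j ω - (∑ i, Z t i ω)/N) - κ * G ω|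
          ≤ |r t| * |M t ω - G ω| + |r t - κ| * |G ω| := by
        intro ω
        have hYrw : (t:ℝ)^α * (Z t j ω - (∑ i, Z t i ω)/N) = r t * M t ω := by
          have := hrep t ω
          simpa only [hYdef] using this
        rw [hYrw]
        calc |r t * M t ω - κ * G ω| = |r t * (M t ω - G ω) + (r t - κ) * G ω| := by
              ring_nf
          _ ≤ |r t * (M t ω - G ω)| + |(r t - κ) * G ω| := abs_add_le _ _
          _ = |r t| * |M t ω - G ω| + |r t - κ| * |G ω| := by rw [abs_mul, abs_mul]
      have hLHSint : Integrable
          (fun ω => |(t:ℝ)^α * (Z t j ω - (∑ i, Z t i ω)/N) - κ * G ω|) P := by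
        have : Integrable (fun ω => (t:ℝ)^α * Y t ω - κ * G ω) P :=
          ((hYint t).const_mul _).sub (hGint.const_mul _)
        have h2 := this.abs
        simpa only [hYdef] using h2
      calc ∫ ω, |(t:ℝ)^α * (Z t j ω - (∑ i, Z t i ω)/N) - κ * G ω| ∂P
          ≤ ∫ ω, (|r t| * |M t ω - G ω| + |r t - κ| * |G ω|) ∂P :=
            integral_mono hLHSint (((habsint t).const_mul _).add (hGai.const_mul _))
              hptw
        _ = |r t| * (∫ ω, |M t ω - G ω| ∂P) + |r t - κ| * ∫ ω, |G ω| ∂P := by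
            rw [integral_add ((habsint t).const_mul _) (hGai.const_mul _),
              integral_const_mul, integral_const_mul]
    have hup : Tendsto (fun t : ℕ =>
        |r t| * (∫ ω, |M t ω - G ω| ∂P) + |r t - κ| * ∫ ω, |G ω| ∂P) atTop (𝓝 0) := by
      have h1 : Tendsto (fun t => |r t|) atTop (𝓝 |κ|) := hrt.abs
      have h2 : Tendsto (fun t => |r t - κ|) atTop (𝓝 0) := by
        have h3 : Tendsto (fun t => r t - κ) atTop (𝓝 (κ - κ)) :=
          hrt.sub (tendsto_const_nhds (x := κ))
        rw [sub_self] at h3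
        simpa using h3.abs
      have := (h1.mul hw).add (h2.mul (tendsto_const_nhds (x := ∫ ω, |G ω| ∂P)))
      simpa using this
    refine tendsto_of_tendsto_of_tendsto_of_le_of_le tendsto_const_nhds hup
      (fun t => integral_nonneg fun ω => abs_nonneg _) (fun t => hub t)
  · rw [pos_iff_ne_zero]
    intro hzero
    have hae0 : ∀ᵐ ω ∂P, κ * G ω = 0 := by
      rw [ae_iff]
      simpa using hzero
    have hG0 : G =ᵐ[P] 0 := by
      filter_upwards [hae0] with ω h
      have := (mul_eq_zero.1 h).resolve_left hκpos.ne'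
      simpa using this
    have hY0ae : ∀ t, ∀ᵐ ω ∂P, Y t ω = 0 := by
      intro t
      have h1 : P[G|ℱ t] =ᵐ[P] 0 := by
        refine (condExp_congr_ae hG0).trans ?_
        rw [condExp_zero]
      have hM0 : M t =ᵐ[P] 0 := (hcondexpG t).trans h1
      filter_upwards [hM0] with ω h
      have h' : c t * Y t ω = 0 := h
      exact (mul_eq_zero.1 h').resolve_left (hcpos t).ne'
    have hint0 : ∀ t, ∫ ω, (Y t ω)^2 ∂P = 0 := by
      intro t
      have hz : (fun ω => (Y t ω)^2) =ᵐ[P] fun _ => (0:ℝ) := by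
        filter_upwards [hY0ae t] with ω h
        simp [h]
      rw [integral_congr_ae hz, integral_const]
      simp
    have hzero' : Tendsto (fun t : ℕ => (t:ℝ)^(2*α) * ∫ ω, (Y t ω)^2 ∂P) atTop (𝓝 0) := by
      refine tendsto_const_nhds.congr fun t => ?_
      rw [hint0 t, mul_zero]
    have hd0 : d = 0 := tendsto_nhds_unique hvtend' hzero'
    exact absurd hd0 hd.ne'
end

section
/- In the system of N interacting Pólya urns, the almost sure limit Z of the total proportion Z_t satisfies P(Z = 0) + P(Z = 1) < 1 and P(Z = z) = 0 for every z ∈ (0,1). -/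
open Filter Finset MeasureTheory ProbabilityTheory NNReal

lemma gauss_open_pos (v : ℝ≥0) (hv : v ≠ 0) {s : Set ℝ} (hs : IsOpen s) (hne : s.Nonempty) :
    0 < gaussianReal 0 v s := by
  rw [gaussianReal_apply 0 hv s]
  rcases eq_or_lt_of_le (zero_le : (0 : ENNReal) ≤ ∫⁻ x in s, gaussianPDF 0 v x) with h0 | h
  · exfalso
    have h0' : ∫⁻ x in s, gaussianPDF 0 v x = 0 := h0.symm
    rw [lintegral_eq_zero_iff (measurable_gaussianPDF 0 v)] at h0'
    have hfalse : ∀ᵐ x ∂(volume.restrict s), False := by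
      filter_upwards [h0'] with x hx
      exact absurd hx (gaussianPDF_pos 0 hv x).ne'
    rw [Filter.eventually_false_iff_eq_bot, ae_eq_bot, Measure.restrict_eq_zero] at hfalse
    exact absurd hfalse (hs.measure_pos volume hne).ne'
  · exact h

lemma gauss_integral_lt_one (v : ℝ≥0) (hv : v ≠ 0) {f : ℝ → ℝ} (hf : Continuous f)
    (h0 : ∀ x, 0 ≤ f x) (h1 : ∀ x, f x ≤ 1) {δ lo hi : ℝ} (hδ : 0 < δ) (hlohi : lo < hi)
    (hsmall : ∀ x ∈ Set.Ioo lo hi, f x ≤ 1 - δ) :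
    ∫ x, f x ∂(gaussianReal 0 v) < 1 := by
  set μ := gaussianReal 0 v with hμ
  have hint : Integrable f μ := by
    refine Integrable.mono' (integrable_const 1) hf.aestronglyMeasurable ?_
    exact Filter.Eventually.of_forall fun x => by
      rw [Real.norm_eq_abs, abs_le]; exact ⟨by linarith [h0 x], h1 x⟩
  have hint1 : Integrable (fun x => 1 - f x) μ := (integrable_const 1).sub hint
  have hIoo : 0 < (μ (Set.Ioo lo hi)).toReal := by
    refine ENNReal.toReal_pos (gauss_open_pos v hv isOpen_Ioo ?_).ne' (measure_ne_top μ _)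
    exact Set.nonempty_Ioo.2 hlohi
  have hpos : 0 < ∫ x, (1 - f x) ∂μ := by
    have h2 : δ * (μ (Set.Ioo lo hi)).toReal ≤ ∫ x in Set.Ioo lo hi, (1 - f x) ∂μ := by
      have := setIntegral_mono_on (integrableOn_const (measure_lt_top μ _).ne)
        (hint1.integrableOn) measurableSet_Ioo
        (fun x hx => by have := hsmall x hx; linarith : ∀ x ∈ Set.Ioo lo hi, δ ≤ 1 - f x)
      rwa [setIntegral_const, smul_eq_mul, mul_comm] at this
    have h3 : ∫ x in Set.Ioo lo hi, (1 - f x) ∂μ ≤ ∫ x, (1 - f x) ∂μ := by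
      refine setIntegral_le_integral hint1 ?_
      exact Filter.Eventually.of_forall fun x => by simp [h1 x]
    nlinarith
  have : ∫ x, (1 - f x) ∂μ = 1 - ∫ x, f x ∂μ := by
    rw [integral_sub (integrable_const 1) hint, integral_const]
    simp [hμ]
  linarith [this ▸ hpos]

/-- The a.s. limit `Z` of the total proportion `Z̄_t` satisfies
`P(Z = 0) + P(Z = 1) < 1` and `P(Z = z) = 0` for every `z ∈ (0,1)`. -/
theorem stmt_13 {Ω : Type*} [m0 : MeasurableSpace Ω] (P : Measure Ω) [IsProbabilityMeasure P]
    (α : ℝ) (hα0 : 0 ≤ α) (hα1 : α ≤ 1)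
    (N : ℕ) (hN : 1 < N) (a b : ℕ) (ha : 1 ≤ a) (hb : 1 ≤ b)
    (ℱ : ℕ → MeasurableSpace Ω) (hℱle : ∀ t, ℱ t ≤ m0) (hℱmono : Monotone ℱ)
    (I Z : ℕ → Fin N → Ω → ℝ)
    -- each I_{t+1}(i) is an indicator, ℱ_{t+1}-measurable
    (hI01 : ∀ t i ω, I (t + 1) i ω = 0 ∨ I (t + 1) i ω = 1)
    (hImeas : ∀ t i, StronglyMeasurable[ℱ (t + 1)] (I (t + 1) i))
    -- initial composition: a red and b black balls in each urn
    (hZ0 : ∀ i ω, Z 0 i ω = (a : ℝ) / ((a : ℝ) + b))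
    -- proportion dynamics
    (hZrec : ∀ t i ω, Z (t + 1) i ω =
      (((a : ℝ) + b + t) * Z t i ω + I (t + 1) i ω) / ((a : ℝ) + b + t + 1))
    -- conditional probability of adding a red ball in urn i
    (hcond : ∀ t i, P[I (t + 1) i|ℱ t] =ᵐ[P]
      fun ω => α * ((∑ k, Z t k ω) / N) + (1 - α) * Z t i ω)
    -- conditional independence of the urns
    (hcondindep : ∀ t, ∀ i j, i ≠ j →
      P[fun ω => I (t + 1) i ω * I (t + 1) j ω|ℱ t] =ᵐ[P]
        fun ω => (α * ((∑ k, Z t k ω) / N) + (1 - α) * Z t i ω) *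
          (α * ((∑ k, Z t k ω) / N) + (1 - α) * Z t j ω))
    (Zlim : Ω → ℝ) (hZlimMeas : Measurable Zlim)
    (hZlim : ∀ᵐ ω ∂P, Tendsto (fun t => (∑ i, Z t i ω) / N) atTop (nhds (Zlim ω)))
    -- known fact: E[Z(1-Z)] > 0
    (hmean : 0 < ∫ ω, Zlim ω * (1 - Zlim ω) ∂P)
    -- known fact: a.s. conditional convergence of √t (Z̄_t - Z) to N(0, (1/N)(Z - Z²))
    (hascond : ∀ f : ℝ → ℝ, Continuous f → (∃ C, ∀ x, |f x| ≤ C) →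
      ∀ᵐ ω ∂P, Tendsto (fun t : ℕ =>
          (P[fun ω' => f (Real.sqrt t * ((∑ i, Z t i ω') / N - Zlim ω'))|ℱ t]) ω)
        atTop
        (nhds (∫ x, f x ∂(gaussianReal 0
          (Real.toNNReal ((1 / N) * (Zlim ω - Zlim ω ^ 2))))))) :
    P {ω | Zlim ω = 0} + P {ω | Zlim ω = 1} < 1 ∧
      ∀ z : ℝ, z ∈ Set.Ioo (0 : ℝ) 1 → P {ω | Zlim ω = z} = 0 := by
  classical
  constructor
  · -- Part 1
    have hm0' : MeasurableSet {ω | Zlim ω = 0} := hZlimMeas (measurableSet_singleton 0)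
    have hm1' : MeasurableSet {ω | Zlim ω = 1} := hZlimMeas (measurableSet_singleton 1)
    have hd : Disjoint {ω | Zlim ω = 0} {ω | Zlim ω = 1} := by
      rw [Set.disjoint_left]
      intro ω h0 h1
      simp only [Set.mem_setOf_eq] at h0 h1
      rw [h0] at h1; norm_num at h1
    rw [← measure_union hd hm1']
    refine lt_of_le_of_ne prob_le_one ?_
    intro heq
    have hcompl : P ({ω | Zlim ω = 0} ∪ {ω | Zlim ω = 1})ᶜ = 0 := by
      rw [measure_compl (hm0'.union hm1') (measure_ne_top _ _), heq, measure_univ, tsub_self]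
    have hae : (fun ω => Zlim ω * (1 - Zlim ω)) =ᵐ[P] 0 := by
      rw [Filter.EventuallyEq, ae_iff]
      refine measure_mono_null ?_ hcompl
      intro ω hω
      simp only [Set.mem_setOf_eq, Pi.zero_apply] at hω
      simp only [Set.mem_compl_iff, Set.mem_union, Set.mem_setOf_eq]
      rintro (h | h) <;> rw [h] at hω <;> simp at hω
    rw [integral_congr_ae hae] at hmean
    simp at hmean
  · -- Part 2
    intro z hz
    obtain ⟨hz0, hz1⟩ := hz
    have hNpos : (0 : ℝ) < N := by positivity
    -- measurability of Z t i w.r.t. ℱ t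
    have hZmeas : ∀ t, ∀ i, StronglyMeasurable[ℱ t] (Z t i) := by
      intro t
      induction t with
      | zero =>
        intro i
        have : Z 0 i = fun _ => (a : ℝ) / ((a : ℝ) + b) := funext fun ω => hZ0 i ω
        rw [this]; exact stronglyMeasurable_const
      | succ t ih =>
        intro i
        have : Z (t + 1) i = fun ω =>
            (((a : ℝ) + b + t) * Z t i ω + I (t + 1) i ω) / ((a : ℝ) + b + t + 1) :=
          funext fun ω => hZrec t i ω
        simp only [this, div_eq_mul_inv]
        exact ((stronglyMeasurable_const.mul ((ih i).mono (hℱmono (Nat.le_succ t)))).add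
          (hImeas t i)).mul stronglyMeasurable_const
    have hZbarmeas : ∀ t, StronglyMeasurable[ℱ t] (fun ω => (∑ i, Z t i ω) / N) := by
      intro t
      simp only [div_eq_mul_inv]
      exact (Finset.stronglyMeasurable_fun_sum _ fun i _ => hZmeas t i).mul
        stronglyMeasurable_const
    have hm'le : (⨆ n, ℱ n : MeasurableSpace Ω) ≤ m0 := iSup_le hℱle
    have hZbarmeas' : ∀ t, Measurable[⨆ n, ℱ n] (fun ω => (∑ i, Z t i ω) / N) :=
      fun t => ((hZbarmeas t).mono (le_iSup ℱ t)).measurable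
    -- the ℱ∞-measurable version of Zlim
    set S : Set Ω := {ω | ∃ c, Tendsto (fun t => (∑ i, Z t i ω) / N) atTop (nhds c)} with hS
    have hSmeas : MeasurableSet[⨆ n, ℱ n] S := by
      letI : MeasurableSpace Ω := ⨆ n, ℱ n
      exact measurableSet_exists_tendsto hZbarmeas'
    set fn : ℕ → Ω → ℝ := fun t => S.indicator (fun ω => (∑ i, Z t i ω) / N) with hfn
    have hfnmeas : ∀ t, Measurable[⨆ n, ℱ n] (fn t) := fun t => (hZbarmeas' t).indicator hSmeas
    set g : Ω → ℝ := fun ω => limUnder atTop (fun t => fn t ω) with hgdef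
    have htend : ∀ ω, Tendsto (fun t => fn t ω) atTop (nhds (g ω)) := by
      intro ω
      by_cases hω : ω ∈ S
      · obtain ⟨c, hc⟩ := id hω
        refine tendsto_nhds_limUnder ⟨c, ?_⟩
        have : (fun t => fn t ω) = fun t => (∑ i, Z t i ω) / N :=
          funext fun t => Set.indicator_of_mem hω _
        rw [this]; exact hc
      · refine tendsto_nhds_limUnder ⟨0, ?_⟩
        have : (fun t => fn t ω) = fun _ => (0 : ℝ) :=
          funext fun t => Set.indicator_of_notMem hω _
        rw [this]; exact tendsto_const_nhds
    have hgmeas' : Measurable[⨆ n, ℱ n] g := by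
      letI : MeasurableSpace Ω := ⨆ n, ℱ n
      exact measurable_of_tendsto_metrizable hfnmeas (tendsto_pi_nhds.2 htend)
    have hgZlim : g =ᵐ[P] Zlim := by
      filter_upwards [hZlim] with ω hω
      have hωS : ω ∈ S := ⟨Zlim ω, hω⟩
      have h1 : Tendsto (fun t => fn t ω) atTop (nhds (Zlim ω)) := by
        have : (fun t => fn t ω) = fun t => (∑ i, Z t i ω) / N :=
          funext fun t => Set.indicator_of_mem hωS _
        rw [this]; exact hω
      exact tendsto_nhds_unique (htend ω) h1
    -- the event A' and its indicator
    set A' : Set Ω := {ω | g ω = z} with hA'def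
    have hA'meas : MeasurableSet[⨆ n, ℱ n] A' := hgmeas' (measurableSet_singleton z)
    set χ : Ω → ℝ := A'.indicator (fun _ => (1 : ℝ)) with hχdef
    have hχmeas : StronglyMeasurable[⨆ n, ℱ n] χ := stronglyMeasurable_const.indicator hA'meas
    have hA'meas0 : MeasurableSet[m0] A' := hm'le _ hA'meas
    have hχint : Integrable χ P := (integrable_const (1 : ℝ)).indicator hA'meas0
    -- Lévy upward convergence
    set 𝒢 : Filtration ℕ m0 := ⟨ℱ, hℱmono, hℱle⟩ with h𝒢
    have hlevy : ∀ᵐ ω ∂P, Tendsto (fun n => (P[χ|ℱ n]) ω) atTop (nhds (χ ω)) :=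
      hχint.tendsto_ae_condExp (ℱ := 𝒢) hχmeas
    -- the key conditional-expectation inequality
    have key : ∀ (f : ℝ → ℝ), Continuous f → (∀ x, 0 ≤ f x) → (∀ x, f x ≤ 1) → ∀ t : ℕ,
        ∀ᵐ ω ∂P, f (Real.sqrt t * ((∑ i, Z t i ω) / N - z)) * (P[χ|ℱ t]) ω ≤
          (P[fun ω' => f (Real.sqrt t * ((∑ i, Z t i ω') / N - Zlim ω'))|ℱ t]) ω := by
      intro f hfc hf0 hf1 t
      set u : Ω → ℝ := fun ω => f (Real.sqrt t * ((∑ i, Z t i ω) / N - z)) with hudef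
      set W : Ω → ℝ := fun ω' => f (Real.sqrt t * ((∑ i, Z t i ω') / N - Zlim ω')) with hWdef
      have husm : StronglyMeasurable[ℱ t] u :=
        hfc.comp_stronglyMeasurable
          (stronglyMeasurable_const.mul ((hZbarmeas t).sub stronglyMeasurable_const))
      have hWsm : AEStronglyMeasurable W P :=
        (hfc.measurable.comp (measurable_const.mul
          (((hZbarmeas t).mono (hℱle t)).measurable.sub hZlimMeas))).aestronglyMeasurable
      have hWint : Integrable W P := by
        refine Integrable.mono' (integrable_const 1) hWsm ?_
        exact Filter.Eventually.of_forall fun ω => by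
          rw [Real.norm_eq_abs, abs_le]; exact ⟨by linarith [hf0 (Real.sqrt t * ((∑ i, Z t i ω) / N - Zlim ω))], hf1 _⟩
      have huχint : Integrable (u * χ) P := by
        refine Integrable.mono' (integrable_const 1)
          (((husm.mono (hℱle t)).mul (hχmeas.mono hm'le)).aestronglyMeasurable) ?_
        refine Filter.Eventually.of_forall fun ω => ?_
        rw [Real.norm_eq_abs, Pi.mul_apply, abs_mul]
        have h1 : |u ω| ≤ 1 := abs_le.2 ⟨by linarith [hf0 (Real.sqrt t * ((∑ i, Z t i ω) / N - z))], hf1 _⟩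
        have h2 : |χ ω| ≤ 1 := by
          rw [hχdef]
          by_cases hω : ω ∈ A' <;> simp [Set.indicator_of_mem, Set.indicator_of_notMem, hω]
        calc |u ω| * |χ ω| ≤ 1 * 1 := by
              exact mul_le_mul h1 h2 (abs_nonneg _) zero_le_one
          _ = 1 := by norm_num
      have hle : u * χ ≤ᵐ[P] W := by
        filter_upwards [hgZlim] with ω hω
        by_cases hωA : ω ∈ A'
        · have hzeq : Zlim ω = z := by rw [← hω]; exact hωA
          have : χ ω = 1 := Set.indicator_of_mem hωA _
          rw [Pi.mul_apply, this, mul_one]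
          apply le_of_eq
          rw [hudef, hWdef]
          simp only [hzeq]
        · have : χ ω = 0 := Set.indicator_of_notMem hωA _
          rw [Pi.mul_apply, this, mul_zero]
          exact hf0 _
      have hmono := condExp_mono (m := ℱ t) huχint hWint hle
      have hpull := condExp_mul_of_stronglyMeasurable_left (μ := P) husm huχint hχint
      filter_upwards [hmono, hpull] with ω hmω hpω
      calc u ω * (P[χ|ℱ t]) ω = (u * P[χ|ℱ t]) ω := rfl
        _ = (P[u * χ|ℱ t]) ω := hpω.symm
        _ ≤ (P[W|ℱ t]) ω := hmω
    -- test functions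
    set f₁ : ℝ → ℝ := fun x => min 1 |x| with hf₁def
    set f₃ : ℝ → ℝ := fun x => min 1 (max 0 (2 - |x|)) with hf₃def
    have hf₁cont : Continuous f₁ := continuous_const.min continuous_abs
    have hf₃cont : Continuous f₃ :=
      continuous_const.min (continuous_const.max (continuous_const.sub continuous_abs))
    have hf₁0 : ∀ x, 0 ≤ f₁ x := fun x => le_min zero_le_one (abs_nonneg x)
    have hf₁1 : ∀ x, f₁ x ≤ 1 := fun x => min_le_left _ _
    have hf₃0 : ∀ x, 0 ≤ f₃ x := fun x => le_min zero_le_one (le_max_left _ _)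
    have hf₃1 : ∀ x, f₃ x ≤ 1 := fun x => min_le_left _ _
    -- the variance
    set v : ℝ≥0 := Real.toNNReal ((1 / N) * (z - z ^ 2)) with hvdef
    have hvpos : (0 : ℝ) < (1 / N) * (z - z ^ 2) := by
      apply mul_pos (by positivity)
      nlinarith
    have hv : v ≠ 0 := by
      rw [hvdef]
      simp only [ne_eq, Real.toNNReal_eq_zero, not_le]
      exact hvpos
    -- the Gaussian integrals are < 1
    have hc₁ : ∫ x, f₁ x ∂(gaussianReal 0 v) < 1 := by
      refine gauss_integral_lt_one v hv hf₁cont hf₁0 hf₁1 (δ := 1/2)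
        (lo := -(1/2)) (hi := 1/2) (by norm_num) (by norm_num) ?_
      intro x hx
      have : |x| ≤ 1/2 := by
        rw [abs_le]; exact ⟨hx.1.le, hx.2.le⟩
      calc f₁ x ≤ |x| := min_le_right _ _
        _ ≤ 1 - 1/2 := by linarith
    have hc₃ : ∫ x, f₃ x ∂(gaussianReal 0 v) < 1 := by
      refine gauss_integral_lt_one v hv hf₃cont hf₃0 hf₃1 (δ := 1)
        (lo := 2) (hi := 3) (by norm_num) (by norm_num) ?_
      intro x hx
      have habs : 2 < |x| := lt_of_lt_of_le hx.1 (le_abs_self x)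
      have : max 0 (2 - |x|) = 0 := max_eq_left (by linarith)
      rw [hf₃def]
      simp only [this]
      norm_num
    have hc₁0 : 0 ≤ ∫ x, f₁ x ∂(gaussianReal 0 v) := integral_nonneg hf₁0
    have hc₃0 : 0 ≤ ∫ x, f₃ x ∂(gaussianReal 0 v) := integral_nonneg hf₃0
    -- gather almost-everywhere facts
    have hkey1 : ∀ᵐ ω ∂P, ∀ t : ℕ,
        f₁ (Real.sqrt t * ((∑ i, Z t i ω) / N - z)) * (P[χ|ℱ t]) ω ≤
          (P[fun ω' => f₁ (Real.sqrt t * ((∑ i, Z t i ω') / N - Zlim ω'))|ℱ t]) ω :=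
      ae_all_iff.2 (key f₁ hf₁cont hf₁0 hf₁1)
    have hkey3 : ∀ᵐ ω ∂P, ∀ t : ℕ,
        f₃ (Real.sqrt t * ((∑ i, Z t i ω) / N - z)) * (P[χ|ℱ t]) ω ≤
          (P[fun ω' => f₃ (Real.sqrt t * ((∑ i, Z t i ω') / N - Zlim ω'))|ℱ t]) ω :=
      ae_all_iff.2 (key f₃ hf₃cont hf₃0 hf₃1)
    have hasc1 := hascond f₁ hf₁cont ⟨1, fun x => abs_le.2 ⟨by linarith [hf₁0 x], hf₁1 x⟩⟩
    have hasc3 := hascond f₃ hf₃cont ⟨1, fun x => abs_le.2 ⟨by linarith [hf₃0 x], hf₃1 x⟩⟩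
    -- conclude: a.e. ω is not in A'
    have hnull : ∀ᵐ ω ∂P, ω ∉ A' := by
      filter_upwards [hkey1, hkey3, hlevy, hasc1, hasc3, hgZlim] with ω h1 h3 hlev ha1 ha3 hgz
      intro hωA
      have hzlim : Zlim ω = z := by rw [← hgz]; exact hωA
      have hχω : χ ω = 1 := Set.indicator_of_mem hωA _
      rw [hχω] at hlev
      rw [hzlim] at ha1 ha3
      set c₁ := ∫ x, f₁ x ∂(gaussianReal 0 v) with hc₁def
      set c₃ := ∫ x, f₃ x ∂(gaussianReal 0 v) with hc₃def
      set M : ℝ := max c₁ c₃ with hMdef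
      have hM1 : M < 1 := max_lt hc₁ hc₃
      have hM0 : 0 ≤ M := le_trans hc₁0 (le_max_left _ _)
      set η : ℝ := (1 + M) / 2 with hηdef
      have hMη : M < η := by rw [hηdef]; linarith
      have hη1 : η < 1 := by rw [hηdef]; linarith
      have hη0 : 0 < η := by rw [hηdef]; linarith
      have hev1 : ∀ᶠ t : ℕ in atTop,
          (P[fun ω' => f₁ (Real.sqrt t * ((∑ i, Z t i ω') / N - Zlim ω'))|ℱ t]) ω < η :=
        ha1.eventually_lt_const (lt_of_le_of_lt (le_max_left _ _) hMη)
      have hev3 : ∀ᶠ t : ℕ in atTop,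
          (P[fun ω' => f₃ (Real.sqrt t * ((∑ i, Z t i ω') / N - Zlim ω'))|ℱ t]) ω < η :=
        ha3.eventually_lt_const (lt_of_le_of_lt (le_max_right _ _) hMη)
      have hevχ : ∀ᶠ t : ℕ in atTop, η < (P[χ|ℱ t]) ω :=
        hlev.eventually_const_lt hη1
      obtain ⟨t, ht1, ht3, htχ⟩ := (hev1.and (hev3.and hevχ)).exists
      set x_t : ℝ := Real.sqrt t * ((∑ i, Z t i ω) / N - z) with hxtdef
      have hEχpos : 0 < (P[χ|ℱ t]) ω := lt_trans hη0 htχ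
      have hf1lt : f₁ x_t < 1 := by
        have hchain : f₁ x_t * (P[χ|ℱ t]) ω < 1 * (P[χ|ℱ t]) ω := by
          rw [one_mul]
          exact lt_of_le_of_lt (h1 t) (lt_trans ht1 htχ)
        exact lt_of_mul_lt_mul_right hchain hEχpos.le
      have habs : |x_t| < 1 := by
        rcases min_lt_iff.1 hf1lt with h | h
        · exact absurd h (lt_irrefl 1)
        · exact h
      have hf3eq : f₃ x_t = 1 := by
        rw [hf₃def]
        exact min_eq_left (le_max_of_le_right (by linarith [abs_nonneg x_t]))
      have : (P[χ|ℱ t]) ω < (P[χ|ℱ t]) ω := by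
        calc (P[χ|ℱ t]) ω = f₃ x_t * (P[χ|ℱ t]) ω := by rw [hf3eq, one_mul]
          _ ≤ (P[fun ω' => f₃ (Real.sqrt t * ((∑ i, Z t i ω') / N - Zlim ω'))|ℱ t]) ω := h3 t
          _ < η := ht3
          _ < (P[χ|ℱ t]) ω := htχ
      exact lt_irrefl _ this
    -- P(A') = 0 and transfer to {Zlim = z}
    have hA'null : P A' = 0 := by
      have := hnull
      rw [ae_iff] at this
      simpa using this
    have hsets : {ω | Zlim ω = z} =ᵐ[P] A' := by
      rw [Filter.eventuallyEq_set]
      filter_upwards [hgZlim] with ω hω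
      simp only [Set.mem_setOf_eq, hA'def, hω]
    rw [measure_congr hsets, hA'null]
end

section
/- In the system of N interacting Pólya urns, for a fixed urn j, the conditional covariance satisfies E[k² (Z_{k+1}(j) − Z_k(j))(Z_{k+1} − Z_k) | F_k] → (1/N)(Z − Z²) almost surely as k → ∞. -/
open Filter Finset MeasureTheory

set_option maxHeartbeats 1000000 in
/-- In the system of N interacting Pólya urns, the conditional covariance satisfies
`E[k² (Z_{k+1}(j) - Z_k(j))(Z̄_{k+1} - Z̄_k) | ℱ_k] → (1/N)(Z - Z²)` a.s. -/
theorem stmt_19 {Ω : Type*} [m0 : MeasurableSpace Ω] (P : Measure Ω) [IsProbabilityMeasure P]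
    (α : ℝ) (hα0 : 0 ≤ α) (hα1 : α ≤ 1)
    (N : ℕ) (hN : 1 < N) (a b : ℕ) (ha : 1 ≤ a) (hb : 1 ≤ b)
    (ℱ : ℕ → MeasurableSpace Ω) (hℱle : ∀ t, ℱ t ≤ m0) (hℱmono : Monotone ℱ)
    (I Z : ℕ → Fin N → Ω → ℝ)
    -- each I_{t+1}(i) is an indicator, ℱ_{t+1}-measurable
    (hI01 : ∀ t i ω, I (t + 1) i ω = 0 ∨ I (t + 1) i ω = 1)
    (hImeas : ∀ t i, StronglyMeasurable[ℱ (t + 1)] (I (t + 1) i))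
    -- initial composition: a red and b black balls in each urn
    (hZ0 : ∀ i ω, Z 0 i ω = (a : ℝ) / ((a : ℝ) + b))
    -- proportion dynamics
    (hZrec : ∀ t i ω, Z (t + 1) i ω =
      (((a : ℝ) + b + t) * Z t i ω + I (t + 1) i ω) / ((a : ℝ) + b + t + 1))
    -- conditional probability of adding a red ball in urn i
    (hcond : ∀ t i, P[I (t + 1) i|ℱ t] =ᵐ[P]
      fun ω => α * ((∑ k, Z t k ω) / N) + (1 - α) * Z t i ω)
    -- conditional independence of the urns
    (hcondindep : ∀ t, ∀ i j, i ≠ j →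
      P[fun ω => I (t + 1) i ω * I (t + 1) j ω|ℱ t] =ᵐ[P]
        fun ω => (α * ((∑ k, Z t k ω) / N) + (1 - α) * Z t i ω) *
          (α * ((∑ k, Z t k ω) / N) + (1 - α) * Z t j ω))
    (j : Fin N) (Zlim : Ω → ℝ)
    (hZlim : ∀ i, ∀ᵐ ω ∂P, Tendsto (fun t => Z t i ω) atTop (nhds (Zlim ω))) :
    ∀ᵐ ω ∂P, Tendsto (fun k : ℕ =>
        (P[fun ω' => (k : ℝ) ^ 2 * (Z (k + 1) j ω' - Z k j ω') *
            ((∑ i, Z (k + 1) i ω') / N - (∑ i, Z k i ω') / N)|ℱ k]) ω)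
      atTop (nhds ((1 / N) * (Zlim ω - Zlim ω ^ 2))) := by
  classical
  have ha1 : (1:ℝ) ≤ (a:ℝ) := by exact_mod_cast ha
  have hb1 : (1:ℝ) ≤ (b:ℝ) := by exact_mod_cast hb
  have hN0 : (0:ℝ) < (N:ℝ) := by positivity
  have hNne : (N:ℝ) ≠ 0 := ne_of_gt hN0
  have hd0 : ∀ t : ℕ, (0:ℝ) < (a:ℝ) + b + t + 1 := fun t => by positivity
  have hdne : ∀ t : ℕ, ((a:ℝ) + b + (t:ℝ) + 1) ≠ 0 := fun t => ne_of_gt (hd0 t)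
  -- bounds on Z
  have hZ01 : ∀ t i ω, 0 ≤ Z t i ω ∧ Z t i ω ≤ 1 := by
    intro t
    induction t with
    | zero =>
      intro i ω
      rw [hZ0]
      constructor
      · positivity
      · rw [div_le_one (by positivity)]; linarith
    | succ t ih =>
      intro i ω
      obtain ⟨h0, h1⟩ := ih i ω
      have hc : (0:ℝ) ≤ (a:ℝ) + b + t := by positivity
      rw [hZrec]
      rcases hI01 t i ω with h | h <;> rw [h] <;> constructor
      · apply div_nonneg (by nlinarith) (hd0 t).le
      · rw [div_le_one (hd0 t)]; nlinarith
      · apply div_nonneg (by nlinarith) (hd0 t).le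
      · rw [div_le_one (hd0 t)]; nlinarith
  -- bounds on I
  have hI01' : ∀ t i ω, 0 ≤ I (t+1) i ω ∧ I (t+1) i ω ≤ 1 := by
    intro t i ω; rcases hI01 t i ω with h | h <;> rw [h] <;> norm_num
  -- measurability of Z
  have hZmeas : ∀ t, ∀ i : Fin N, StronglyMeasurable[ℱ t] (Z t i) := by
    intro t
    induction t with
    | zero =>
      intro i
      have : Z 0 i = fun _ => (a : ℝ) / ((a : ℝ) + b) := funext fun ω => hZ0 i ω
      rw [this]; exact stronglyMeasurable_const
    | succ t ih =>
      intro i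
      have : Z (t+1) i = fun ω => (((a:ℝ) + b + (t:ℝ) + 1)⁻¹) *
          ((((a:ℝ) + b + t) * Z t i ω + I (t + 1) i ω)) := by
        funext ω; rw [hZrec, div_eq_inv_mul]
      rw [this]
      exact stronglyMeasurable_const.mul
        ((stronglyMeasurable_const.mul ((ih i).mono (hℱmono (Nat.le_succ t)))).add (hImeas t i))
  have hZmeas0 : ∀ t i, StronglyMeasurable (Z t i) := fun t i => (hZmeas t i).mono (hℱle t)
  have hImeas0 : ∀ t i, StronglyMeasurable (I (t+1) i) := fun t i => (hImeas t i).mono (hℱle (t+1))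
  -- integrability helper
  have hint : ∀ (f : Ω → ℝ) (C : ℝ), StronglyMeasurable f → (∀ ω, |f ω| ≤ C) → Integrable f P :=
    fun f C hf hC => ⟨hf.aestronglyMeasurable,
      HasFiniteIntegral.of_bounded (C := C) (ae_of_all _ fun ω => by
        simpa [Real.norm_eq_abs] using hC ω)⟩
  -- abbreviation for conditional success probability
  set q : ℕ → Fin N → Ω → ℝ := fun t i ω => α * ((∑ l, Z t l ω) / N) + (1 - α) * Z t i ω
    with hqdef
  -- the explicit value of the conditional expectation
  set G : ℕ → Fin N → Ω → ℝ := fun t i ω =>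
    (q t i ω - Z t i ω) * (q t j ω - Z t j ω) +
      (if i = j then q t j ω * (1 - q t j ω) else 0) with hGdef
  set g : ℕ → Ω → ℝ := fun t ω =>
    ((t:ℝ)^2 / ((a:ℝ) + b + t + 1)^2) * ((1 / (N:ℝ)) * ∑ i, G t i ω) with hgdef
  -- difference formula
  have hdiff : ∀ t (i : Fin N) ω, Z (t+1) i ω - Z t i ω =
      (I (t+1) i ω - Z t i ω) / ((a:ℝ) + b + t + 1) := by
    intro t i ω
    rw [hZrec]
    field_simp
    ring
  -- the main conditional expectation computation
  have hAE : ∀ k : ℕ, (P[fun ω' => (k : ℝ) ^ 2 * (Z (k + 1) j ω' - Z k j ω') *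
      ((∑ i, Z (k + 1) i ω') / N - (∑ i, Z k i ω') / N)|ℱ k]) =ᵐ[P] g k := by
    intro k
    have hle := hℱle k
    haveI : SigmaFinite (P.trim hle) := by infer_instance
    -- the functions involved
    set f : Fin N → Ω → ℝ := fun i ω =>
      (I (k+1) j ω - Z k j ω) * (I (k+1) i ω - Z k i ω) with hfdef
    -- rewrite the integrand
    have hfun : (fun ω' => (k : ℝ) ^ 2 * (Z (k + 1) j ω' - Z k j ω') *
        ((∑ i, Z (k + 1) i ω') / N - (∑ i, Z k i ω') / N))
        = fun ω => ((k:ℝ)^2 / ((a:ℝ) + b + k + 1)^2) * ((1 / (N:ℝ)) * ∑ i, f i ω) := by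
      funext ω
      have h1 : (∑ i, Z (k + 1) i ω) / (N:ℝ) - (∑ i, Z k i ω) / N
          = (∑ i, (I (k+1) i ω - Z k i ω)) / (((a:ℝ) + b + k + 1) * N) := by
        rw [div_sub_div_same, ← Finset.sum_sub_distrib]
        rw [Finset.sum_congr rfl (fun i _ => hdiff k i ω), ← Finset.sum_div]
        rw [div_div]
      rw [h1, hdiff, ← Finset.mul_sum]
      field_simp
    rw [hfun]
    -- integrability facts
    have habs1 : ∀ x y : ℝ, 0 ≤ x → x ≤ 1 → 0 ≤ y → y ≤ 1 → |x - y| ≤ 1 := by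
      intro x y h1 h2 h3 h4; rw [abs_le]; constructor <;> linarith
    have hfint : ∀ i : Fin N, Integrable (f i) P := by
      intro i
      refine hint _ 1 ?_ ?_
      · exact ((hImeas0 k j).sub (hZmeas0 k j)).mul ((hImeas0 k i).sub (hZmeas0 k i))
      · intro ω
        show |(I (k+1) j ω - Z k j ω) * (I (k+1) i ω - Z k i ω)| ≤ 1
        rw [abs_mul]
        calc |I (k+1) j ω - Z k j ω| * |I (k+1) i ω - Z k i ω| ≤ 1 * 1 := by
              apply mul_le_mul
              · exact habs1 _ _ (hI01' k j ω).1 (hI01' k j ω).2 (hZ01 k j ω).1 (hZ01 k j ω).2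
              · exact habs1 _ _ (hI01' k i ω).1 (hI01' k i ω).2 (hZ01 k i ω).1 (hZ01 k i ω).2
              · exact abs_nonneg _
              · norm_num
          _ = 1 := by norm_num
    -- per-urn conditional expectation
    have hper : ∀ i : Fin N, P[f i|ℱ k] =ᵐ[P] G k i := by
      intro i
      have hIZint : ∀ (u v : Fin N), Integrable (fun ω => Z k u ω * I (k+1) v ω) P := by
        intro u v
        refine hint _ 1 ?_ ?_
        · exact (hZmeas0 k u).mul (hImeas0 k v)
        · intro ω
          show |Z k u ω * I (k+1) v ω| ≤ 1
          rw [abs_of_nonneg (mul_nonneg (hZ01 k u ω).1 (hI01' k v ω).1)]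
          nlinarith [(hZ01 k u ω).1, (hZ01 k u ω).2, (hI01' k v ω).1, (hI01' k v ω).2]
      have hZZint : Integrable (fun ω => Z k i ω * Z k j ω) P := by
        refine hint _ 1 ?_ ?_
        · exact (hZmeas0 k i).mul (hZmeas0 k j)
        · intro ω
          show |Z k i ω * Z k j ω| ≤ 1
          rw [abs_of_nonneg (mul_nonneg (hZ01 k i ω).1 (hZ01 k j ω).1)]
          nlinarith [(hZ01 k i ω).1, (hZ01 k i ω).2, (hZ01 k j ω).1, (hZ01 k j ω).2]
      have hIint : ∀ (v : Fin N), Integrable (I (k+1) v) P := by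
        intro v
        refine hint _ 1 ?_ ?_
        · exact hImeas0 k v
        · intro ω
          rw [abs_le]; exact ⟨by linarith [(hI01' k v ω).1], (hI01' k v ω).2⟩
      -- pull-out results
      have hpull : ∀ (u v : Fin N), P[fun ω => Z k u ω * I (k+1) v ω|ℱ k]
          =ᵐ[P] fun ω => Z k u ω * q k v ω := by
        intro u v
        have h := condExp_mul_of_stronglyMeasurable_left (μ := P) (m := ℱ k)
          (hZmeas k u) (hIZint u v) (hIint v)
        refine h.trans ?_
        filter_upwards [hcond k v] with ω hω
        simp only [Pi.mul_apply]
        rw [hω]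
      have hZZ : P[fun ω => Z k i ω * Z k j ω|ℱ k] =ᵐ[P] fun ω => Z k i ω * Z k j ω := by
        have h := condExp_of_stronglyMeasurable (μ := P) hle
          (f := fun ω => Z k i ω * Z k j ω) ((hZmeas k i).mul (hZmeas k j)) hZZint
        rw [h]
      by_cases hij : i = j
      · -- diagonal case: I² = I
        subst hij
        have hfi : f i = (I (k+1) i - fun ω => 2 * Z k i ω * I (k+1) i ω)
            + fun ω => Z k i ω * Z k i ω := by
          funext ω
          simp only [Pi.add_apply, Pi.sub_apply, hfdef]
          rcases hI01 k i ω with h | h <;> rw [h] <;> ring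
        have h2int : Integrable (fun ω => 2 * Z k i ω * I (k+1) i ω) P := by
          refine hint _ 2 ?_ ?_
          · exact (stronglyMeasurable_const.mul (hZmeas0 k i)).mul (hImeas0 k i)
          · intro ω
            rw [abs_of_nonneg (mul_nonneg (mul_nonneg (by norm_num) (hZ01 k i ω).1)
              (hI01' k i ω).1)]
            nlinarith [(hZ01 k i ω).1, (hZ01 k i ω).2, (hI01' k i ω).1, (hI01' k i ω).2]
        have hZZint' : Integrable (fun ω => Z k i ω * Z k i ω) P := by
          refine hint _ 1 ?_ ?_
          · exact (hZmeas0 k i).mul (hZmeas0 k i)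
          · intro ω
            rw [abs_of_nonneg (mul_nonneg (hZ01 k i ω).1 (hZ01 k i ω).1)]
            nlinarith [(hZ01 k i ω).1, (hZ01 k i ω).2]
        rw [hfi]
        have hsub : Integrable (I (k+1) i - fun ω => 2 * Z k i ω * I (k+1) i ω) P :=
          (hIint i).sub h2int
        have hstep1 := condExp_add (m := ℱ k) hsub hZZint'
        have hstep2 := condExp_sub (m := ℱ k) (hIint i) h2int
        have hZZ' : P[fun ω => Z k i ω * Z k i ω|ℱ k] =ᵐ[P] fun ω => Z k i ω * Z k i ω := by
          have h := condExp_of_stronglyMeasurable (μ := P) hle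
            (f := fun ω => Z k i ω * Z k i ω) ((hZmeas k i).mul (hZmeas k i)) hZZint'
          rw [h]
        have hpull2 : P[fun ω => 2 * Z k i ω * I (k+1) i ω|ℱ k]
            =ᵐ[P] fun ω => 2 * Z k i ω * q k i ω := by
          have h := condExp_mul_of_stronglyMeasurable_left (μ := P) (m := ℱ k)
            (f := fun ω => 2 * Z k i ω) (g := I (k+1) i)
            (stronglyMeasurable_const.mul (hZmeas k i)) h2int (hIint i)
          refine h.trans ?_
          filter_upwards [hcond k i] with ω hω
          simp only [Pi.mul_apply]
          rw [hω]
        refine hstep1.trans ?_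
        filter_upwards [hstep2, hpull2, hcond k i, hZZ'] with ω h2 hp2 hc hzz
        simp only [Pi.add_apply, Pi.sub_apply] at h2 ⊢
        rw [h2, hp2, hc, hzz]
        simp only [hGdef, hqdef, eq_self_iff_true, if_true]
        ring
      · -- off-diagonal case: conditional independence
        have hIIint : Integrable (fun ω => I (k+1) i ω * I (k+1) j ω) P := by
          refine hint _ 1 ?_ ?_
          · exact (hImeas0 k i).mul (hImeas0 k j)
          · intro ω
            rw [abs_of_nonneg (mul_nonneg (hI01' k i ω).1 (hI01' k j ω).1)]
            nlinarith [(hI01' k i ω).1, (hI01' k i ω).2, (hI01' k j ω).1, (hI01' k j ω).2]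
        have hfi : f i = (((fun ω => I (k+1) i ω * I (k+1) j ω)
            - fun ω => Z k i ω * I (k+1) j ω) - fun ω => Z k j ω * I (k+1) i ω)
            + fun ω => Z k i ω * Z k j ω := by
          funext ω
          simp only [Pi.add_apply, Pi.sub_apply, hfdef]
          ring
        rw [hfi]
        have hstep1 := condExp_add (m := ℱ k)
          ((hIIint.sub (hIZint i j)).sub (hIZint j i)) hZZint
        have hstep2 := condExp_sub (m := ℱ k) (hIIint.sub (hIZint i j)) (hIZint j i)
        have hstep3 := condExp_sub (m := ℱ k) hIIint (hIZint i j)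
        refine hstep1.trans ?_
        filter_upwards [hstep2, hstep3, hcondindep k i j hij, hpull i j, hpull j i, hZZ]
          with ω h2 h3 hci hp1 hp2 hzz
        simp only [Pi.add_apply, Pi.sub_apply] at h2 h3 ⊢
        rw [h2, h3, hci, hp1, hp2, hzz]
        simp only [hGdef, if_neg hij, hqdef]
        ring
    -- assemble
    have hsmul : (fun ω => ((k:ℝ)^2 / ((a:ℝ) + b + k + 1)^2) * ((1 / (N:ℝ)) * ∑ i, f i ω))
        = (((k:ℝ)^2 / ((a:ℝ) + b + k + 1)^2) * (1 / (N:ℝ))) • (∑ i, f i) := by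
      funext ω
      simp only [Pi.smul_apply, Finset.sum_apply, smul_eq_mul]
      ring
    rw [hsmul]
    have hs1 := condExp_smul (m := ℱ k) (μ := P)
      (((k:ℝ)^2 / ((a:ℝ) + b + k + 1)^2) * (1 / (N:ℝ))) (∑ i, f i)
    have hs2 := condExp_finsetSum (m := ℱ k) (μ := P) (s := Finset.univ) (f := f)
      (fun i _ => hfint i)
    refine hs1.trans ?_
    have : ∀ᵐ ω ∂P, ∀ i : Fin N, (P[f i|ℱ k]) ω = G k i ω :=
      (ae_all_iff).mpr fun i => hper i
    filter_upwards [hs2, this] with ω hsum hper'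
    simp only [Pi.smul_apply, smul_eq_mul, hgdef]
    rw [hsum]
    simp only [Finset.sum_apply]
    rw [Finset.sum_congr rfl (fun i _ => hper' i)]
    ring
  -- the limit of the explicit expression
  have hB : ∀ᵐ ω ∂P, Tendsto (fun t => g t ω) atTop
      (nhds ((1 / N) * (Zlim ω - Zlim ω ^ 2))) := by
    have hall : ∀ᵐ ω ∂P, ∀ i : Fin N, Tendsto (fun t => Z t i ω) atTop (nhds (Zlim ω)) :=
      (ae_all_iff).mpr hZlim
    filter_upwards [hall] with ω hω
    set L := Zlim ω with hL
    -- average converges to L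
    have hsum : Tendsto (fun t => (∑ l, Z t l ω) / (N:ℝ)) atTop (nhds L) := by
      have h1 : Tendsto (fun t => ∑ l, Z t l ω) atTop (nhds (∑ _l : Fin N, L)) :=
        tendsto_finset_sum _ (fun l _ => hω l)
      have h2 := h1.div_const (N:ℝ)
      have h3 : (∑ _l : Fin N, L) / (N:ℝ) = L := by
        rw [Finset.sum_const, Finset.card_univ, Fintype.card_fin, nsmul_eq_mul]
        field_simp
      rwa [h3] at h2
    -- q converges to L
    have hq : ∀ i : Fin N, Tendsto (fun t => q t i ω) atTop (nhds L) := by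
      intro i
      have h := (hsum.const_mul α).add ((hω i).const_mul (1 - α))
      have he : α * L + (1 - α) * L = L := by ring
      rwa [he] at h
    -- each G converges
    have hG : ∀ i : Fin N, Tendsto (fun t => G t i ω) atTop
        (nhds (if i = j then L * (1 - L) else 0)) := by
      intro i
      have h1 : Tendsto (fun t => (q t i ω - Z t i ω) * (q t j ω - Z t j ω)) atTop
          (nhds ((L - L) * (L - L))) := ((hq i).sub (hω i)).mul ((hq j).sub (hω j))
      by_cases hij : i = j
      · rw [if_pos hij]
        have h2 : Tendsto (fun t => q t j ω * (1 - q t j ω)) atTop (nhds (L * (1 - L))) :=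
          (hq j).mul (tendsto_const_nhds.sub (hq j))
        have h3 := h1.add h2
        have he : (L - L) * (L - L) + L * (1 - L) = L * (1 - L) := by ring
        rw [he] at h3
        exact h3.congr (fun t => by simp only [hGdef, if_pos hij])
      · rw [if_neg hij]
        have h3 := h1.add (tendsto_const_nhds (x := (0:ℝ)))
        have he : (L - L) * (L - L) + 0 = 0 := by ring
        rw [he] at h3
        exact h3.congr (fun t => by simp only [hGdef, if_neg hij, add_zero])
    -- sum of G converges
    have hGsum : Tendsto (fun t => ∑ i, G t i ω) atTop (nhds (L - L^2)) := by
      have h1 : Tendsto (fun t => ∑ i, G t i ω) atTop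
          (nhds (∑ i : Fin N, if i = j then L * (1 - L) else 0)) :=
        tendsto_finset_sum _ (fun i _ => hG i)
      have h2 : (∑ i : Fin N, if i = j then L * (1 - L) else 0) = L - L^2 := by
        rw [Finset.sum_ite_eq' Finset.univ j (fun _ => L * (1 - L))]
        simp only [Finset.mem_univ, if_pos]
        ring
      rwa [h2] at h1
    -- prefactor converges to 1
    have hfac : Tendsto (fun t : ℕ => (t:ℝ)^2 / ((a:ℝ) + b + t + 1)^2) atTop (nhds 1) := by
      have h1 := tendsto_natCast_div_add_atTop (𝕜 := ℝ) ((a:ℝ) + b + 1)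
      have h2 := h1.pow 2
      have he : (fun t : ℕ => ((t:ℝ) / ((t:ℝ) + ((a:ℝ) + b + 1)))^2)
          = fun t : ℕ => (t:ℝ)^2 / ((a:ℝ) + b + t + 1)^2 := by
        funext t
        rw [div_pow]
        ring_nf
      rw [he] at h2
      simpa using h2
    -- combine
    have h := hfac.mul (hGsum.const_mul (1 / (N:ℝ)))
    have he : (1:ℝ) * (1 / (N:ℝ) * (L - L^2)) = (1 / N) * (Zlim ω - Zlim ω ^ 2) := by
      rw [hL]; ring
    rw [he] at h
    exact h.congr (fun t => by simp only [hgdef])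
  -- conclude
  have hAEall : ∀ᵐ ω ∂P, ∀ k : ℕ, (P[fun ω' => (k : ℝ) ^ 2 * (Z (k + 1) j ω' - Z k j ω') *
      ((∑ i, Z (k + 1) i ω') / N - (∑ i, Z k i ω') / N)|ℱ k]) ω = g k ω :=
    (ae_all_iff).mpr hAE
  filter_upwards [hB, hAEall] with ω hg' hae
  exact hg'.congr (fun k => (hae k).symm)
end
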